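/- arXiv:0911.3769 — 7 statements merged into one kernel-verified Lean document; each statement's English description precedes it below -/
import Mathlib

section
/- Let n ≥ 1 and for each c > 0 let S_{1c},…,S_{nc} be real random variables. Assume there exist a constant K > 0 and random variables Y_{kj} (1 ≤ k, j ≤ n) with Y_{kk} = 0 almost surely and P{Y_{kj} = 0} = 0 for all k ≠ j, such that: (A.1) for every k and every y ∈ ℝ, P{S_{kc} ≥ c + y} ∼ K c^{-1/2} e^{-c-y} as c → ∞; and (A.2) for every k and every y ∈ ℝ, the conditional law of (S_{kc} − S_{1c}, …, S_{kc} − S_{nc}) given {S_{kc} ≥ c + y} converges weakly to the law of (Y_{k1}, …, Y_{kn}). Then n^{-1} Σ_{k=1}^n E[(Σ_{j=1}^n e^{-Y_{kj}}) · 1{Y_{kj} ≥ 0 for all j}] = 1. -/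
open MeasureTheory ProbabilityTheory Filter Real Set
open scoped ENNReal Topology
set_option linter.unusedSectionVars false
set_option maxHeartbeats 1000000
namespace A3aux

variable {Ω : Type*} [MeasurableSpace Ω]

def Aset {n : ℕ} (S : ℝ → Fin n → Ω → ℝ) (k : Fin n) (y c : ℝ) : Set Ω :=
  {ω | c + y ≤ S c k ω}
def Tmap {n : ℕ} (S : ℝ → Fin n → Ω → ℝ) (k : Fin n) (c : ℝ) : Ω → Fin n → ℝ :=
  fun ω j => S c k ω - S c j ω
def Cset (n : ℕ) (k : Fin n) : Set (Fin n → ℝ) :=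
  {v | (∀ i, i ≠ k → 0 ≤ v i) ∧ ∀ i, k < i → 0 < v i}
lemma measurable_Aset {n : ℕ} (S : ℝ → Fin n → Ω → ℝ) (hS : ∀ c k, Measurable (S c k))
    (k : Fin n) (y c : ℝ) : MeasurableSet (Aset S k y c) :=
  measurableSet_le measurable_const (hS c k)
lemma measurable_Tmap {n : ℕ} (S : ℝ → Fin n → Ω → ℝ) (hS : ∀ c k, Measurable (S c k))
    (k : Fin n) (c : ℝ) : Measurable (Tmap S k c) :=
  measurable_pi_lambda _ fun j => (hS c k).sub (hS c j)
lemma measurable_Cset {n : ℕ} (k : Fin n) : MeasurableSet (Cset n k) := by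
  have h1 : MeasurableSet {v : Fin n → ℝ | ∀ i, i ≠ k → 0 ≤ v i} := by
    rw [Set.setOf_forall]
    exact MeasurableSet.iInter fun i => by
      by_cases h : i = k
      · simp [h]
      · simp only [h, ne_eq, not_false_eq_true, forall_true_left]
        exact measurableSet_le measurable_const (measurable_pi_apply i)
  have h2 : MeasurableSet {v : Fin n → ℝ | ∀ i, k < i → 0 < v i} := by
    rw [Set.setOf_forall]
    exact MeasurableSet.iInter fun i => by
      by_cases h : k < i
      · simp only [h, forall_true_left]
        exact measurableSet_lt measurable_const (measurable_pi_apply i)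
      · simp [h]
  exact h1.inter h2

/-- tie-broken argmax is unique -/
lemma argmax_exists_unique {n : ℕ} (hn : 1 ≤ n) (g : Fin n → ℝ) :
    ∃! k : Fin n, (∀ i, i ≠ k → g i ≤ g k) ∧ ∀ i, k < i → g i < g k := by
  haveI : Nonempty (Fin n) := ⟨⟨0, hn⟩⟩
  classical
  set F : Finset (Fin n) := Finset.univ.filter (fun k => ∀ i, g i ≤ g k) with hF
  have hFne : F.Nonempty := by
    obtain ⟨b, _, hb⟩ := Finset.exists_max_image (Finset.univ : Finset (Fin n)) g
      Finset.univ_nonempty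
    exact ⟨b, by simp [hF]; exact fun i => hb i (Finset.mem_univ i)⟩
  set k₀ := F.max' hFne with hk₀
  have hk₀F : k₀ ∈ F := F.max'_mem hFne
  have hk₀max : ∀ i, g i ≤ g k₀ := by
    simpa [hF] using hk₀F
  have hstrict : ∀ i, k₀ < i → g i < g k₀ := by
    intro i hi
    have hiF : i ∉ F := fun hiF => absurd (F.le_max' i hiF) (not_le.2 hi)
    rcases lt_or_ge (g i) (g k₀) with h | h
    · exact h
    · exfalso
      refine hiF ?_
      simp only [hF, Finset.mem_filter, Finset.mem_univ, true_and]
      intro l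
      exact (hk₀max l).trans h
  refine ⟨k₀, ⟨fun i _ => hk₀max i, hstrict⟩, ?_⟩
  rintro k ⟨h1, h2⟩
  rcases lt_trichotomy k k₀ with h | h | h
  · exfalso
    exact absurd (h2 k₀ h) (not_lt.2 (hk₀max k))
  · exact h
  · exfalso
    exact absurd (hstrict k h) (not_lt.2 (h1 k₀ (ne_of_gt h).symm))

section P
variable (P : Measure Ω) [IsProbabilityMeasure P] {n : ℕ} (S : ℝ → Fin n → Ω → ℝ)

lemma mem_TC_iff (k : Fin n) (c : ℝ) (ω : Ω) :
    Tmap S k c ω ∈ Cset n k ↔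
      (∀ i, i ≠ k → S c i ω ≤ S c k ω) ∧ ∀ i, k < i → S c i ω < S c k ω := by
  unfold Tmap Cset
  simp only [Set.mem_setOf_eq, sub_nonneg, sub_pos]

lemma cover_split (hn : 1 ≤ n) (hSmeas : ∀ c k, Measurable (S c k)) (j : Fin n) (c : ℝ) :
    P (Aset S j 0 c) = ∑ k : Fin n, P (Aset S j 0 c ∩ (Tmap S k c) ⁻¹' (Cset n k)) := by
  classical
  have hdisj : Pairwise (Function.onFun Disjoint fun k : Fin n =>
      Aset S j 0 c ∩ (Tmap S k c) ⁻¹' (Cset n k)) := by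
    intro k k' hkk'
    simp only [Function.onFun]
    rw [Set.disjoint_left]
    rintro ω ⟨_, hk⟩ ⟨_, hk'⟩
    rw [Set.mem_preimage, mem_TC_iff] at hk hk'
    obtain ⟨k₁, _, huniq⟩ := argmax_exists_unique hn (fun i => S c i ω)
    exact hkk' ((huniq k hk).trans (huniq k' hk').symm)
  have hcover : Aset S j 0 c = ⋃ k : Fin n, Aset S j 0 c ∩ (Tmap S k c) ⁻¹' (Cset n k) := by
    ext ω
    simp only [Set.mem_iUnion, Set.mem_inter_iff, Set.mem_preimage]
    constructor
    · intro hω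
      obtain ⟨k₁, hk₁, _⟩ := argmax_exists_unique hn (fun i => S c i ω)
      exact ⟨k₁, hω, (mem_TC_iff S k₁ c ω).2 hk₁⟩
    · rintro ⟨k, hω, _⟩
      exact hω
  conv_lhs => rw [hcover]
  rw [measure_iUnion hdisj (fun k =>
    (measurable_Aset S hSmeas j 0 c).inter ((measurable_Tmap S hSmeas k c) (measurable_Cset k))),
    tsum_fintype]
end P
section P
variable (P : Measure Ω) [IsProbabilityMeasure P] {n : ℕ} (S : ℝ → Fin n → Ω → ℝ)
  (K : ℝ)

/-- denominator in (A.1) -/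
noncomputable def dfun (K y c : ℝ) : ℝ := K * c ^ (-(1 : ℝ) / 2) * Real.exp (-c - y)

lemma dfun_pos {K : ℝ} (hK : 0 < K) {c : ℝ} (hc : 0 < c) (y : ℝ) : 0 < dfun K y c :=
  mul_pos (mul_pos hK (Real.rpow_pos_of_pos hc _)) (Real.exp_pos _)

lemma eventually_pos (k : Fin n) (y : ℝ)
    (h1 : Tendsto (fun c : ℝ => (P (Aset S k y c)).toReal / dfun K y c) atTop (𝓝 1)) :
    ∀ᶠ c in atTop, P (Aset S k y c) ≠ 0 := by
  have hgt : ∀ᶠ c in atTop, (1:ℝ)/2 < (P (Aset S k y c)).toReal / dfun K y c :=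
    h1.eventually (eventually_gt_nhds (by norm_num))
  filter_upwards [hgt] with c hc
  intro h0
  rw [h0] at hc
  simp at hc
  exact absurd hc (by norm_num)

lemma tendsto_ratio (hK : 0 < K) (k : Fin n) (y : ℝ)
    (hy : Tendsto (fun c : ℝ => (P (Aset S k y c)).toReal / dfun K y c) atTop (𝓝 1))
    (h0 : Tendsto (fun c : ℝ => (P (Aset S k 0 c)).toReal / dfun K 0 c) atTop (𝓝 1)) :
    Tendsto (fun c : ℝ => (P (Aset S k y c)).toReal / (P (Aset S k 0 c)).toReal) atTop
      (𝓝 (Real.exp (-y))) := by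
  have hdiv : Tendsto (fun c : ℝ =>
      ((P (Aset S k y c)).toReal / dfun K y c) / ((P (Aset S k 0 c)).toReal / dfun K 0 c)
        * Real.exp (-y)) atTop (𝓝 (1 / 1 * Real.exp (-y))) :=
    ((hy.div h0 one_ne_zero).mul_const _)
  rw [div_one, one_mul] at hdiv
  refine hdiv.congr' ?_
  filter_upwards [eventually_pos P S K k 0 h0, eventually_gt_atTop (0:ℝ)] with c hc0 hcpos
  have hd0 : dfun K 0 c ≠ 0 := (dfun_pos hK hcpos 0).ne'
  have hdy : dfun K y c ≠ 0 := (dfun_pos hK hcpos y).ne'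
  have hP0 : (P (Aset S k 0 c)).toReal ≠ 0 := by
    simp [ENNReal.toReal_eq_zero_iff, hc0, measure_ne_top]
  have hde : dfun K 0 c * Real.exp (-y) = dfun K y c := by
    unfold dfun
    rw [mul_assoc, mul_assoc, ← Real.exp_add]
    ring_nf
  field_simp
  rw [← hde]
  ring
end P
section P
variable (P : Measure Ω) [IsProbabilityMeasure P] {n : ℕ} (S : ℝ → Fin n → Ω → ℝ)

/-- ratio of intersection: `P(A ∩ X)/P(A) = (P[|A]) X`. -/
lemma cond_ratio {A X : Set Ω} (hA : MeasurableSet A) :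
    (P (A ∩ X)).toReal / (P A).toReal = ((P[|A]) X).toReal := by
  rw [cond_apply hA]
  rw [ENNReal.toReal_mul, ENNReal.toReal_inv]
  rw [div_eq_inv_mul]

/-- the law of the row `Y k`. -/
noncomputable def nuY (P : Measure Ω) {n : ℕ} (Y : Fin n → Fin n → Ω → ℝ) (k : Fin n) :
    Measure (Fin n → ℝ) := P.map (fun ω j => Y k j ω)

lemma measurable_Ymap {n : ℕ} (Y : Fin n → Fin n → Ω → ℝ) (hY : ∀ k j, Measurable (Y k j))
    (k : Fin n) : Measurable (fun ω j => Y k j ω) :=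
  measurable_pi_lambda _ fun j => hY k j

lemma nuY_isProb {n : ℕ} (Y : Fin n → Fin n → Ω → ℝ) (hY : ∀ k j, Measurable (Y k j))
    (k : Fin n) : IsProbabilityMeasure (nuY P Y k) :=
  Measure.isProbabilityMeasure_map (measurable_Ymap Y hY k).aemeasurable

/-- Portmanteau for our conditional laws. -/
lemma portmanteau_aux (hSmeas : ∀ c k, Measurable (S c k))
    (Y : Fin n → Fin n → Ω → ℝ) (hYmeas : ∀ k j, Measurable (Y k j))
    (k : Fin n) (y : ℝ)
    (hA2 : ∀ (f : BoundedContinuousFunction (Fin n → ℝ) ℝ),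
      Tendsto (fun c : ℝ =>
          ∫ v, f v ∂(Measure.map (Tmap S k c) (P[|Aset S k y c])))
        atTop (𝓝 (∫ ω, f (fun j => Y k j ω) ∂P)))
    (hpos : ∀ᶠ c in atTop, P (Aset S k y c) ≠ 0)
    {B : Set (Fin n → ℝ)} (hB : (nuY P Y k) (frontier B) = 0) :
    Tendsto (fun c : ℝ => ((Measure.map (Tmap S k c) (P[|Aset S k y c])) B).toReal) atTop
      (𝓝 ((nuY P Y k B).toReal)) := by
  haveI hnuP : IsProbabilityMeasure (nuY P Y k) := nuY_isProb P Y hYmeas k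
  set ν : ProbabilityMeasure (Fin n → ℝ) := ⟨nuY P Y k, hnuP⟩ with hν
  classical
  set κ : ℝ → ProbabilityMeasure (Fin n → ℝ) := fun c =>
    if h : IsProbabilityMeasure (Measure.map (Tmap S k c) (P[|Aset S k y c]))
    then ⟨_, h⟩ else ν with hκ
  have hev : ∀ᶠ c in atTop,
      (κ c : Measure (Fin n → ℝ)) = Measure.map (Tmap S k c) (P[|Aset S k y c]) := by
    filter_upwards [hpos] with c hc
    haveI : IsProbabilityMeasure (P[|Aset S k y c]) := cond_isProbabilityMeasure hc
    haveI hp : IsProbabilityMeasure (Measure.map (Tmap S k c) (P[|Aset S k y c])) :=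
      Measure.isProbabilityMeasure_map (measurable_Tmap S hSmeas k c).aemeasurable
    have hκc : κ c = (⟨Measure.map (Tmap S k c) (P[|Aset S k y c]), hp⟩ :
        ProbabilityMeasure (Fin n → ℝ)) := dif_pos hp
    rw [hκc]
    rfl
  have hlim : Tendsto κ atTop (𝓝 ν) := by
    rw [MeasureTheory.ProbabilityMeasure.tendsto_iff_forall_integral_tendsto]
    intro f
    have hmap : ∫ v, f v ∂(ν : Measure (Fin n → ℝ)) = ∫ ω, f (fun j => Y k j ω) ∂P := by
      show ∫ v, f v ∂(nuY P Y k) = _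
      rw [nuY, integral_map (measurable_Ymap Y hYmeas k).aemeasurable
        f.continuous.aestronglyMeasurable]
    rw [hmap]
    refine (hA2 f).congr' ?_
    filter_upwards [hev] with c hc
    rw [hc]
  have key := MeasureTheory.ProbabilityMeasure.tendsto_measure_of_null_frontier_of_tendsto'
    hlim (E := B) (by exact hB)
  have key2 : Tendsto (fun c : ℝ => ((κ c : Measure (Fin n → ℝ)) B).toReal) atTop
      (𝓝 ((nuY P Y k B).toReal)) :=
    (ENNReal.tendsto_toReal (measure_ne_top _ B)).comp key
  refine key2.congr' ?_
  filter_upwards [hev] with c hc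
  rw [hc]
end P
lemma frontier_subset_sandwich {X : Type*} [TopologicalSpace X] {O B F : Set X}
    (hO : IsOpen O) (hF : IsClosed F) (h1 : O ⊆ B) (h2 : B ⊆ F) : frontier B ⊆ F \ O := by
  intro x hx
  rcases hx with ⟨hxc, hxi⟩
  exact ⟨closure_minimal h2 hF hxc, fun hxO => hxi (interior_maximal h1 hO hxO)⟩

section P
variable (P : Measure Ω) [IsProbabilityMeasure P] {n : ℕ}
  (Y : Fin n → Fin n → Ω → ℝ)

lemma nuY_coord_eq (hYmeas : ∀ k j, Measurable (Y k j)) (k i : Fin n) (t : ℝ) :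
    nuY P Y k {v | v i = t} = P {ω | Y k i ω = t} := by
  have hs : MeasurableSet ({v : Fin n → ℝ | v i = t}) := by
    have he : {v : Fin n → ℝ | v i = t} = (fun v : Fin n → ℝ => v i) ⁻¹' {t} := rfl
    rw [he]
    exact (measurable_pi_apply i) (measurableSet_singleton t)
  rw [nuY, Measure.map_apply (measurable_Ymap Y hYmeas k) hs]
  rfl

/-- the union of "some off-diagonal coordinate vanishes" is null. -/
lemma nuY_offdiag_null (hYmeas : ∀ k j, Measurable (Y k j)) (hYne : ∀ k j, k ≠ j → P {ω | Y k j ω = 0} = 0) (k : Fin n) :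
    nuY P Y k (⋃ i, ⋃ (_ : i ≠ k), {v : Fin n → ℝ | v i = 0}) = 0 := by
  refine measure_iUnion_null fun i => measure_iUnion_null fun hik => ?_
  rw [nuY_coord_eq P Y hYmeas k i 0]
  exact hYne k i (Ne.symm hik)

lemma frontier_Cset_null (hYmeas : ∀ k j, Measurable (Y k j)) (hYne : ∀ k j, k ≠ j → P {ω | Y k j ω = 0} = 0) (k : Fin n) :
    nuY P Y k (frontier (Cset n k)) = 0 := by
  set O : Set (Fin n → ℝ) := ⋂ i, {v | i ≠ k → 0 < v i} with hO
  set F : Set (Fin n → ℝ) := ⋂ i, {v | i ≠ k → 0 ≤ v i} with hF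
  have hOopen : IsOpen O := isOpen_iInter_of_finite fun i => by
    by_cases h : i = k
    · simp [h]
    · have : {v : Fin n → ℝ | i ≠ k → 0 < v i} = {v | 0 < v i} := by
        ext v; simp [h]
      rw [this]
      exact isOpen_lt continuous_const (continuous_apply i)
  have hFclosed : IsClosed F := isClosed_iInter fun i => by
    by_cases h : i = k
    · simp [h]
    · have : {v : Fin n → ℝ | i ≠ k → 0 ≤ v i} = {v | 0 ≤ v i} := by
        ext v; simp [h]
      rw [this]
      exact isClosed_le continuous_const (continuous_apply i)
  have h1 : O ⊆ Cset n k := by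
    intro v hv
    simp only [hO, Set.mem_iInter, Set.mem_setOf_eq] at hv
    exact ⟨fun i hi => (hv i hi).le, fun i hi => hv i (ne_of_gt hi)⟩
  have h2 : Cset n k ⊆ F := by
    intro v hv
    simp only [hF, Set.mem_iInter, Set.mem_setOf_eq]
    exact fun i hi => hv.1 i hi
  have hsub := frontier_subset_sandwich hOopen hFclosed h1 h2
  have hsub2 : F \ O ⊆ ⋃ i, ⋃ (_ : i ≠ k), {v : Fin n → ℝ | v i = 0} := by
    intro v ⟨hvF, hvO⟩
    simp only [hO, Set.mem_iInter, Set.mem_setOf_eq, not_forall] at hvO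
    obtain ⟨i, hik, h0lt⟩ := hvO
    have h0le : 0 ≤ v i := by
      simp only [hF, Set.mem_iInter, Set.mem_setOf_eq] at hvF
      exact hvF i hik
    refine Set.mem_iUnion.2 ⟨i, Set.mem_iUnion.2 ⟨hik, ?_⟩⟩
    exact le_antisymm (not_lt.1 h0lt) h0le
  exact measure_mono_null (hsub.trans hsub2) (nuY_offdiag_null P Y hYmeas hYne k)

lemma frontier_Bset_null (hYmeas : ∀ k j, Measurable (Y k j)) (hYne : ∀ k j, k ≠ j → P {ω | Y k j ω = 0} = 0)
    (k j : Fin n) {a b : ℝ}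
    (ha : nuY P Y k {v | v j = a} = 0) (hb : nuY P Y k {v | v j = b} = 0) :
    nuY P Y k (frontier (Cset n k ∩ {v | a ≤ v j ∧ v j < b})) = 0 := by
  set O : Set (Fin n → ℝ) := (⋂ i, {v | i ≠ k → 0 < v i}) ∩ {v | a < v j ∧ v j < b} with hO
  set F : Set (Fin n → ℝ) := (⋂ i, {v | i ≠ k → 0 ≤ v i}) ∩ {v | a ≤ v j ∧ v j ≤ b} with hF
  have hOopen : IsOpen O := by
    refine IsOpen.inter (isOpen_iInter_of_finite fun i => ?_) ?_
    · by_cases h : i = k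
      · simp [h]
      · have : {v : Fin n → ℝ | i ≠ k → 0 < v i} = {v | 0 < v i} := by ext v; simp [h]
        rw [this]; exact isOpen_lt continuous_const (continuous_apply i)
    · exact IsOpen.inter (isOpen_lt continuous_const (continuous_apply j))
        (isOpen_lt (continuous_apply j) continuous_const)
  have hFclosed : IsClosed F := by
    refine IsClosed.inter (isClosed_iInter fun i => ?_) ?_
    · by_cases h : i = k
      · simp [h]
      · have : {v : Fin n → ℝ | i ≠ k → 0 ≤ v i} = {v | 0 ≤ v i} := by ext v; simp [h]
        rw [this]; exact isClosed_le continuous_const (continuous_apply i)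
    · exact IsClosed.inter (isClosed_le continuous_const (continuous_apply j))
        (isClosed_le (continuous_apply j) continuous_const)
  have h1 : O ⊆ Cset n k ∩ {v | a ≤ v j ∧ v j < b} := by
    rintro v ⟨hv1, hv2, hv3⟩
    simp only [Set.mem_iInter, Set.mem_setOf_eq] at hv1
    exact ⟨⟨fun i hi => (hv1 i hi).le, fun i hi => hv1 i (ne_of_gt hi)⟩, hv2.le, hv3⟩
  have h2 : Cset n k ∩ {v | a ≤ v j ∧ v j < b} ⊆ F := by
    rintro v ⟨hv1, hv2, hv3⟩
    refine ⟨Set.mem_iInter.2 fun i => fun hi => hv1.1 i hi, hv2, hv3.le⟩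
  have hsub := frontier_subset_sandwich hOopen hFclosed h1 h2
  have hsub2 : F \ O ⊆ (⋃ i, ⋃ (_ : i ≠ k), {v : Fin n → ℝ | v i = 0})
      ∪ {v | v j = a} ∪ {v | v j = b} := by
    rintro v ⟨⟨hvF1, hvF2, hvF3⟩, hvO⟩
    simp only [hO, Set.mem_inter_iff, Set.mem_setOf_eq, not_and_or, Set.mem_iInter,
      not_forall] at hvO
    rcases hvO with (⟨i, hik, h0lt⟩ | h) ; rotate_left
    · rcases h with h | h
      · exact Or.inl (Or.inr (le_antisymm (not_lt.1 h) hvF2))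
      · exact Or.inr (le_antisymm hvF3 (not_lt.1 h))
    · have h0le : 0 ≤ v i := by
        simp only [Set.mem_iInter, Set.mem_setOf_eq] at hvF1
        exact hvF1 i hik
      refine Or.inl (Or.inl (Set.mem_iUnion.2 ⟨i, Set.mem_iUnion.2 ⟨hik, ?_⟩⟩))
      exact le_antisymm (not_lt.1 h0lt) h0le
  refine measure_mono_null (hsub.trans hsub2) ?_
  refine measure_union_null (measure_union_null ?_ ha) hb
  exact nuY_offdiag_null P Y hYmeas hYne k
end P

variable {Ω : Type*} [MeasurableSpace Ω]

lemma exists_interval_index (t : ℕ → ℝ) : ∀ (M : ℕ) (x : ℝ), t 0 ≤ x → x < t M →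
    ∃ m, m < M ∧ t m ≤ x ∧ x < t (m + 1) := by
  intro M
  induction M with
  | zero => intro x h0 hM; exact absurd (h0.trans_lt hM) (lt_irrefl _)
  | succ M ih =>
    intro x h0 hM
    by_cases h : x < t M
    · obtain ⟨m, hm, h1, h2⟩ := ih x h0 h
      exact ⟨m, hm.trans (Nat.lt_succ_self M), h1, h2⟩
    · exact ⟨M, Nat.lt_succ_self M, not_lt.1 h, hM⟩

lemma countable_atoms (P : Measure Ω) [IsProbabilityMeasure P] (Z : Ω → ℝ)
    (hZ : Measurable Z) : Set.Countable {a : ℝ | P {ω | Z ω = a} ≠ 0} := by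
  have h := MeasureTheory.Measure.countable_meas_pos_of_disjoint_iUnion₀
    (μ := P) (As := fun a : ℝ => {ω | Z ω = a})
    (fun a => (hZ (measurableSet_singleton a)).nullMeasurableSet)
    ?_
  · refine h.mono ?_
    intro a ha
    simp only [Set.mem_setOf_eq] at *
    exact pos_iff_ne_zero.2 ha
  · intro a b hab
    simp only [Function.onFun]
    refine Disjoint.aedisjoint ?_
    rw [Set.disjoint_left]
    intro ω h1 h2
    exact hab (by rw [← h1, ← h2])

lemma exists_good_delta (h : ℝ) (hh : 0 < h) (M : ℕ) (D : Set ℝ) (hD : D.Countable) :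
    ∃ δ : ℝ, 0 < δ ∧ δ < h ∧ ∀ m : ℕ, m ≤ M → δ + m * h ∉ D := by
  set Bad : Set ℝ := ⋃ m ∈ Finset.range (M + 1), (fun δ : ℝ => δ + m * h) ⁻¹' D with hBad
  have hBadc : Bad.Countable := by
    refine Set.Countable.biUnion (Set.countable_coe_iff.1 inferInstance) ?_
    intro m _
    exact hD.preimage (add_left_injective (m * h))
  have hvol : (volume (Set.Ioo (0:ℝ) h)) ≠ 0 := by
    rw [Real.volume_Ioo]
    simp [hh]
  have : ¬ (Set.Ioo (0:ℝ) h ⊆ Bad) := by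
    intro hsub
    exact hvol (measure_mono_null hsub (hBadc.measure_zero volume))
  obtain ⟨δ, hδI, hδB⟩ := Set.not_subset.1 this
  refine ⟨δ, hδI.1, hδI.2, fun m hm hmem => hδB ?_⟩
  rw [hBad]
  exact Set.mem_iUnion₂.2 ⟨m, by simp [Nat.lt_succ_iff, hm], hmem⟩



lemma ratio_split {a b d : ℝ} (hb : b ≠ 0) : a / d = (b / d) * (a / b) := by
  rcases eq_or_ne d 0 with h | h
  · simp [h]
  · field_simp

lemma exp_sub_one_le {h : ℝ} (h0 : 0 ≤ h) (h1 : h ≤ 1) :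
    Real.exp h - 1 ≤ h * Real.exp 1 := by
  have h2 : 1 - h ≤ Real.exp (-h) := by
    have := Real.add_one_le_exp (-h)
    linarith
  have h3 : Real.exp h * (1 - h) ≤ 1 := by
    have := mul_le_mul_of_nonneg_left h2 (Real.exp_pos h).le
    rwa [← Real.exp_add, add_neg_cancel, Real.exp_zero] at this
  have h4 : Real.exp h ≤ Real.exp 1 := Real.exp_le_exp.2 h1
  nlinarith [Real.exp_pos h]

lemma one_sub_exp_neg_le {h : ℝ} (h0 : 0 ≤ h) : 1 - Real.exp (-h) ≤ h := by
  have := Real.add_one_le_exp (-h)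
  linarith

section P
variable {Ω : Type*} [MeasurableSpace Ω]

lemma integrableOn_exp_coord {n : ℕ} (ν : Measure (Fin n → ℝ)) [IsProbabilityMeasure ν]
    (j : Fin n) {s : Set (Fin n → ℝ)} (hs : ∀ v ∈ s, 0 ≤ v j) (hsm : MeasurableSet s) :
    IntegrableOn (fun v => Real.exp (-(v j))) s ν := by
  refine Integrable.mono' (integrable_const 1) ?_ ?_
  · exact ((continuous_apply j).neg.rexp).aestronglyMeasurable
  · filter_upwards [ae_restrict_mem hsm] with v hv
    rw [Real.norm_eq_abs, abs_of_pos (Real.exp_pos _)]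
    exact Real.exp_le_one_iff.2 (neg_nonpos.2 (hs v hv))
end P

section Main
variable {Ω : Type*} [MeasurableSpace Ω]

lemma main_kj (P : Measure Ω) [IsProbabilityMeasure P] {n : ℕ} (S : ℝ → Fin n → Ω → ℝ)
    (hSmeas : ∀ c k, Measurable (S c k)) (K : ℝ) (hK : 0 < K)
    (Y : Fin n → Fin n → Ω → ℝ) (hYmeas : ∀ k j, Measurable (Y k j))
    (hYne : ∀ k j, k ≠ j → P {ω | Y k j ω = 0} = 0)
    (hA1 : ∀ (k : Fin n) (y : ℝ),
      Tendsto (fun c : ℝ => (P (Aset S k y c)).toReal / dfun K y c) atTop (𝓝 1))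
    (hA2 : ∀ (k : Fin n) (y : ℝ) (f : BoundedContinuousFunction (Fin n → ℝ) ℝ),
      Tendsto (fun c : ℝ => ∫ v, f v ∂(Measure.map (Tmap S k c) (P[|Aset S k y c])))
        atTop (𝓝 (∫ ω, f (fun j => Y k j ω) ∂P)))
    (k j : Fin n) (hjk : j ≠ k) :
    Tendsto (fun c : ℝ =>
        (P (Aset S j 0 c ∩ (Tmap S k c) ⁻¹' (Cset n k))).toReal / (P (Aset S k 0 c)).toReal)
      atTop (𝓝 (∫ v in Cset n k, Real.exp (-(v j)) ∂(nuY P Y k))) := by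
  classical
  haveI hνP : IsProbabilityMeasure (nuY P Y k) := nuY_isProb P Y hYmeas k
  have hCmeas : MeasurableSet (Cset n k) := measurable_Cset k
  have hCnonneg : ∀ v ∈ Cset n k, 0 ≤ v j := fun v hv => hv.1 j hjk
  have hIntC : IntegrableOn (fun v => Real.exp (-(v j))) (Cset n k) (nuY P Y k) :=
    integrableOn_exp_coord _ j hCnonneg hCmeas
  set ν := nuY P Y k with hνdef
  set E := ∫ v in Cset n k, Real.exp (-(v j)) ∂ν with hEdef
  have hE0 : 0 ≤ E := setIntegral_nonneg hCmeas (fun v _ => (Real.exp_pos _).le)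
  have hE1 : E ≤ 1 := by
    have h1 : E ≤ ∫ _ in Cset n k, (1:ℝ) ∂ν :=
      setIntegral_mono_on hIntC (integrableOn_const (measure_ne_top ν _))
        hCmeas (fun v hv => Real.exp_le_one_iff.2 (neg_nonpos.2 (hCnonneg v hv)))
    have h2 : ∫ _ in Cset n k, (1:ℝ) ∂ν = (ν (Cset n k)).toReal := by
      simp [setIntegral_const, measureReal_def]
    have h3 : (ν (Cset n k)).toReal ≤ 1 := by
      simpa using ENNReal.toReal_mono ENNReal.one_ne_top (prob_le_one (μ := ν) (s := Cset n k))
    linarith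
  rw [Metric.tendsto_atTop]
  intro ε hε
  set h : ℝ := min 1 (ε / (8 * Real.exp 1)) with hhdef
  have hh0 : 0 < h := lt_min one_pos (div_pos hε (by positivity))
  have hh1 : h ≤ 1 := min_le_left _ _
  have hhe : h * Real.exp 1 ≤ ε / 8 := by
    have hle : h ≤ ε / (8 * Real.exp 1) := min_le_right _ _
    calc h * Real.exp 1 ≤ (ε / (8 * Real.exp 1)) * Real.exp 1 :=
          mul_le_mul_of_nonneg_right hle (Real.exp_pos 1).le
      _ = ε / 8 := by
          field_simp
  have hh8 : h ≤ ε / 8 := by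
    nlinarith [Real.exp_one_gt_d9, hh0]
  obtain ⟨M₀, hM₀⟩ := exists_nat_gt (Real.log (8 / ε) / h)
  set M : ℕ := M₀ + 1 with hMdef
  have hMh : Real.log (8 / ε) < M₀ * h := by
    rw [div_lt_iff₀ hh0] at hM₀
    linarith
  have hDc : Set.Countable {a : ℝ | P {ω | Y k j ω = a} ≠ 0} :=
    countable_atoms P (Y k j) (hYmeas k j)
  obtain ⟨δ, hδ0, hδh, hδD⟩ := exists_good_delta h hh0 M _ hDc
  set t : ℕ → ℝ := fun m => if m = 0 then 0 else δ + (m - 1 : ℕ) * h with htdef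
  have ht0 : t 0 = 0 := by simp [htdef]
  have htsucc : ∀ m : ℕ, t (m + 1) = δ + m * h := by
    intro m; simp [htdef]
  have hstep : ∀ m : ℕ, t m < t (m + 1) := by
    intro m
    cases m with
    | zero => rw [ht0, htsucc]; push_cast; nlinarith
    | succ m =>
        rw [htsucc, htsucc]
        push_cast
        nlinarith [hh0]
  have hgap : ∀ m : ℕ, t (m + 1) ≤ t m + h := by
    intro m
    cases m with
    | zero => rw [ht0, htsucc]; push_cast; linarith
    | succ m =>
        rw [htsucc, htsucc]
        push_cast
        nlinarith [hh0]
  have htnonneg : ∀ m : ℕ, 0 ≤ t m := by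
    intro m
    cases m with
    | zero => rw [ht0]
    | succ m =>
        rw [htsucc]
        have := mul_nonneg (Nat.cast_nonneg (α := ℝ) m) hh0.le
        linarith
  have htatom : ∀ m : ℕ, 1 ≤ m → m ≤ M → P {ω | Y k j ω = t m} = 0 := by
    intro m h1m hmM
    obtain ⟨m', rfl⟩ := Nat.exists_eq_add_of_le h1m
    have hteq : t (1 + m') = δ + m' * h := by rw [add_comm 1 m', htsucc]
    rw [hteq]
    have hne := hδD m' (by omega)
    simp only [Set.mem_setOf_eq, not_not] at hne
    exact hne
  have htM : Real.exp (-(t M)) ≤ ε / 8 := by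
    have htMval : t M = δ + M₀ * h := htsucc M₀
    have h1 : Real.log (8 / ε) < t M := by rw [htMval]; nlinarith
    have h2 : Real.exp (-(t M)) < Real.exp (-(Real.log (8 / ε))) :=
      Real.exp_lt_exp.2 (by linarith)
    have h3 : Real.exp (-(Real.log (8 / ε))) = ε / 8 := by
      rw [Real.exp_neg, Real.exp_log (by positivity), inv_div]
    linarith
  have hcoord : ∀ a : ℝ, ν {v : Fin n → ℝ | v j = a} = P {ω | Y k j ω = a} := fun a =>
    nuY_coord_eq P Y hYmeas k j a
  have hνt : ∀ m : ℕ, m ≤ M → ν {v : Fin n → ℝ | v j = t m} = 0 := by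
    intro m hm
    cases m with
    | zero => rw [ht0, hcoord]; exact hYne k j (Ne.symm hjk)
    | succ m =>
        rw [hcoord]
        exact htatom _ (Nat.succ_le_succ (Nat.zero_le m)) hm
  set B : ℕ → Set (Fin n → ℝ) := fun m => Cset n k ∩ {v | t m ≤ v j ∧ v j < t (m + 1)}
    with hBdef
  have hBmeas : ∀ m, MeasurableSet (B m) := by
    intro m
    refine hCmeas.inter (MeasurableSet.inter ?_ ?_)
    · exact measurableSet_le measurable_const (measurable_pi_apply j)
    · exact measurableSet_lt (measurable_pi_apply j) measurable_const
  have hBsub : ∀ m, B m ⊆ Cset n k := fun m => Set.inter_subset_left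
  have hBfront : ∀ m : ℕ, m < M → ν (frontier (B m)) = 0 := by
    intro m hm
    exact frontier_Bset_null P Y hYmeas hYne k j (hνt m (le_of_lt hm)) (hνt (m + 1) hm)
  have hIntB : ∀ m, IntegrableOn (fun v => Real.exp (-(v j))) (B m) ν :=
    fun m => hIntC.mono_set (hBsub m)
  have hmonot : StrictMono t := strictMono_nat_of_lt_succ hstep
  have hBdisj : ∀ m m' : ℕ, m ≠ m' → Disjoint (B m) (B m') := by
    intro m m' hmm'
    rw [Set.disjoint_left]
    rintro v ⟨_, h1, h2⟩ ⟨_, h3, h4⟩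
    rcases hmm'.lt_or_gt with hlt | hlt
    · exact absurd (h2.trans_le ((hmonot.monotone (Nat.succ_le_of_lt hlt)).trans h3))
        (lt_irrefl _)
    · exact absurd (h4.trans_le ((hmonot.monotone (Nat.succ_le_of_lt hlt)).trans h1))
        (lt_irrefl _)
  have hR : ∀ m : ℕ, Tendsto
      (fun c => (P (Aset S k (t m) c)).toReal / (P (Aset S k 0 c)).toReal) atTop
      (𝓝 (Real.exp (-(t m)))) :=
    fun m => tendsto_ratio P S K hK k (t m) (hA1 k (t m)) (hA1 k 0)
  have hQ : ∀ (m : ℕ) (y : ℝ), m < M → Tendsto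
      (fun c => ((Measure.map (Tmap S k c) (P[|Aset S k y c])) (B m)).toReal) atTop
      (𝓝 ((ν (B m)).toReal)) :=
    fun m y hm => portmanteau_aux P S hSmeas Y hYmeas k y (hA2 k y)
      (eventually_pos P S K k y (hA1 k y)) (hBfront m hm)
  set Fup : ℝ → ℝ := fun c =>
    (∑ m ∈ Finset.range M, (P (Aset S k (t m) c)).toReal / (P (Aset S k 0 c)).toReal *
      ((Measure.map (Tmap S k c) (P[|Aset S k (t m) c])) (B m)).toReal) +
      (P (Aset S k (t M) c)).toReal / (P (Aset S k 0 c)).toReal with hFupdef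
  set Flo : ℝ → ℝ := fun c =>
    ∑ m ∈ Finset.range M, (P (Aset S k (t (m + 1)) c)).toReal / (P (Aset S k 0 c)).toReal *
      ((Measure.map (Tmap S k c) (P[|Aset S k (t (m + 1)) c])) (B m)).toReal with hFlodef
  set U : ℝ := (∑ m ∈ Finset.range M, Real.exp (-(t m)) * (ν (B m)).toReal) +
    Real.exp (-(t M)) with hUdef
  set L : ℝ := ∑ m ∈ Finset.range M, Real.exp (-(t (m + 1))) * (ν (B m)).toReal with hLdef
  have hFupLim : Tendsto Fup atTop (𝓝 U) := by
    refine Tendsto.add (tendsto_finset_sum _ fun m hm => ?_) (hR M)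
    exact (hR m).mul (hQ m (t m) (Finset.mem_range.1 hm))
  have hFloLim : Tendsto Flo atTop (𝓝 L) := by
    refine tendsto_finset_sum _ fun m hm => ?_
    exact (hR (m + 1)).mul (hQ m (t (m + 1)) (Finset.mem_range.1 hm))
  have hUnion_eq : ∑ m ∈ Finset.range M, ∫ v in B m, Real.exp (-(v j)) ∂ν =
      ∫ v in ⋃ m ∈ Finset.range M, B m, Real.exp (-(v j)) ∂ν := by
    rw [integral_biUnion_finset (Finset.range M) (fun m _ => hBmeas m)
      (fun m _ m' _ hmm' => hBdisj m m' hmm') (fun m _ => hIntB m)]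
  have hUsub : (⋃ m ∈ Finset.range M, B m) ⊆ Cset n k := by
    intro v hv
    obtain ⟨m, _, hvm⟩ := Set.mem_iUnion₂.1 hv
    exact hBsub m hvm
  have hUmeas : MeasurableSet (⋃ m ∈ Finset.range M, B m) :=
    MeasurableSet.biUnion (Finset.countable_toSet _) (fun m _ => hBmeas m)
  have hints_le_E : ∫ v in ⋃ m ∈ Finset.range M, B m, Real.exp (-(v j)) ∂ν ≤ E := by
    rw [hEdef]
    refine setIntegral_mono_set hIntC ?_ (HasSubset.Subset.eventuallyLE hUsub)
    filter_upwards with v using (Real.exp_pos _).le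
  have hE_tail : E - ε / 8 ≤ ∫ v in ⋃ m ∈ Finset.range M, B m, Real.exp (-(v j)) ∂ν := by
    have hsplit : (∫ v in Cset n k ∩ (⋃ m ∈ Finset.range M, B m), Real.exp (-(v j)) ∂ν) +
        (∫ v in Cset n k \ (⋃ m ∈ Finset.range M, B m), Real.exp (-(v j)) ∂ν) = E :=
      integral_inter_add_diff hUmeas hIntC
    rw [Set.inter_eq_self_of_subset_right hUsub] at hsplit
    have htail_sub : Cset n k \ (⋃ m ∈ Finset.range M, B m) ⊆
        {v : Fin n → ℝ | t M ≤ v j} ∩ Cset n k := by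
      rintro v ⟨hvC, hvU⟩
      refine ⟨?_, hvC⟩
      by_contra hcon
      rw [Set.mem_setOf_eq, not_le] at hcon
      obtain ⟨m, hm, h1, h2⟩ := exists_interval_index t M (v j)
        (by rw [ht0]; exact hCnonneg v hvC) hcon
      exact hvU (Set.mem_iUnion₂.2 ⟨m, Finset.mem_range.2 hm, ⟨hvC, h1, h2⟩⟩)
    have htail_le : ∫ v in Cset n k \ (⋃ m ∈ Finset.range M, B m), Real.exp (-(v j)) ∂ν ≤
        Real.exp (-(t M)) := by
      have hmsub : MeasurableSet (Cset n k \ (⋃ m ∈ Finset.range M, B m)) :=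
        hCmeas.diff hUmeas
      have hb : ∀ v ∈ Cset n k \ (⋃ m ∈ Finset.range M, B m),
          Real.exp (-(v j)) ≤ Real.exp (-(t M)) :=
        fun v hv => Real.exp_le_exp.2 (neg_le_neg (htail_sub hv).1)
      calc ∫ v in Cset n k \ (⋃ m ∈ Finset.range M, B m), Real.exp (-(v j)) ∂ν
          ≤ ∫ _ in Cset n k \ (⋃ m ∈ Finset.range M, B m), Real.exp (-(t M)) ∂ν :=
            setIntegral_mono_on (hIntC.mono_set Set.diff_subset)
              (integrableOn_const (measure_ne_top ν _)) hmsub hb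
        _ = (ν (Cset n k \ (⋃ m ∈ Finset.range M, B m))).toReal * Real.exp (-(t M)) := by
            rw [setIntegral_const, smul_eq_mul, measureReal_def]
        _ ≤ 1 * Real.exp (-(t M)) := by
            refine mul_le_mul_of_nonneg_right ?_ (Real.exp_pos _).le
            simpa using ENNReal.toReal_mono ENNReal.one_ne_top (prob_le_one (μ := ν))
        _ = Real.exp (-(t M)) := one_mul _
    linarith [htM]
  have hUbound : U ≤ E + ε / 4 := by
    have hterm : ∀ m ∈ Finset.range M, Real.exp (-(t m)) * (ν (B m)).toReal ≤
        Real.exp h * ∫ v in B m, Real.exp (-(v j)) ∂ν := by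
      intro m _
      have hb : ∀ v ∈ B m, Real.exp (-(t m)) ≤ Real.exp h * Real.exp (-(v j)) := by
        intro v hv
        rw [← Real.exp_add]
        refine Real.exp_le_exp.2 ?_
        have h1 := hv.2.2
        have h2 := hgap m
        linarith
      calc Real.exp (-(t m)) * (ν (B m)).toReal
          = ∫ _ in B m, Real.exp (-(t m)) ∂ν := by rw [setIntegral_const, smul_eq_mul, measureReal_def]; ring
        _ ≤ ∫ v in B m, Real.exp h * Real.exp (-(v j)) ∂ν :=
            setIntegral_mono_on (integrableOn_const (measure_ne_top ν _))
              ((hIntB m).const_mul _) (hBmeas m) hb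
        _ = Real.exp h * ∫ v in B m, Real.exp (-(v j)) ∂ν := integral_const_mul _ _
    have hsum_le : ∑ m ∈ Finset.range M, Real.exp (-(t m)) * (ν (B m)).toReal ≤
        Real.exp h * ∫ v in ⋃ m ∈ Finset.range M, B m, Real.exp (-(v j)) ∂ν := by
      calc ∑ m ∈ Finset.range M, Real.exp (-(t m)) * (ν (B m)).toReal
          ≤ ∑ m ∈ Finset.range M, Real.exp h * ∫ v in B m, Real.exp (-(v j)) ∂ν :=
            Finset.sum_le_sum hterm
        _ = Real.exp h * ∑ m ∈ Finset.range M, ∫ v in B m, Real.exp (-(v j)) ∂ν := by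
            rw [Finset.mul_sum]
        _ = Real.exp h * ∫ v in ⋃ m ∈ Finset.range M, B m, Real.exp (-(v j)) ∂ν := by
            rw [hUnion_eq]
    have hexph : Real.exp h - 1 ≤ ε / 8 := by
      have := exp_sub_one_le hh0.le hh1
      linarith [hhe]
    have hfin : Real.exp h * ∫ v in ⋃ m ∈ Finset.range M, B m, Real.exp (-(v j)) ∂ν ≤
        E + ε / 8 := by
      have h1 : Real.exp h * ∫ v in ⋃ m ∈ Finset.range M, B m, Real.exp (-(v j)) ∂ν ≤
          Real.exp h * E := mul_le_mul_of_nonneg_left hints_le_E (Real.exp_pos _).le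
      nlinarith [Real.exp_pos h, hE0, hE1]
    rw [hUdef]
    have := hsum_le.trans hfin
    linarith [htM]
  have hLbound : E - ε / 4 ≤ L := by
    have hterm : ∀ m ∈ Finset.range M, ∫ v in B m, Real.exp (-(v j)) ∂ν ≤
        Real.exp h * (Real.exp (-(t (m + 1))) * (ν (B m)).toReal) := by
      intro m _
      have hb : ∀ v ∈ B m, Real.exp (-(v j)) ≤ Real.exp h * Real.exp (-(t (m + 1))) := by
        intro v hv
        rw [← Real.exp_add]
        refine Real.exp_le_exp.2 ?_
        have h1 := hv.2.1
        have h2 := hgap m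
        linarith
      calc ∫ v in B m, Real.exp (-(v j)) ∂ν
          ≤ ∫ _ in B m, Real.exp h * Real.exp (-(t (m + 1))) ∂ν :=
            setIntegral_mono_on (hIntB m)
              (integrableOn_const (measure_ne_top ν _)) (hBmeas m) hb
        _ = (ν (B m)).toReal * (Real.exp h * Real.exp (-(t (m + 1)))) := by
            rw [setIntegral_const, smul_eq_mul, measureReal_def]
        _ = Real.exp h * (Real.exp (-(t (m + 1))) * (ν (B m)).toReal) := by ring
    have hsum_le : ∫ v in ⋃ m ∈ Finset.range M, B m, Real.exp (-(v j)) ∂ν ≤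
        Real.exp h * L := by
      calc ∫ v in ⋃ m ∈ Finset.range M, B m, Real.exp (-(v j)) ∂ν
          = ∑ m ∈ Finset.range M, ∫ v in B m, Real.exp (-(v j)) ∂ν := hUnion_eq.symm
        _ ≤ ∑ m ∈ Finset.range M, Real.exp h * (Real.exp (-(t (m + 1))) * (ν (B m)).toReal) :=
            Finset.sum_le_sum hterm
        _ = Real.exp h * L := by rw [hLdef, Finset.mul_sum]
    have h1 : E - ε / 8 ≤ Real.exp h * L := hE_tail.trans hsum_le
    have hx0 : (0:ℝ) < Real.exp (-h) := Real.exp_pos _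
    have hx1 : Real.exp (-h) ≤ 1 := Real.exp_le_one_iff.2 (by linarith)
    have hxe : Real.exp (-h) * Real.exp h = 1 := by
      rw [← Real.exp_add]; simp
    have h2 : Real.exp (-h) * (E - ε / 8) ≤ L := by
      have h3 := mul_le_mul_of_nonneg_left h1 hx0.le
      calc Real.exp (-h) * (E - ε / 8) ≤ Real.exp (-h) * (Real.exp h * L) := h3
        _ = L := by rw [← mul_assoc, hxe, one_mul]
    have h4 : 1 - Real.exp (-h) ≤ h := one_sub_exp_neg_le hh0.le
    nlinarith [hE0, hE1, hh8, hε, hx0, hx1]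
  -- eventual two-sided bound on the ratio
  have hpos_all : ∀ᶠ c in atTop, ∀ m ∈ Finset.range (M + 1), P (Aset S k (t m) c) ≠ 0 := by
    rw [eventually_all_finset]
    intro m _
    exact eventually_pos P S K k (t m) (hA1 k (t m))
  have hub : ∀ᶠ c in atTop,
      (P (Aset S j 0 c ∩ (Tmap S k c) ⁻¹' (Cset n k))).toReal / (P (Aset S k 0 c)).toReal ≤
        Fup c ∧
      Flo c ≤
        (P (Aset S j 0 c ∩ (Tmap S k c) ⁻¹' (Cset n k))).toReal / (P (Aset S k 0 c)).toReal := by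
    filter_upwards [hpos_all] with c hposc
    have hp0 : P (Aset S k 0 c) ≠ 0 := by
      have := hposc 0 (Finset.mem_range.2 (Nat.succ_pos M))
      rwa [ht0] at this
    have hp0R : 0 < (P (Aset S k 0 c)).toReal := ENNReal.toReal_pos hp0 (measure_ne_top _ _)
    have hptm : ∀ m : ℕ, m ≤ M → (P (Aset S k (t m) c)).toReal ≠ 0 := fun m hm =>
      (ENNReal.toReal_pos (hposc m (Finset.mem_range.2 (Nat.lt_succ_of_le hm)))
        (measure_ne_top _ _)).ne'
    have hterm_eq : ∀ mc ml : ℕ, ml ≤ M →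
        (P (Aset S k (t ml) c ∩ (Tmap S k c) ⁻¹' (B mc))).toReal / (P (Aset S k 0 c)).toReal =
          (P (Aset S k (t ml) c)).toReal / (P (Aset S k 0 c)).toReal *
            ((Measure.map (Tmap S k c) (P[|Aset S k (t ml) c])) (B mc)).toReal := by
      intro mc ml hml
      rw [ratio_split (hptm ml hml)]
      congr 1
      rw [cond_ratio P (measurable_Aset S hSmeas k (t ml) c),
        Measure.map_apply (measurable_Tmap S hSmeas k c) (hBmeas mc)]
    constructor
    · have hincl : Aset S j 0 c ∩ (Tmap S k c) ⁻¹' (Cset n k) ⊆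
          (⋃ m ∈ Finset.range M, Aset S k (t m) c ∩ (Tmap S k c) ⁻¹' (B m)) ∪
            Aset S k (t M) c := by
        rintro ω ⟨hj0, hTC⟩
        rw [Set.mem_preimage] at hTC
        have hx0 : 0 ≤ Tmap S k c ω j := hTC.1 j hjk
        have hj0' : c + 0 ≤ S c j ω := hj0
        have hTj : Tmap S k c ω j = S c k ω - S c j ω := rfl
        by_cases hxM : Tmap S k c ω j < t M
        · obtain ⟨m, hm, h1, h2⟩ := exists_interval_index t M _ (by rw [ht0]; exact hx0) hxM
          refine Or.inl (Set.mem_iUnion₂.2 ⟨m, Finset.mem_range.2 hm, ⟨?_, ?_⟩⟩)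
          · show c + t m ≤ S c k ω
            linarith
          · exact Set.mem_preimage.2 ⟨hTC, h1, h2⟩
        · refine Or.inr ?_
          show c + t M ≤ S c k ω
          push_neg at hxM
          linarith
      have hle1 : P (Aset S j 0 c ∩ (Tmap S k c) ⁻¹' (Cset n k)) ≤
          (∑ m ∈ Finset.range M, P (Aset S k (t m) c ∩ (Tmap S k c) ⁻¹' (B m))) +
            P (Aset S k (t M) c) :=
        (measure_mono hincl).trans ((measure_union_le _ _).trans
          (add_le_add (measure_biUnion_finset_le _ _) le_rfl))
      have hsum_ne : (∑ m ∈ Finset.range M,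
          P (Aset S k (t m) c ∩ (Tmap S k c) ⁻¹' (B m))) ≠ ∞ :=
        (ENNReal.sum_lt_top.2 fun m _ => measure_lt_top _ _).ne
      have hle2 : (P (Aset S j 0 c ∩ (Tmap S k c) ⁻¹' (Cset n k))).toReal ≤
          (∑ m ∈ Finset.range M,
            (P (Aset S k (t m) c ∩ (Tmap S k c) ⁻¹' (B m))).toReal) +
            (P (Aset S k (t M) c)).toReal := by
        have := ENNReal.toReal_mono
          (ENNReal.add_ne_top.2 ⟨hsum_ne, measure_ne_top _ _⟩) hle1
        rwa [ENNReal.toReal_add hsum_ne (measure_ne_top _ _),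
          ENNReal.toReal_sum (fun m _ => measure_ne_top _ _)] at this
      have hdiv : (P (Aset S j 0 c ∩ (Tmap S k c) ⁻¹' (Cset n k))).toReal /
          (P (Aset S k 0 c)).toReal ≤
          ((∑ m ∈ Finset.range M,
            (P (Aset S k (t m) c ∩ (Tmap S k c) ⁻¹' (B m))).toReal) +
            (P (Aset S k (t M) c)).toReal) / (P (Aset S k 0 c)).toReal := by
        gcongr
      refine hdiv.trans (le_of_eq ?_)
      rw [add_div, Finset.sum_div]
      simp only [hFupdef]
      congr 1
      exact Finset.sum_congr rfl fun m hm =>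
        hterm_eq m m (le_of_lt (Finset.mem_range.1 hm))
    · have hincl2 : ∀ m ∈ Finset.range M,
          Aset S k (t (m + 1)) c ∩ (Tmap S k c) ⁻¹' (B m) ⊆
            Aset S j 0 c ∩ (Tmap S k c) ⁻¹' (Cset n k) := by
        intro m _
        rintro ω ⟨hA, hB⟩
        rw [Set.mem_preimage] at hB
        obtain ⟨hC, h1, h2⟩ := hB
        have hA' : c + t (m + 1) ≤ S c k ω := hA
        have hTj : Tmap S k c ω j = S c k ω - S c j ω := rfl
        refine ⟨?_, Set.mem_preimage.2 hC⟩
        show c + 0 ≤ S c j ω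
        linarith
      have hdisj2 : (↑(Finset.range M) : Set ℕ).Pairwise
          (Function.onFun Disjoint fun m => Aset S k (t (m + 1)) c ∩ (Tmap S k c) ⁻¹' (B m)) := by
        intro m _ m' _ hmm'
        exact Disjoint.mono Set.inter_subset_right Set.inter_subset_right
          (Disjoint.preimage _ (hBdisj m m' hmm'))
      have hsum_eq : ∑ m ∈ Finset.range M,
          P (Aset S k (t (m + 1)) c ∩ (Tmap S k c) ⁻¹' (B m)) =
          P (⋃ m ∈ Finset.range M, Aset S k (t (m + 1)) c ∩ (Tmap S k c) ⁻¹' (B m)) :=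
        (measure_biUnion_finset hdisj2 (fun m _ =>
          (measurable_Aset S hSmeas k (t (m + 1)) c).inter
            ((measurable_Tmap S hSmeas k c) (hBmeas m)))).symm
      have hle1 : ∑ m ∈ Finset.range M,
          P (Aset S k (t (m + 1)) c ∩ (Tmap S k c) ⁻¹' (B m)) ≤
          P (Aset S j 0 c ∩ (Tmap S k c) ⁻¹' (Cset n k)) := by
        rw [hsum_eq]
        exact measure_mono (Set.iUnion₂_subset hincl2)
      have hle2 : ∑ m ∈ Finset.range M,
          (P (Aset S k (t (m + 1)) c ∩ (Tmap S k c) ⁻¹' (B m))).toReal ≤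
          (P (Aset S j 0 c ∩ (Tmap S k c) ⁻¹' (Cset n k))).toReal := by
        rw [← ENNReal.toReal_sum (fun m _ => measure_ne_top _ _)]
        exact ENNReal.toReal_mono (measure_ne_top _ _) hle1
      have hdiv : (∑ m ∈ Finset.range M,
          (P (Aset S k (t (m + 1)) c ∩ (Tmap S k c) ⁻¹' (B m))).toReal) /
            (P (Aset S k 0 c)).toReal ≤
          (P (Aset S j 0 c ∩ (Tmap S k c) ⁻¹' (Cset n k))).toReal /
            (P (Aset S k 0 c)).toReal := by
        gcongr
      refine le_trans (le_of_eq ?_) hdiv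
      rw [Finset.sum_div]
      simp only [hFlodef]
      exact Finset.sum_congr rfl fun m hm =>
        (hterm_eq m (m + 1) (Finset.mem_range.1 hm)).symm
  have hU8 : ∀ᶠ c in atTop, dist (Fup c) U < ε / 8 :=
    Metric.tendsto_nhds.1 hFupLim (ε / 8) (by positivity)
  have hL8 : ∀ᶠ c in atTop, dist (Flo c) L < ε / 8 :=
    Metric.tendsto_nhds.1 hFloLim (ε / 8) (by positivity)
  have hfinal : ∀ᶠ c in atTop,
      dist ((P (Aset S j 0 c ∩ (Tmap S k c) ⁻¹' (Cset n k))).toReal /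
        (P (Aset S k 0 c)).toReal) E < ε := by
    filter_upwards [hU8, hL8, hub] with c h1 h2 h3
    obtain ⟨hu, hl⟩ := h3
    rw [Real.dist_eq] at h1 h2 ⊢
    have h1' := abs_lt.1 h1
    have h2' := abs_lt.1 h2
    rw [abs_lt]
    constructor
    · linarith
    · linarith
  obtain ⟨N, hN⟩ := eventually_atTop.1 hfinal
  exact ⟨N, hN⟩

end Main

section Final
variable {Ω : Type*} [MeasurableSpace Ω]

lemma main_kk (P : Measure Ω) [IsProbabilityMeasure P] {n : ℕ} (S : ℝ → Fin n → Ω → ℝ)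
    (hSmeas : ∀ c k, Measurable (S c k)) (K : ℝ) (hK : 0 < K)
    (Y : Fin n → Fin n → Ω → ℝ) (hYmeas : ∀ k j, Measurable (Y k j))
    (hYkk : ∀ k, ∀ᵐ ω ∂P, Y k k ω = 0)
    (hYne : ∀ k j, k ≠ j → P {ω | Y k j ω = 0} = 0)
    (hA1 : ∀ (k : Fin n) (y : ℝ),
      Tendsto (fun c : ℝ => (P (Aset S k y c)).toReal / dfun K y c) atTop (𝓝 1))
    (hA2 : ∀ (k : Fin n) (y : ℝ) (f : BoundedContinuousFunction (Fin n → ℝ) ℝ),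
      Tendsto (fun c : ℝ => ∫ v, f v ∂(Measure.map (Tmap S k c) (P[|Aset S k y c])))
        atTop (𝓝 (∫ ω, f (fun j => Y k j ω) ∂P)))
    (k : Fin n) :
    Tendsto (fun c : ℝ =>
        (P (Aset S k 0 c ∩ (Tmap S k c) ⁻¹' (Cset n k))).toReal / (P (Aset S k 0 c)).toReal)
      atTop (𝓝 (∫ v in Cset n k, Real.exp (-(v k)) ∂(nuY P Y k))) := by
  haveI hνP : IsProbabilityMeasure (nuY P Y k) := nuY_isProb P Y hYmeas k
  have hCmeas : MeasurableSet (Cset n k) := measurable_Cset k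
  have hae : ∀ᵐ v ∂(nuY P Y k), v k = 0 := by
    rw [nuY]
    have hs : MeasurableSet ({v : Fin n → ℝ | v k = 0}) := by
      have he : {v : Fin n → ℝ | v k = 0} = (fun v : Fin n → ℝ => v k) ⁻¹' {0} := rfl
      rw [he]
      exact (measurable_pi_apply k) (measurableSet_singleton 0)
    exact (MeasureTheory.ae_map_iff (measurable_Ymap Y hYmeas k).aemeasurable hs).2 (hYkk k)
  have hEeq : ∫ v in Cset n k, Real.exp (-(v k)) ∂(nuY P Y k) = ((nuY P Y k) (Cset n k)).toReal := by
    have h1 : ∫ v in Cset n k, Real.exp (-(v k)) ∂(nuY P Y k) =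
        ∫ _ in Cset n k, (1:ℝ) ∂(nuY P Y k) := by
      refine setIntegral_congr_ae hCmeas ?_
      filter_upwards [hae] with v hv _
      rw [hv]
      simp
    rw [h1]
    simp [setIntegral_const, measureReal_def]
  rw [hEeq]
  have hport := portmanteau_aux P S hSmeas Y hYmeas k 0 (hA2 k 0)
    (eventually_pos P S K k 0 (hA1 k 0)) (frontier_Cset_null P Y hYmeas hYne k)
  refine hport.congr' ?_
  filter_upwards [eventually_pos P S K k 0 (hA1 k 0)] with c hc
  rw [Measure.map_apply (measurable_Tmap S hSmeas k c) hCmeas,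
    ← cond_ratio P (measurable_Aset S hSmeas k 0 c)]

lemma sum_col (P : Measure Ω) [IsProbabilityMeasure P] {n : ℕ} (hn : 1 ≤ n)
    (S : ℝ → Fin n → Ω → ℝ)
    (hSmeas : ∀ c k, Measurable (S c k)) (K : ℝ) (hK : 0 < K)
    (Y : Fin n → Fin n → Ω → ℝ) (hYmeas : ∀ k j, Measurable (Y k j))
    (hYkk : ∀ k, ∀ᵐ ω ∂P, Y k k ω = 0)
    (hYne : ∀ k j, k ≠ j → P {ω | Y k j ω = 0} = 0)
    (hA1 : ∀ (k : Fin n) (y : ℝ),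
      Tendsto (fun c : ℝ => (P (Aset S k y c)).toReal / dfun K y c) atTop (𝓝 1))
    (hA2 : ∀ (k : Fin n) (y : ℝ) (f : BoundedContinuousFunction (Fin n → ℝ) ℝ),
      Tendsto (fun c : ℝ => ∫ v, f v ∂(Measure.map (Tmap S k c) (P[|Aset S k y c])))
        atTop (𝓝 (∫ ω, f (fun j => Y k j ω) ∂P)))
    (j : Fin n) :
    ∑ k : Fin n, ∫ v in Cset n k, Real.exp (-(v j)) ∂(nuY P Y k) = 1 := by
  classical
  have hmain : ∀ k : Fin n, Tendsto (fun c : ℝ =>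
      (P (Aset S j 0 c ∩ (Tmap S k c) ⁻¹' (Cset n k))).toReal / (P (Aset S k 0 c)).toReal)
      atTop (𝓝 (∫ v in Cset n k, Real.exp (-(v j)) ∂(nuY P Y k))) := by
    intro k
    by_cases hjk : j = k
    · subst hjk
      exact main_kk P S hSmeas K hK Y hYmeas hYkk hYne hA1 hA2 j
    · exact main_kj P S hSmeas K hK Y hYmeas hYne hA1 hA2 k j hjk
  have hsum : Tendsto (fun c : ℝ => ∑ k : Fin n,
      ((P (Aset S j 0 c ∩ (Tmap S k c) ⁻¹' (Cset n k))).toReal / (P (Aset S k 0 c)).toReal) *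
        ((P (Aset S k 0 c)).toReal / dfun K 0 c)) atTop
      (𝓝 (∑ k : Fin n, (∫ v in Cset n k, Real.exp (-(v j)) ∂(nuY P Y k)) * 1)) :=
    tendsto_finset_sum _ fun k _ => (hmain k).mul (hA1 k 0)
  have hposall : ∀ᶠ c in atTop, ∀ k : Fin n, P (Aset S k 0 c) ≠ 0 :=
    eventually_all.2 fun k => eventually_pos P S K k 0 (hA1 k 0)
  have heq : ∀ᶠ c in atTop, ∑ k : Fin n,
      ((P (Aset S j 0 c ∩ (Tmap S k c) ⁻¹' (Cset n k))).toReal / (P (Aset S k 0 c)).toReal) *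
        ((P (Aset S k 0 c)).toReal / dfun K 0 c) =
      (P (Aset S j 0 c)).toReal / dfun K 0 c := by
    filter_upwards [hposall] with c hc
    have hterm : ∀ k : Fin n,
        ((P (Aset S j 0 c ∩ (Tmap S k c) ⁻¹' (Cset n k))).toReal / (P (Aset S k 0 c)).toReal) *
          ((P (Aset S k 0 c)).toReal / dfun K 0 c) =
        (P (Aset S j 0 c ∩ (Tmap S k c) ⁻¹' (Cset n k))).toReal / dfun K 0 c := by
      intro k
      have hb : (P (Aset S k 0 c)).toReal ≠ 0 :=
        (ENNReal.toReal_pos (hc k) (measure_ne_top _ _)).ne'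
      rw [mul_comm, ← ratio_split hb]
    rw [Finset.sum_congr rfl fun k _ => hterm k, ← Finset.sum_div]
    congr 1
    rw [cover_split P S hn hSmeas j c, ENNReal.toReal_sum (fun k _ => measure_ne_top _ _)]
  have h1 : Tendsto (fun c : ℝ => (P (Aset S j 0 c)).toReal / dfun K 0 c) atTop
      (𝓝 (∑ k : Fin n, (∫ v in Cset n k, Real.exp (-(v j)) ∂(nuY P Y k)) * 1)) :=
    hsum.congr' heq
  have h2 := tendsto_nhds_unique h1 (hA1 j 0)
  simpa using h2

end Final

section Thm
variable {Ω : Type*} [MeasurableSpace Ω]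

lemma integral_indicator_eq (P : Measure Ω) [IsProbabilityMeasure P] {n : ℕ}
    (Y : Fin n → Fin n → Ω → ℝ) (hYmeas : ∀ k j, Measurable (Y k j))
    (hYkk : ∀ k, ∀ᵐ ω ∂P, Y k k ω = 0)
    (hYne : ∀ k j, k ≠ j → P {ω | Y k j ω = 0} = 0) (k : Fin n) :
    ∫ ω, Set.indicator {ω | ∀ j, 0 ≤ Y k j ω}
        (fun ω => ∑ j : Fin n, Real.exp (-(Y k j ω))) ω ∂P
      = ∑ j : Fin n, ∫ v in Cset n k, Real.exp (-(v j)) ∂(nuY P Y k) := by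
  classical
  haveI hνP : IsProbabilityMeasure (nuY P Y k) := nuY_isProb P Y hYmeas k
  have hCmeas : MeasurableSet (Cset n k) := measurable_Cset k
  have hDmeas : MeasurableSet {ω : Ω | ∀ j, 0 ≤ Y k j ω} := by
    rw [Set.setOf_forall]
    exact MeasurableSet.iInter fun i =>
      measurableSet_le measurable_const (hYmeas k i)
  have hint : ∀ j : Fin n, IntegrableOn (fun ω => Real.exp (-(Y k j ω)))
      {ω : Ω | ∀ i, 0 ≤ Y k i ω} P := by
    intro i
    refine Integrable.mono' (integrable_const 1) ?_ ?_
    · exact (Real.measurable_exp.comp (hYmeas k i).neg).aestronglyMeasurable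
    · filter_upwards [ae_restrict_mem hDmeas] with ω hω
      rw [Real.norm_eq_abs, abs_of_pos (Real.exp_pos _)]
      exact Real.exp_le_one_iff.2 (neg_nonpos.2 (hω i))
  rw [integral_indicator hDmeas]
  rw [integral_finset_sum _ (fun i _ => hint i)]
  refine Finset.sum_congr rfl fun j _ => ?_
  -- replace the domain by the preimage of the cone
  have h2 : ∀ᵐ ω ∂P, ∀ i : Fin n, i ≠ k → Y k i ω ≠ 0 := by
    rw [ae_all_iff]
    intro i
    by_cases hik : i = k
    · filter_upwards with ω hik'
      exact absurd hik hik'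
    · have h0 : P {ω | Y k i ω = 0} = 0 := hYne k i (fun he => hik he.symm)
      have hne : ∀ᵐ ω ∂P, Y k i ω ≠ 0 := by
        rw [ae_iff]
        simpa [not_not] using h0
      filter_upwards [hne] with ω hω _
      exact hω
  have hW : {ω : Ω | ∀ i, 0 ≤ Y k i ω} =ᵐ[P]
      ((fun ω (i : Fin n) => Y k i ω) ⁻¹' (Cset n k)) := by
    rw [Filter.eventuallyEq_set]
    filter_upwards [hYkk k, h2] with ω h0 hne
    constructor
    · intro hD
      refine ⟨fun i _ => hD i, fun i hki => ?_⟩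
      have hik : i ≠ k := ne_of_gt hki
      exact lt_of_le_of_ne (hD i) (Ne.symm (hne i hik))
    · intro hC i
      by_cases hik : i = k
      · subst hik
        rw [h0]
      · exact hC.1 i hik
  rw [setIntegral_congr_set hW]
  have hmap := setIntegral_map (μ := P) (g := fun ω (i : Fin n) => Y k i ω)
      (f := fun v : Fin n → ℝ => Real.exp (-(v j))) hCmeas
      ((continuous_apply j).neg.rexp).aestronglyMeasurable
      (measurable_Ymap Y hYmeas k).aemeasurable
  rw [nuY, hmap]

end Thm
end A3aux

/-- Conclusion (A.3) of Theorem 3: if `S_{1c},…,S_{nc}` satisfy the tail condition (A.1)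
`P{S_{kc} ≥ c + y} ∼ K c^{-1/2} e^{-c-y}` and the conditional weak convergence (A.2) of
`(S_{kc} − S_{jc})_j` given `{S_{kc} ≥ c+y}` to `(Y_{kj})_j`, where `Y_{kk} = 0` a.s. and
`P{Y_{kj} = 0} = 0` for `k ≠ j`, then
`n⁻¹ ∑_k E[(∑_j e^{-Y_{kj}})·1{Y_{kj} ≥ 0 ∀j}] = 1`. -/
theorem average_likelihood_localization_identity
    {Ω : Type*} [MeasurableSpace Ω] (P : Measure Ω) [IsProbabilityMeasure P]
    (n : ℕ) (hn : 1 ≤ n)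
    (S : ℝ → Fin n → Ω → ℝ) (hSmeas : ∀ c k, Measurable (S c k))
    (K : ℝ) (hK : 0 < K)
    (Y : Fin n → Fin n → Ω → ℝ) (hYmeas : ∀ k j, Measurable (Y k j))
    (hYkk : ∀ k, ∀ᵐ ω ∂P, Y k k ω = 0)
    (hYne : ∀ k j, k ≠ j → P {ω | Y k j ω = 0} = 0)
    (hA1 : ∀ (k : Fin n) (y : ℝ),
      Tendsto (fun c : ℝ =>
          (P {ω | c + y ≤ S c k ω}).toReal / (K * c ^ (-(1 : ℝ) / 2) * Real.exp (-c - y)))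
        atTop (𝓝 1))
    (hA2 : ∀ (k : Fin n) (y : ℝ) (f : BoundedContinuousFunction (Fin n → ℝ) ℝ),
      Tendsto (fun c : ℝ =>
          ∫ v, f v ∂(Measure.map (fun ω => fun j => S c k ω - S c j ω)
            (ProbabilityTheory.cond P {ω | c + y ≤ S c k ω})))
        atTop (𝓝 (∫ ω, f (fun j => Y k j ω) ∂P))) :
    (n : ℝ)⁻¹ * ∑ k : Fin n,
        ∫ ω, Set.indicator {ω | ∀ j, 0 ≤ Y k j ω}
          (fun ω => ∑ j : Fin n, Real.exp (-(Y k j ω))) ω ∂P = 1 := by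
  have hA1' : ∀ (k : Fin n) (y : ℝ),
      Tendsto (fun c : ℝ => (P (A3aux.Aset S k y c)).toReal / A3aux.dfun K y c) atTop (𝓝 1) :=
    hA1
  have hA2' : ∀ (k : Fin n) (y : ℝ) (f : BoundedContinuousFunction (Fin n → ℝ) ℝ),
      Tendsto (fun c : ℝ =>
          ∫ v, f v ∂(Measure.map (A3aux.Tmap S k c) (P[|A3aux.Aset S k y c])))
        atTop (𝓝 (∫ ω, f (fun j => Y k j ω) ∂P)) := hA2
  have hkey : ∀ k : Fin n,
      ∫ ω, Set.indicator {ω | ∀ j, 0 ≤ Y k j ω}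
          (fun ω => ∑ j : Fin n, Real.exp (-(Y k j ω))) ω ∂P
        = ∑ j : Fin n, ∫ v in A3aux.Cset n k, Real.exp (-(v j)) ∂(A3aux.nuY P Y k) :=
    fun k => A3aux.integral_indicator_eq P Y hYmeas hYkk hYne k
  have hcol : ∀ j : Fin n,
      ∑ k : Fin n, ∫ v in A3aux.Cset n k, Real.exp (-(v j)) ∂(A3aux.nuY P Y k) = 1 :=
    fun j => A3aux.sum_col P hn S hSmeas K hK Y hYmeas hYkk hYne hA1' hA2' j
  have hsum : ∑ k : Fin n,
      ∫ ω, Set.indicator {ω | ∀ j, 0 ≤ Y k j ω}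
        (fun ω => ∑ j : Fin n, Real.exp (-(Y k j ω))) ω ∂P = (n : ℝ) := by
    rw [Finset.sum_congr rfl fun k _ => hkey k, Finset.sum_comm]
    rw [Finset.sum_congr rfl fun j _ => hcol j]
    simp
  rw [hsum, inv_mul_cancel₀]
  exact Nat.cast_ne_zero.2 (by omega)
end

section
/- Let n ≥ 1 and for each c > 0 let S_{1c},…,S_{nc} be real random variables. Assume there exist a constant K > 0 and random variables Y_{kj} (1 ≤ k, j ≤ n) with Y_{kk} = 0 almost surely and P{Y_{kj} = 0} = 0 for all k ≠ j, such that: (A.1) for every k and every y ∈ ℝ, P{S_{kc} ≥ c + y} ∼ K c^{-1/2} e^{-c-y} as c → ∞; and (A.2) for every k and every y ∈ ℝ, the conditional law of (S_{kc} − S_{1c}, …, S_{kc} − S_{nc}) given {S_{kc} ≥ c + y} converges weakly to the law of (Y_{k1}, …, Y_{kn}). Then P{n^{-1} Σ_{j=1}^n e^{S_{jc}} ≥ e^c} ∼ K c^{-1/2} e^{-c} as c → ∞. -/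
open MeasureTheory ProbabilityTheory Filter Real Set
open scoped ENNReal Topology

namespace ALRT


lemma sum_tele_nonneg (y : ℕ → ℝ) (hmono : Monotone y) (f : ℕ → ℝ) (hf : ∀ i, 0 ≤ f i ∧ f i ≤ 1)
    (N : ℕ) : 0 ≤ ∑ i ∈ Finset.range N, (Real.exp (-(y i)) - Real.exp (-(y (i+1)))) * f i := by
  apply Finset.sum_nonneg
  intro i _
  have h1 : Real.exp (-(y (i+1))) ≤ Real.exp (-(y i)) :=
    Real.exp_le_exp.mpr (by simpa using hmono (Nat.le_succ i))
  nlinarith [(hf i).1, (hf i).2]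

lemma tele_upper (m t : ℝ) (ht : 0 ≤ t) (hm : 0 ≤ m) (y : ℕ → ℝ) (h0 : y 0 = 0)
    (hmono : Monotone y) (hgap : ∀ i, y (i+1) ≤ y i + m) (N : ℕ) :
    ∑ i ∈ Finset.range N, (Real.exp (-(y i)) - Real.exp (-(y (i+1)))) *
      (if t ≤ y (i+1) then (1:ℝ) else 0) ≤ Real.exp m * Real.exp (-t) := by
  have key : ∀ N : ℕ, ∑ i ∈ Finset.range N, (Real.exp (-(y i)) - Real.exp (-(y (i+1)))) *
      (if t ≤ y (i+1) then (1:ℝ) else 0) ≤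
      (if t ≤ y N then Real.exp m * Real.exp (-t) - Real.exp (-(y N)) else 0) := by
    intro N
    induction N with
    | zero =>
      simp only [Finset.range_zero, Finset.sum_empty]
      split_ifs with h
      · have ht0 : t = 0 := le_antisymm (h0 ▸ h) ht
        rw [h0, ht0]
        simp only [neg_zero, Real.exp_zero, mul_one]
        nlinarith [Real.one_le_exp hm]
      · exact le_refl 0
    | succ N ih =>
      rw [Finset.sum_range_succ]
      by_cases hN1 : t ≤ y (N+1)
      · rw [if_pos hN1, if_pos hN1, mul_one]
        by_cases hN : t ≤ y N
        · rw [if_pos hN] at ih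
          nlinarith [ih]
        · rw [if_neg hN] at ih
          have hb : Real.exp (-(y N)) ≤ Real.exp m * Real.exp (-t) := by
            rw [← Real.exp_add]
            apply Real.exp_le_exp.mpr
            have h1 := hgap N
            have h2 := not_le.mp hN
            linarith
          nlinarith [ih]
      · rw [if_neg hN1, if_neg hN1, mul_zero, add_zero]
        have hN : ¬ t ≤ y N := fun h => hN1 (h.trans (hmono (Nat.le_succ N)))
        rw [if_neg hN] at ih
        exact ih
  refine (key N).trans ?_
  split_ifs
  · nlinarith [Real.exp_pos (-(y N))]
  · positivity

lemma tele_lower (m t : ℝ) (ht : 0 ≤ t) (hm : 0 ≤ m) (y : ℕ → ℝ)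
    (hmono : Monotone y) (hy1 : y 1 ≤ m) (hgap : ∀ i, y (i+1) ≤ y i + m) (N : ℕ) :
    Real.exp (-m) * Real.exp (-t) - Real.exp (-(y (N+1))) ≤
      ∑ i ∈ Finset.range N, (Real.exp (-(y (i+1))) - Real.exp (-(y (i+2)))) *
        (if t < y (i+1) then (1:ℝ) else 0) := by
  induction N with
  | zero =>
    simp only [Finset.range_zero, Finset.sum_empty]
    have : Real.exp (-m) * Real.exp (-t) ≤ Real.exp (-(y 1)) := by
      rw [← Real.exp_add]
      apply Real.exp_le_exp.mpr
      linarith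
    linarith
  | succ N ih =>
    rw [Finset.sum_range_succ]
    by_cases hN1 : t < y (N+1)
    · rw [if_pos hN1, mul_one]
      linarith [ih]
    · rw [if_neg hN1, mul_zero, add_zero]
      have hnn : 0 ≤ ∑ i ∈ Finset.range N, (Real.exp (-(y (i+1))) - Real.exp (-(y (i+2)))) *
          (if t < y (i+1) then (1:ℝ) else 0) := by
        apply Finset.sum_nonneg
        intro i _
        have h1 : Real.exp (-(y (i+2))) ≤ Real.exp (-(y (i+1))) :=
          Real.exp_le_exp.mpr (by simpa using hmono (Nat.le_succ (i+1)))
        split_ifs <;> nlinarith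
      have : Real.exp (-m) * Real.exp (-t) ≤ Real.exp (-(y (N+2))) := by
        rw [← Real.exp_add]
        apply Real.exp_le_exp.mpr
        have h1 := hgap (N+1)
        have h2 := not_lt.mp hN1
        linarith
      linarith

lemma exists_layer (y : ℕ → ℝ) (w : ℝ) : ∀ (N : ℕ), y 0 ≤ w → ¬ y N ≤ w →
    ∃ i, i < N ∧ y i ≤ w ∧ w < y (i+1) := by
  intro N
  induction N with
  | zero => intro h0 hN; exact absurd h0 hN
  | succ N ih =>
    intro h0 hN
    by_cases hyN : y N ≤ w
    · exact ⟨N, Nat.lt_succ_self N, hyN, not_le.mp hN⟩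
    · obtain ⟨i, hi, h1, h2⟩ := ih h0 hyN
      exact ⟨i, hi.trans (Nat.lt_succ_self N), h1, h2⟩



lemma exists_good_point (D : Set ℝ) (hD : D.Countable) (a b : ℝ) (hab : a < b) :
    ∃ x, x ∈ Ioo a b ∧ x ∉ D := by
  by_contra h
  push_neg at h
  have hsub : Ioo a b ⊆ D := fun x hx => h x hx
  have h1 : (volume : Measure ℝ) (Ioo a b) ≤ volume D := measure_mono hsub
  rw [hD.measure_zero] at h1
  have h2 : (volume : Measure ℝ) (Ioo a b) = ENNReal.ofReal (b - a) := Real.volume_Ioo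
  rw [h2] at h1
  simp only [nonpos_iff_eq_zero, ENNReal.ofReal_eq_zero] at h1
  linarith

lemma exists_grid (D : Set ℝ) (hD : D.Countable) (m : ℝ) (hm : 0 < m) :
    ∃ y : ℕ → ℝ, y 0 = 0 ∧ Monotone y ∧ (∀ i, y (i+1) ≤ y i + m) ∧ y 1 ≤ m ∧
      (∀ i, 1 ≤ i → y i ∉ D) ∧ (∀ i : ℕ, (i:ℝ) * m / 4 ≤ y i) := by
  have key : ∀ i : ℕ, ∃ x, x ∈ Ioo ((2*(i:ℝ)+1)*m/4) ((2*(i:ℝ)+2)*m/4) ∧ x ∉ D := by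
    intro i
    apply exists_good_point D hD
    have : (0:ℝ) ≤ (i:ℝ) := Nat.cast_nonneg i
    nlinarith
  choose x hx1 hxD using key
  refine ⟨fun i => if i = 0 then 0 else x (i - 1), rfl, ?_, ?_, ?_, ?_, ?_⟩
  · apply monotone_nat_of_le_succ
    intro i
    rcases i with _ | j
    · simp only [if_pos rfl, if_neg (Nat.succ_ne_zero 0)]
      have := (hx1 0).1
      simp only [Nat.zero_sub] at *
      norm_num at this ⊢
      nlinarith [this]
    · simp only [if_neg (Nat.succ_ne_zero j), if_neg (Nat.succ_ne_zero (j+1))]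
      have h1 := (hx1 j).2
      have h2 := (hx1 (j+1)).1
      simp only [Nat.succ_sub_one]
      push_cast at h1 h2 ⊢
      nlinarith
  · intro i
    rcases i with _ | j
    · simp only [if_pos rfl, if_neg (Nat.succ_ne_zero 0), Nat.zero_sub]
      have := (hx1 0).2
      norm_num at this ⊢
      nlinarith
    · simp only [if_neg (Nat.succ_ne_zero j), if_neg (Nat.succ_ne_zero (j+1)), Nat.succ_sub_one]
      have h1 := (hx1 j).1
      have h2 := (hx1 (j+1)).2
      push_cast at h1 h2 ⊢
      nlinarith
  · simp only [if_neg (Nat.one_ne_zero), Nat.sub_self]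
    have := (hx1 0).2
    norm_num at this ⊢
    nlinarith
  · intro i hi
    rcases i with _ | j
    · omega
    · simp only [if_neg (Nat.succ_ne_zero j), Nat.succ_sub_one]
      exact hxD j
  · intro i
    rcases i with _ | j
    · simp
    · simp only [if_neg (Nat.succ_ne_zero j), Nat.succ_sub_one]
      have := (hx1 j).1
      have hj : (0:ℝ) ≤ (j:ℝ) := Nat.cast_nonneg j
      push_cast at this ⊢
      nlinarith



variable {Ω : Type*} [MeasurableSpace Ω]

set_option maxHeartbeats 2000000 in
theorem core (P : Measure Ω) [IsProbabilityMeasure P]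
    {n : ℕ} (k : Fin n)
    (W : ℝ → Ω → ℝ) (hWmeas : ∀ c, Measurable (W c))
    (V : ℝ → Ω → (Fin n → ℝ)) (hVmeas : ∀ c, Measurable (V c)) (hVk : ∀ c ω, V c ω k = 0)
    (ν : Measure (Fin n → ℝ)) [IsProbabilityMeasure ν]
    (hν0 : ∀ j, j ≠ k → ν {v | v j = 0} = 0)
    (hνk : ∀ᵐ v ∂ν, v k = 0)
    (p : ℝ → ℝ) (hp : ∀ᶠ c in atTop, 0 < p c)
    (h1 : ∀ y : ℝ, Tendsto (fun c => (P {ω | y ≤ W c ω}).toReal / p c) atTop (𝓝 (Real.exp (-y))))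
    (h2 : ∀ (y : ℝ) (B : Set (Fin n → ℝ)), MeasurableSet B → ν (frontier B) = 0 →
      Tendsto (fun c => (P ({ω | y ≤ W c ω} ∩ (V c)⁻¹' B)).toReal / p c) atTop
        (𝓝 (Real.exp (-y) * (ν B).toReal)))
    (g : (Fin n → ℝ) → ℝ) (hgc : Continuous g)
    (hg : ∀ v : Fin n → ℝ, v k = 0 → (∀ j, j ≠ k → 0 ≤ v j) → 0 ≤ g v) :
    Tendsto (fun c => (P ({ω | g (V c ω) ≤ W c ω} ∩
        (V c)⁻¹' {v | ∀ j, j ≠ k → 0 ≤ v j})).toReal / p c)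
      atTop (𝓝 (∫ v in {v : Fin n → ℝ | ∀ j, j ≠ k → 0 ≤ v j}, Real.exp (-(g v)) ∂ν)) ∧
    Tendsto (fun c => (P ({ω | g (V c ω) ≤ W c ω} ∩
        (V c)⁻¹' {v | ∀ j, j ≠ k → 0 < v j})).toReal / p c)
      atTop (𝓝 (∫ v in {v : Fin n → ℝ | ∀ j, j ≠ k → 0 ≤ v j}, Real.exp (-(g v)) ∂ν)) := by
  set Mge : Set (Fin n → ℝ) := {v | ∀ j, j ≠ k → 0 ≤ v j} with hMge_def
  set Mgt : Set (Fin n → ℝ) := {v | ∀ j, j ≠ k → 0 < v j} with hMgt_def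
  have hMgeC : IsClosed Mge := by
    rw [hMge_def, setOf_forall]
    apply isClosed_iInter
    intro j
    by_cases h : j = k
    · simp [h]
    · have : {v : Fin n → ℝ | j ≠ k → 0 ≤ v j} = {v | 0 ≤ v j} := by ext v; simp [h]
      rw [this]
      exact isClosed_le continuous_const (continuous_apply j)
  have hMgtO : IsOpen Mgt := by
    rw [hMgt_def, setOf_forall]
    apply isOpen_iInter_of_finite
    intro j
    by_cases h : j = k
    · simp [h]
    · have : {v : Fin n → ℝ | j ≠ k → 0 < v j} = {v | 0 < v j} := by ext v; simp [h]
      rw [this]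
      exact isOpen_lt continuous_const (continuous_apply j)
  have hMgtge : Mgt ⊆ Mge := fun v hv j hj => (hv j hj).le
  have hgm : Measurable g := hgc.measurable
  have hdiff : ν (Mge \ Mgt) = 0 := by
    have hsub : Mge \ Mgt ⊆ ⋃ j, ⋃ (_ : j ≠ k), {v : Fin n → ℝ | v j = 0} := by
      rintro v ⟨hv1, hv2⟩
      simp only [hMgt_def, mem_setOf_eq, not_forall] at hv2
      obtain ⟨j, hj, hvj⟩ := hv2
      exact mem_iUnion.mpr ⟨j, mem_iUnion.mpr ⟨hj, le_antisymm (not_lt.mp hvj) (hv1 j hj)⟩⟩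
    exact measure_mono_null hsub (measure_iUnion_null fun j => measure_iUnion_null fun hj => hν0 j hj)
  set ρ : Measure (Fin n → ℝ) := ν.restrict Mge with hρ_def
  have haek : ∀ᵐ v ∂ρ, v k = 0 := ae_restrict_of_ae hνk
  have haeMge : ∀ᵐ v ∂ρ, v ∈ Mge := ae_restrict_mem hMgeC.measurableSet
  have haeg : ∀ᵐ v ∂ρ, 0 ≤ g v := by
    filter_upwards [haek, haeMge] with v h1' h2'
    exact hg v h1' h2'
  have hintg : Integrable (fun v => Real.exp (-(g v))) ρ := by
    refine (integrable_const (1:ℝ)).mono' ?_ ?_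
    · exact (Real.continuous_exp.comp (hgc.neg)).aestronglyMeasurable
    · filter_upwards [haeg] with v hv
      rw [Real.norm_eq_abs, abs_of_pos (Real.exp_pos _)]
      exact Real.exp_le_one_iff.mpr (by linarith)
  set J : ℝ := ∫ v, Real.exp (-(g v)) ∂ρ with hJ_def
  have hJ0 : 0 ≤ J := integral_nonneg fun v => (Real.exp_pos _).le
  have hruniv : (ρ univ).toReal ≤ 1 := by
    have h1' : ρ univ ≤ 1 := by
      rw [hρ_def, Measure.restrict_apply_univ]
      exact (measure_mono (subset_univ _)).trans_eq measure_univ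
    exact ENNReal.toReal_le_of_le_ofReal one_pos.le (by simpa using h1')
  have hJ1 : J ≤ 1 := by
    have h := integral_mono_ae hintg (integrable_const (1:ℝ)) (by
      filter_upwards [haeg] with v hv
      exact Real.exp_le_one_iff.mpr (by linarith))
    simp only [integral_const, smul_eq_mul, mul_one] at h
    exact h.trans hruniv
  set F : ℝ → ℝ := fun y => (ν ({v | g v ≤ y} ∩ Mge)).toReal with hF_def
  have hFind : ∀ y : ℝ, F y = ∫ v, (if g v ≤ y then (1:ℝ) else 0) ∂ρ := by
    intro y
    have hA : MeasurableSet {v : Fin n → ℝ | g v ≤ y} := measurableSet_le hgm measurable_const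
    have heq : (fun v => if g v ≤ y then (1:ℝ) else 0) =
        Set.indicator {v : Fin n → ℝ | g v ≤ y} (1 : (Fin n → ℝ) → ℝ) := by
      funext v
      simp [Set.indicator_apply, mem_setOf_eq]
    rw [heq, integral_indicator_one hA, hρ_def, measureReal_def, Measure.restrict_apply hA]
  have hMgeMgt : ∀ A : Set (Fin n → ℝ), ν (A ∩ Mgt) = ν (A ∩ Mge) := by
    intro A
    apply le_antisymm (measure_mono (inter_subset_inter_right A hMgtge))
    calc ν (A ∩ Mge) ≤ ν ((A ∩ Mgt) ∪ (Mge \ Mgt)) := by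
          apply measure_mono
          rintro v ⟨h1', h2'⟩
          by_cases hv : v ∈ Mgt
          · exact Or.inl ⟨h1', hv⟩
          · exact Or.inr ⟨h2', hv⟩
    _ ≤ ν (A ∩ Mgt) + ν (Mge \ Mgt) := measure_union_le _ _
    _ = ν (A ∩ Mgt) := by rw [hdiff, add_zero]
  have hDbad : {y : ℝ | 0 < ν {v | g v = y}}.Countable :=
    Measure.countable_meas_level_set_pos hgm
  set Dbad : Set ℝ := {y : ℝ | 0 < ν {v | g v = y}} with hDbad_def
  have hgood : ∀ y : ℝ, y ∉ Dbad →
      (MeasurableSet ({v | g v ≤ y} ∩ Mge) ∧ ν (frontier ({v | g v ≤ y} ∩ Mge)) = 0) ∧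
      (MeasurableSet ({v | g v < y} ∩ Mgt) ∧ ν (frontier ({v | g v < y} ∩ Mgt)) = 0 ∧
        (ν ({v | g v < y} ∩ Mgt)).toReal = F y) := by
    intro y hy
    have hzero : ν {v | g v = y} = 0 := by
      by_contra h
      exact hy (pos_iff_ne_zero.mpr h)
    have hBclosed : IsClosed ({v : Fin n → ℝ | g v ≤ y} ∩ Mge) :=
      (isClosed_le hgc continuous_const).inter hMgeC
    have hB'open : IsOpen ({v : Fin n → ℝ | g v < y} ∩ Mgt) :=
      (isOpen_lt hgc continuous_const).inter hMgtO
    have hOB : ({v : Fin n → ℝ | g v < y} ∩ Mgt) ⊆ ({v | g v ≤ y} ∩ Mge) :=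
      inter_subset_inter (fun v h => show g v ≤ y from le_of_lt h) hMgtge
    have hkey : (({v : Fin n → ℝ | g v ≤ y} ∩ Mge) \ ({v | g v < y} ∩ Mgt)) ⊆
        {v | g v = y} ∪ (Mge \ Mgt) := by
      rintro v ⟨⟨h1', h2'⟩, h3'⟩
      by_cases hgv : g v = y
      · exact Or.inl hgv
      · have hlt : g v < y := lt_of_le_of_ne h1' hgv
        have : v ∉ Mgt := fun hv => h3' ⟨hlt, hv⟩
        exact Or.inr ⟨h2', this⟩
    have hkey0 : ν ({v : Fin n → ℝ | g v = y} ∪ (Mge \ Mgt)) = 0 :=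
      measure_union_null hzero hdiff
    refine ⟨⟨hBclosed.measurableSet, ?_⟩, hB'open.measurableSet, ?_, ?_⟩
    · apply measure_mono_null _ hkey0
      refine subset_trans ?_ hkey
      rw [hBclosed.frontier_eq]
      exact diff_subset_diff_right (interior_maximal hOB hB'open)
    · apply measure_mono_null _ hkey0
      refine subset_trans ?_ hkey
      rw [hB'open.frontier_eq]
      exact diff_subset_diff_left (closure_minimal hOB hBclosed)
    · rw [hMgeMgt]
      congr 1
      apply le_antisymm
      · exact measure_mono (inter_subset_inter_left Mge (fun v h => show g v ≤ y from le_of_lt h))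
      · calc ν ({v | g v ≤ y} ∩ Mge) ≤ ν (({v | g v < y} ∩ Mge) ∪ {v | g v = y}) := by
              apply measure_mono
              rintro v ⟨h1', h2'⟩
              have h1'' : g v ≤ y := h1'
              rcases lt_or_eq_of_le h1'' with h | h
              · exact Or.inl ⟨h, h2'⟩
              · exact Or.inr h
        _ ≤ ν ({v | g v < y} ∩ Mge) + ν {v | g v = y} := measure_union_le _ _
        _ = ν ({v | g v < y} ∩ Mge) := by rw [hzero, add_zero]
  -- integrability of the indicator-type functions
  have hint_ite : ∀ y' : ℝ, Integrable (fun v => (if g v ≤ y' then (1:ℝ) else 0)) ρ := by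
    intro y'
    refine (integrable_const (1:ℝ)).mono' ?_ ?_
    · exact (Measurable.ite (measurableSet_le hgm measurable_const) measurable_const
        measurable_const).aestronglyMeasurable
    · filter_upwards with v
      split_ifs <;> simp
  have hint_ite' : ∀ y' : ℝ, Integrable (fun v => (if g v < y' then (1:ℝ) else 0)) ρ := by
    intro y'
    refine (integrable_const (1:ℝ)).mono' ?_ ?_
    · exact (Measurable.ite (measurableSet_lt hgm measurable_const) measurable_const
        measurable_const).aestronglyMeasurable
    · filter_upwards with v
      split_ifs <;> simp
  have hEmeas : ∀ (c : ℝ) (y' : ℝ), MeasurableSet {ω | y' ≤ W c ω} := fun c y' =>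
    measurableSet_le measurable_const (hWmeas c)
  -- UPPER CLAIM
  have claim_upper : ∀ δ : ℝ, 0 < δ → ∀ᶠ c in atTop,
      (P ({ω | g (V c ω) ≤ W c ω} ∩ (V c)⁻¹' Mge)).toReal / p c ≤ J + δ := by
    intro δ hδ
    set m : ℝ := Real.log (1 + δ/2) with hm_def
    have hm : 0 < m := Real.log_pos (by linarith)
    have hem : Real.exp m = 1 + δ/2 := Real.exp_log (by linarith)
    obtain ⟨y, hy0, hymono, hygap, hy1, hyD, hylb⟩ := exists_grid Dbad hDbad m hm
    have hyt : Tendsto y atTop atTop := by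
      apply tendsto_atTop_mono hylb
      have h' : Tendsto (fun i : ℕ => (i:ℝ) * (m/4)) atTop atTop :=
        Tendsto.atTop_mul_const (by positivity) tendsto_natCast_atTop_atTop
      exact h'.congr (fun i => by ring)
    obtain ⟨N, hN⟩ : ∃ N : ℕ, Real.exp (-(y N)) ≤ δ/4 := by
      have h' : Tendsto (fun N => Real.exp (-(y N))) atTop (𝓝 0) :=
        Real.tendsto_exp_neg_atTop_nhds_zero.comp hyt
      exact ((h'.eventually_lt_const (show (0:ℝ) < δ/4 by linarith)).mono
        (fun N hN => hN.le)).exists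
    set B : ℕ → Set (Fin n → ℝ) := fun i => {v | g v ≤ y i} ∩ Mge with hB_def
    have hBgood : ∀ i : ℕ, MeasurableSet (B (i+1)) ∧ ν (frontier (B (i+1))) = 0 := fun i =>
      (hgood (y (i+1)) (hyD (i+1) (by omega))).1
    -- limits of layer terms
    have hab : ∀ i : ℕ, Tendsto (fun c =>
        ((P ({ω | y i ≤ W c ω} ∩ (V c)⁻¹' B (i+1))).toReal
          - (P ({ω | y (i+1) ≤ W c ω} ∩ (V c)⁻¹' B (i+1))).toReal) / p c) atTop
        (𝓝 ((Real.exp (-(y i)) - Real.exp (-(y (i+1)))) * F (y (i+1)))) := by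
      intro i
      have t1 := h2 (y i) (B (i+1)) (hBgood i).1 (hBgood i).2
      have t2 := h2 (y (i+1)) (B (i+1)) (hBgood i).1 (hBgood i).2
      have heq : (Real.exp (-(y i)) - Real.exp (-(y (i+1)))) * F (y (i+1)) =
          Real.exp (-(y i)) * (ν (B (i+1))).toReal
            - Real.exp (-(y (i+1))) * (ν (B (i+1))).toReal := by
        rw [sub_mul]
      rw [heq]
      exact Tendsto.congr (fun c => (sub_div _ _ _).symm) (t1.sub t2)
    have htail := h1 (y N)
    set R : ℝ := (∑ i ∈ Finset.range N,
        (Real.exp (-(y i)) - Real.exp (-(y (i+1)))) * F (y (i+1))) + Real.exp (-(y N)) with hR_def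
    have hsumT : Tendsto (fun c => (∑ i ∈ Finset.range N,
        ((P ({ω | y i ≤ W c ω} ∩ (V c)⁻¹' B (i+1))).toReal
          - (P ({ω | y (i+1) ≤ W c ω} ∩ (V c)⁻¹' B (i+1))).toReal) / p c)
          + (P {ω | y N ≤ W c ω}).toReal / p c) atTop (𝓝 R) :=
      (tendsto_finset_sum _ (fun i _ => hab i)).add htail
    -- R is small
    have hRle : R ≤ J + 3*δ/4 := by
      have hsum_int : ∀ i : ℕ, (Real.exp (-(y i)) - Real.exp (-(y (i+1)))) * F (y (i+1)) =
          ∫ v, (Real.exp (-(y i)) - Real.exp (-(y (i+1)))) *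
            (if g v ≤ y (i+1) then (1:ℝ) else 0) ∂ρ := by
        intro i
        rw [integral_const_mul, ← hFind]
      have hSig : (∑ i ∈ Finset.range N,
          (Real.exp (-(y i)) - Real.exp (-(y (i+1)))) * F (y (i+1))) ≤ Real.exp m * J := by
        calc (∑ i ∈ Finset.range N,
            (Real.exp (-(y i)) - Real.exp (-(y (i+1)))) * F (y (i+1)))
            = ∫ v, ∑ i ∈ Finset.range N, (Real.exp (-(y i)) - Real.exp (-(y (i+1)))) *
              (if g v ≤ y (i+1) then (1:ℝ) else 0) ∂ρ := by
              rw [integral_finset_sum _ (fun i _ => (hint_ite (y (i+1))).const_mul _)]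
              exact Finset.sum_congr rfl (fun i _ => hsum_int i)
        _ ≤ ∫ v, Real.exp m * Real.exp (-(g v)) ∂ρ := by
              apply integral_mono_ae
                (integrable_finset_sum _ (fun i _ => (hint_ite (y (i+1))).const_mul _))
                (hintg.const_mul _)
              filter_upwards [haeg] with v hv
              exact tele_upper m (g v) hv hm.le y hy0 hymono hygap N
        _ = Real.exp m * J := by rw [integral_const_mul]
      have : Real.exp m * J ≤ J + δ/2 := by
        rw [hem]
        nlinarith
      rw [hR_def]
      linarith
    have hfinal := hsumT.eventually_lt_const (show R < R + δ/4 by linarith)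
    filter_upwards [hp, hfinal] with c hpc hc
    -- measure bound
    set D : ℕ → Set Ω := fun i => ({ω | y i ≤ W c ω} ∩ (V c)⁻¹' B (i+1)) \
      ({ω | y (i+1) ≤ W c ω} ∩ (V c)⁻¹' B (i+1)) with hD_def
    have hsubset : ({ω | g (V c ω) ≤ W c ω} ∩ (V c)⁻¹' Mge) ⊆
        (⋃ i ∈ Finset.range N, D i) ∪ {ω | y N ≤ W c ω} := by
      rintro ω ⟨hω1, hω2⟩
      have hω1' : g (V c ω) ≤ W c ω := hω1
      have hg0 : 0 ≤ g (V c ω) := hg _ (hVk c ω) hω2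
      have hW0 : y 0 ≤ W c ω := by rw [hy0]; linarith
      by_cases hWN : y N ≤ W c ω
      · exact Or.inr hWN
      · obtain ⟨i, hiN, hi1, hi2⟩ := exists_layer y (W c ω) N hW0 hWN
        refine Or.inl (mem_biUnion (Finset.mem_range.mpr hiN) ?_)
        constructor
        · exact ⟨hi1, ⟨le_of_lt (lt_of_le_of_lt hω1' hi2), hω2⟩⟩
        · rintro ⟨hcon, -⟩
          exact absurd hi2 (not_lt.mpr hcon)
    have hDsub : ∀ i : ℕ, ({ω | y (i+1) ≤ W c ω} ∩ (V c)⁻¹' B (i+1)) ⊆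
        ({ω | y i ≤ W c ω} ∩ (V c)⁻¹' B (i+1)) :=
      fun i => inter_subset_inter_left _
        (fun ω h => le_trans (hymono (Nat.le_succ i)) h)
    have hPD : ∀ i : ℕ, (P (D i)).toReal =
        (P ({ω | y i ≤ W c ω} ∩ (V c)⁻¹' B (i+1))).toReal
          - (P ({ω | y (i+1) ≤ W c ω} ∩ (V c)⁻¹' B (i+1))).toReal := by
      intro i
      rw [hD_def]
      rw [measure_diff (hDsub i) (((hEmeas c (y (i+1))).inter
        (hVmeas c (hBgood i).1)).nullMeasurableSet) (measure_ne_top P _)]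
      exact ENNReal.toReal_sub_of_le (measure_mono (hDsub i)) (measure_ne_top P _)
    have hPU : (P ({ω | g (V c ω) ≤ W c ω} ∩ (V c)⁻¹' Mge)).toReal ≤
        (∑ i ∈ Finset.range N, (P (D i)).toReal) + (P {ω | y N ≤ W c ω}).toReal := by
      have h1' : P ({ω | g (V c ω) ≤ W c ω} ∩ (V c)⁻¹' Mge) ≤
          (∑ i ∈ Finset.range N, P (D i)) + P {ω | y N ≤ W c ω} := by
        calc P ({ω | g (V c ω) ≤ W c ω} ∩ (V c)⁻¹' Mge)
            ≤ P ((⋃ i ∈ Finset.range N, D i) ∪ {ω | y N ≤ W c ω}) := measure_mono hsubset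
        _ ≤ P (⋃ i ∈ Finset.range N, D i) + P {ω | y N ≤ W c ω} := measure_union_le _ _
        _ ≤ (∑ i ∈ Finset.range N, P (D i)) + P {ω | y N ≤ W c ω} :=
            add_le_add_left (measure_biUnion_finset_le _ _) _
      have hne : (∑ i ∈ Finset.range N, P (D i)) + P {ω | y N ≤ W c ω} ≠ ⊤ :=
        ENNReal.add_ne_top.mpr ⟨ENNReal.sum_ne_top.mpr (fun i _ => measure_ne_top P _),
          measure_ne_top P _⟩
      calc (P ({ω | g (V c ω) ≤ W c ω} ∩ (V c)⁻¹' Mge)).toReal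
          ≤ ((∑ i ∈ Finset.range N, P (D i)) + P {ω | y N ≤ W c ω}).toReal :=
            ENNReal.toReal_mono hne h1'
      _ = (∑ i ∈ Finset.range N, (P (D i)).toReal) + (P {ω | y N ≤ W c ω}).toReal := by
            rw [ENNReal.toReal_add (ENNReal.sum_ne_top.mpr (fun i _ => measure_ne_top P _))
              (measure_ne_top P _), ENNReal.toReal_sum (fun i _ => measure_ne_top P _)]
    calc (P ({ω | g (V c ω) ≤ W c ω} ∩ (V c)⁻¹' Mge)).toReal / p c
        ≤ ((∑ i ∈ Finset.range N, (P (D i)).toReal) + (P {ω | y N ≤ W c ω}).toReal) / p c :=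
          by gcongr
    _ = (∑ i ∈ Finset.range N,
          ((P ({ω | y i ≤ W c ω} ∩ (V c)⁻¹' B (i+1))).toReal
            - (P ({ω | y (i+1) ≤ W c ω} ∩ (V c)⁻¹' B (i+1))).toReal) / p c)
          + (P {ω | y N ≤ W c ω}).toReal / p c := by
          rw [add_div, Finset.sum_div]
          congr 1
          exact Finset.sum_congr rfl (fun i _ => by rw [hPD i])
    _ ≤ R + δ/4 := hc.le
    _ ≤ J + δ := by linarith
  -- LOWER CLAIM
  have claim_lower : ∀ δ : ℝ, 0 < δ → ∀ᶠ c in atTop,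
      J - δ ≤ (P ({ω | g (V c ω) ≤ W c ω} ∩ (V c)⁻¹' Mgt)).toReal / p c := by
    intro δ hδ
    set m : ℝ := δ/4 with hm_def
    have hm : 0 < m := by linarith
    obtain ⟨y, hy0, hymono, hygap, hy1, hyD, hylb⟩ := exists_grid Dbad hDbad m hm
    have hyt : Tendsto y atTop atTop := by
      apply tendsto_atTop_mono hylb
      have h' : Tendsto (fun i : ℕ => (i:ℝ) * (m/4)) atTop atTop :=
        Tendsto.atTop_mul_const (by positivity) tendsto_natCast_atTop_atTop
      exact h'.congr (fun i => by ring)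
    obtain ⟨N, hN⟩ : ∃ N : ℕ, Real.exp (-(y (N+1))) ≤ δ/4 := by
      have h' : Tendsto (fun N => Real.exp (-(y N))) atTop (𝓝 0) :=
        Real.tendsto_exp_neg_atTop_nhds_zero.comp hyt
      obtain ⟨N', hN'⟩ := ((h'.eventually_lt_const (show (0:ℝ) < δ/4 by linarith)).mono
        (fun N hN => hN.le)).exists
      exact ⟨N', le_trans (Real.exp_le_exp.mpr (by
        simpa using hymono (Nat.le_succ N'))) hN'⟩
    set B' : ℕ → Set (Fin n → ℝ) := fun i => {v | g v < y i} ∩ Mgt with hB'_def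
    have hB'good : ∀ i : ℕ, MeasurableSet (B' (i+1)) ∧ ν (frontier (B' (i+1))) = 0 ∧
        (ν (B' (i+1))).toReal = F (y (i+1)) := fun i =>
      (hgood (y (i+1)) (hyD (i+1) (by omega))).2
    have hab : ∀ i : ℕ, Tendsto (fun c =>
        ((P ({ω | y (i+1) ≤ W c ω} ∩ (V c)⁻¹' B' (i+1))).toReal
          - (P ({ω | y (i+2) ≤ W c ω} ∩ (V c)⁻¹' B' (i+1))).toReal) / p c) atTop
        (𝓝 ((Real.exp (-(y (i+1))) - Real.exp (-(y (i+2)))) * F (y (i+1)))) := by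
      intro i
      have t1 := h2 (y (i+1)) (B' (i+1)) (hB'good i).1 (hB'good i).2.1
      have t2 := h2 (y (i+2)) (B' (i+1)) (hB'good i).1 (hB'good i).2.1
      have heq : (Real.exp (-(y (i+1))) - Real.exp (-(y (i+2)))) * F (y (i+1)) =
          Real.exp (-(y (i+1))) * (ν (B' (i+1))).toReal
            - Real.exp (-(y (i+2))) * (ν (B' (i+1))).toReal := by
        rw [sub_mul, (hB'good i).2.2]
      rw [heq]
      exact Tendsto.congr (fun c => (sub_div _ _ _).symm) (t1.sub t2)
    set L : ℝ := ∑ i ∈ Finset.range N,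
        (Real.exp (-(y (i+1))) - Real.exp (-(y (i+2)))) * F (y (i+1)) with hL_def
    have hsumT : Tendsto (fun c => ∑ i ∈ Finset.range N,
        ((P ({ω | y (i+1) ≤ W c ω} ∩ (V c)⁻¹' B' (i+1))).toReal
          - (P ({ω | y (i+2) ≤ W c ω} ∩ (V c)⁻¹' B' (i+1))).toReal) / p c) atTop (𝓝 L) :=
      tendsto_finset_sum _ (fun i _ => hab i)
    have hLge : J - δ/2 ≤ L := by
      have hterm : ∀ i : ℕ, (Real.exp (-(y (i+1))) - Real.exp (-(y (i+2)))) * F (y (i+1)) =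
          ∫ v, (Real.exp (-(y (i+1))) - Real.exp (-(y (i+2)))) *
            (if g v ≤ y (i+1) then (1:ℝ) else 0) ∂ρ := by
        intro i
        rw [integral_const_mul, ← hFind]
      have hc_nonneg : ∀ i : ℕ, 0 ≤ Real.exp (-(y (i+1))) - Real.exp (-(y (i+2))) := by
        intro i
        have h' : Real.exp (-(y (i+2))) ≤ Real.exp (-(y (i+1))) :=
          Real.exp_le_exp.mpr (by simpa using hymono (Nat.le_succ (i+1)))
        linarith
      have step1 : ∫ v, ∑ i ∈ Finset.range N, (Real.exp (-(y (i+1))) - Real.exp (-(y (i+2)))) *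
            (if g v < y (i+1) then (1:ℝ) else 0) ∂ρ ≤ L := by
        rw [hL_def]
        rw [integral_finset_sum _ (fun i _ => (hint_ite' (y (i+1))).const_mul _)]
        apply Finset.sum_le_sum
        intro i _
        rw [integral_const_mul, hterm i, integral_const_mul]
        apply mul_le_mul_of_nonneg_left _ (hc_nonneg i)
        apply integral_mono_ae (hint_ite' (y (i+1))) (hint_ite (y (i+1)))
        filter_upwards with v
        split_ifs with h1' h2'
        · exact le_refl (1:ℝ)
        · exact absurd (le_of_lt h1') h2'
        · exact zero_le_one
        · exact le_refl (0:ℝ)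
      have step2 : Real.exp (-m) * J - Real.exp (-(y (N+1))) ≤
          ∫ v, ∑ i ∈ Finset.range N, (Real.exp (-(y (i+1))) - Real.exp (-(y (i+2)))) *
            (if g v < y (i+1) then (1:ℝ) else 0) ∂ρ := by
        have hint_lhs : Integrable (fun v => Real.exp (-m) * Real.exp (-(g v))
            - Real.exp (-(y (N+1)))) ρ := (hintg.const_mul _).sub (integrable_const _)
        have hmono' : ∫ v, (Real.exp (-m) * Real.exp (-(g v)) - Real.exp (-(y (N+1)))) ∂ρ ≤
            ∫ v, ∑ i ∈ Finset.range N, (Real.exp (-(y (i+1))) - Real.exp (-(y (i+2)))) *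
              (if g v < y (i+1) then (1:ℝ) else 0) ∂ρ := by
          apply integral_mono_ae hint_lhs
            (integrable_finset_sum _ (fun i _ => (hint_ite' (y (i+1))).const_mul _))
          filter_upwards [haeg] with v hv
          exact tele_lower m (g v) hv hm.le y hymono hy1 hygap N
        refine le_trans ?_ hmono'
        rw [integral_sub (hintg.const_mul _) (integrable_const _), integral_const_mul,
          integral_const, smul_eq_mul, measureReal_def]
        have h1' : Real.exp (-(y (N+1))) * ((ρ univ).toReal) ≤ Real.exp (-(y (N+1))) := by
          nlinarith [Real.exp_pos (-(y (N+1))), ENNReal.toReal_nonneg (a := ρ univ)]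
        have h2' : (0:ℝ) ≤ (ρ univ).toReal := ENNReal.toReal_nonneg
        nlinarith [Real.exp_pos (-(y (N+1)))]
      have hJm : J - δ/4 ≤ Real.exp (-m) * J := by
        have h1' : 1 - m ≤ Real.exp (-m) := by
          have h2' := Real.add_one_le_exp (-m)
          linarith
        nlinarith
      linarith [hN]
    have hfinal := hsumT.eventually_const_lt (show L - δ/4 < L by linarith)
    filter_upwards [hp, hfinal] with c hpc hc
    set D : ℕ → Set Ω := fun i => ({ω | y (i+1) ≤ W c ω} ∩ (V c)⁻¹' B' (i+1)) \
      ({ω | y (i+2) ≤ W c ω} ∩ (V c)⁻¹' B' (i+1)) with hD_def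
    have hDmeas : ∀ i : ℕ, MeasurableSet (D i) := by
      intro i
      exact (((hEmeas c (y (i+1))).inter (hVmeas c (hB'good i).1)).diff
        ((hEmeas c (y (i+2))).inter (hVmeas c (hB'good i).1)))
    have hdisj : (↑(Finset.range N) : Set ℕ).PairwiseDisjoint D := by
      have key : ∀ i j : ℕ, i < j → Disjoint (D i) (D j) := by
        intro i j hij
        rw [Set.disjoint_left]
        rintro ω ⟨⟨-, hB⟩, hω2⟩ ⟨⟨hω3, -⟩, -⟩
        exact hω2 ⟨le_trans (hymono (by omega : i+2 ≤ j+1)) hω3, hB⟩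
      intro i hi j hj hij
      rcases hij.lt_or_gt with h | h
      · exact key i j h
      · exact (key j i h).symm
    have hsub_all : (⋃ i ∈ Finset.range N, D i) ⊆
        ({ω | g (V c ω) ≤ W c ω} ∩ (V c)⁻¹' Mgt) := by
      intro ω hω
      simp only [mem_iUnion] at hω
      obtain ⟨i, -, hωi⟩ := hω
      obtain ⟨⟨h1', hB⟩, -⟩ := hωi
      have hBv : g (V c ω) < y (i+1) := hB.1
      have h1'' : y (i+1) ≤ W c ω := h1'
      exact ⟨le_of_lt (lt_of_lt_of_le hBv h1''), hB.2⟩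
    have hDsub : ∀ i : ℕ, ({ω | y (i+2) ≤ W c ω} ∩ (V c)⁻¹' B' (i+1)) ⊆
        ({ω | y (i+1) ≤ W c ω} ∩ (V c)⁻¹' B' (i+1)) :=
      fun i => inter_subset_inter_left _ (fun ω h => le_trans (hymono (Nat.le_succ (i+1))) h)
    have hPD : ∀ i : ℕ, (P (D i)).toReal =
        (P ({ω | y (i+1) ≤ W c ω} ∩ (V c)⁻¹' B' (i+1))).toReal
          - (P ({ω | y (i+2) ≤ W c ω} ∩ (V c)⁻¹' B' (i+1))).toReal := by
      intro i
      rw [hD_def]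
      rw [measure_diff (hDsub i) (((hEmeas c (y (i+2))).inter
        (hVmeas c (hB'good i).1)).nullMeasurableSet) (measure_ne_top P _)]
      exact ENNReal.toReal_sub_of_le (measure_mono (hDsub i)) (measure_ne_top P _)
    have hchain : ∑ i ∈ Finset.range N, (P (D i)).toReal ≤
        (P ({ω | g (V c ω) ≤ W c ω} ∩ (V c)⁻¹' Mgt)).toReal := by
      rw [← ENNReal.toReal_sum (fun i _ => measure_ne_top P _)]
      apply ENNReal.toReal_mono (measure_ne_top P _)
      rw [← measure_biUnion_finset hdisj (fun i _ => hDmeas i)]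
      exact measure_mono hsub_all
    have final : J - δ < (P ({ω | g (V c ω) ≤ W c ω} ∩ (V c)⁻¹' Mgt)).toReal / p c := by
      calc J - δ ≤ L - δ/4 := by linarith
      _ < ∑ i ∈ Finset.range N,
          ((P ({ω | y (i+1) ≤ W c ω} ∩ (V c)⁻¹' B' (i+1))).toReal
            - (P ({ω | y (i+2) ≤ W c ω} ∩ (V c)⁻¹' B' (i+1))).toReal) / p c := hc
      _ = (∑ i ∈ Finset.range N, (P (D i)).toReal) / p c := by
          rw [Finset.sum_div]
          exact (Finset.sum_congr rfl (fun i _ => by rw [hPD i])).symm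
      _ ≤ (P ({ω | g (V c ω) ≤ W c ω} ∩ (V c)⁻¹' Mgt)).toReal / p c := by gcongr
    exact final.le
  have hmono_event : ∀ᶠ c in atTop,
      (P ({ω | g (V c ω) ≤ W c ω} ∩ (V c)⁻¹' Mgt)).toReal / p c ≤
      (P ({ω | g (V c ω) ≤ W c ω} ∩ (V c)⁻¹' Mge)).toReal / p c := by
    filter_upwards [hp] with c hpc
    have hle : (P ({ω | g (V c ω) ≤ W c ω} ∩ (V c)⁻¹' Mgt)).toReal ≤
        (P ({ω | g (V c ω) ≤ W c ω} ∩ (V c)⁻¹' Mge)).toReal :=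
      ENNReal.toReal_mono (measure_ne_top P _)
        (measure_mono (inter_subset_inter_right _ (preimage_mono hMgtge)))
    exact (div_le_div_iff_of_pos_right hpc).mpr hle
  constructor
  · rw [tendsto_order]
    constructor
    · intro a ha
      have hδ : 0 < (J - a)/2 := by linarith
      filter_upwards [claim_lower _ hδ, hmono_event] with c h1' h2'
      calc a < J - (J - a)/2 := by linarith
      _ ≤ (P ({ω | g (V c ω) ≤ W c ω} ∩ (V c)⁻¹' Mgt)).toReal / p c := h1'
      _ ≤ _ := h2'
    · intro a ha
      have hδ : 0 < (a - J)/2 := by linarith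
      filter_upwards [claim_upper _ hδ] with c h1'
      calc (P ({ω | g (V c ω) ≤ W c ω} ∩ (V c)⁻¹' Mge)).toReal / p c
          ≤ J + (a - J)/2 := h1'
      _ < a := by linarith
  · rw [tendsto_order]
    constructor
    · intro a ha
      have hδ : 0 < (J - a)/2 := by linarith
      filter_upwards [claim_lower _ hδ] with c h1'
      calc a < J - (J - a)/2 := by linarith
      _ ≤ _ := h1'
    · intro a ha
      have hδ : 0 < (a - J)/2 := by linarith
      filter_upwards [claim_upper _ hδ, hmono_event] with c h1' h2'
      calc (P ({ω | g (V c ω) ≤ W c ω} ∩ (V c)⁻¹' Mgt)).toReal / p c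
          ≤ (P ({ω | g (V c ω) ≤ W c ω} ∩ (V c)⁻¹' Mge)).toReal / p c := h2'
      _ ≤ J + (a - J)/2 := h1'
      _ < a := by linarith



variable {Ω : Type*} [MeasurableSpace Ω]

lemma instantiate (P : Measure Ω) [IsProbabilityMeasure P]
    {n : ℕ} (S : ℝ → Fin n → Ω → ℝ) (hSmeas : ∀ c k, Measurable (S c k))
    (K : ℝ) (hK : 0 < K) (Y : Fin n → Fin n → Ω → ℝ) (hYmeas : ∀ k j, Measurable (Y k j))
    (k : Fin n)
    (hA1 : ∀ (y : ℝ),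
      Tendsto (fun c : ℝ =>
          (P {ω | c + y ≤ S c k ω}).toReal / (K * c ^ (-(1 : ℝ) / 2) * Real.exp (-c - y)))
        atTop (𝓝 1))
    (hA2 : ∀ (y : ℝ) (f : BoundedContinuousFunction (Fin n → ℝ) ℝ),
      Tendsto (fun c : ℝ =>
          ∫ v, f v ∂(Measure.map (fun ω => fun j => S c k ω - S c j ω)
            (ProbabilityTheory.cond P {ω | c + y ≤ S c k ω})))
        atTop (𝓝 (∫ ω, f (fun j => Y k j ω) ∂P))) :
    (∀ y : ℝ, Tendsto (fun c =>
        (P {ω | y ≤ S c k ω - c}).toReal / (K * c ^ (-(1:ℝ)/2) * Real.exp (-c)))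
      atTop (𝓝 (Real.exp (-y)))) ∧
    (∀ (y : ℝ) (B : Set (Fin n → ℝ)), MeasurableSet B →
      (P.map (fun ω (j : Fin n) => Y k j ω)) (frontier B) = 0 →
      Tendsto (fun c =>
          (P ({ω | y ≤ S c k ω - c} ∩ (fun ω (j : Fin n) => S c k ω - S c j ω)⁻¹' B)).toReal
            / (K * c ^ (-(1:ℝ)/2) * Real.exp (-c)))
        atTop (𝓝 (Real.exp (-y) * ((P.map (fun ω (j : Fin n) => Y k j ω)) B).toReal))) := by
  have hEset : ∀ (c y : ℝ), {ω | y ≤ S c k ω - c} = {ω | c + y ≤ S c k ω} := by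
    intro c y
    ext ω
    simp only [mem_setOf_eq]
    constructor <;> intro h <;> linarith
  have hEmeas : ∀ (c y : ℝ), MeasurableSet {ω | c + y ≤ S c k ω} := by
    intro c y
    exact measurableSet_le measurable_const (hSmeas c k)
  have hVmeas : ∀ c : ℝ, Measurable (fun ω (j : Fin n) => S c k ω - S c j ω) := by
    intro c
    exact measurable_pi_lambda _ (fun j => (hSmeas c k).sub (hSmeas c j))
  have hTmeas : Measurable (fun ω (j : Fin n) => Y k j ω) :=
    measurable_pi_lambda _ (fun j => hYmeas k j)
  haveI : IsProbabilityMeasure (P.map (fun ω (j : Fin n) => Y k j ω)) :=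
    Measure.isProbabilityMeasure_map hTmeas.aemeasurable
  -- part 1
  have part1 : ∀ y : ℝ, Tendsto (fun c =>
      (P {ω | y ≤ S c k ω - c}).toReal / (K * c ^ (-(1:ℝ)/2) * Real.exp (-c)))
      atTop (𝓝 (Real.exp (-y))) := by
    intro y
    have h := (hA1 y).mul_const (Real.exp (-y))
    rw [one_mul] at h
    apply h.congr
    intro c
    rw [hEset c y]
    have hexp : Real.exp (-c - y) = Real.exp (-c) * Real.exp (-y) := by
      rw [← Real.exp_add]; ring_nf
    rw [hexp, div_mul_eq_mul_div]
    rw [show K * c ^ (-(1:ℝ)/2) * (Real.exp (-c) * Real.exp (-y)) =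
      (K * c ^ (-(1:ℝ)/2) * Real.exp (-c)) * Real.exp (-y) from by ring]
    rw [mul_div_mul_right _ _ (Real.exp_ne_zero (-y))]
  refine ⟨part1, ?_⟩
  intro y B hB hfrB
  -- eventually P E ≠ 0
  have hpden : ∀ᶠ c : ℝ in atTop, 0 < K * c ^ (-(1:ℝ)/2) * Real.exp (-c) := by
    filter_upwards [eventually_gt_atTop (0:ℝ)] with c hc
    have h1 : (0:ℝ) < c ^ (-(1:ℝ)/2) := Real.rpow_pos_of_pos hc _
    positivity
  have hPE : ∀ᶠ c : ℝ in atTop, P {ω | c + y ≤ S c k ω} ≠ 0 := by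
    have h := part1 y
    have hpos := h.eventually_const_lt (show (0:ℝ) < Real.exp (-y) from Real.exp_pos _)
    filter_upwards [hpos, hpden] with c hc hpc
    intro h0
    rw [hEset c y, h0] at hc
    simp only [ENNReal.toReal_zero, zero_div] at hc
    exact absurd hc (lt_irrefl 0)
  set T : Ω → (Fin n → ℝ) := fun ω j => Y k j ω with hT_def
  set ν : Measure (Fin n → ℝ) := P.map T with hν_def
  haveI hνP : IsProbabilityMeasure ν := Measure.isProbabilityMeasure_map hTmeas.aemeasurable
  set νP : ProbabilityMeasure (Fin n → ℝ) := ⟨ν, hνP⟩ with hνP_def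
  have hμhat : ∀ c : ℝ, P {ω | c + y ≤ S c k ω} ≠ 0 →
      IsProbabilityMeasure (Measure.map (fun ω (j : Fin n) => S c k ω - S c j ω)
        (P[|{ω | c + y ≤ S c k ω}])) := by
    intro c hc
    haveI := cond_isProbabilityMeasure (μ := P) (s := {ω | c + y ≤ S c k ω}) hc
    exact Measure.isProbabilityMeasure_map (hVmeas c).aemeasurable
  classical
  set μhat : ℝ → ProbabilityMeasure (Fin n → ℝ) := fun c =>
    if h : P {ω | c + y ≤ S c k ω} = 0 then νP
    else ⟨Measure.map (fun ω (j : Fin n) => S c k ω - S c j ω)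
      (P[|{ω | c + y ≤ S c k ω}]), hμhat c h⟩ with hμhat_def
  have hweak : Tendsto μhat atTop (𝓝 νP) := by
    rw [ProbabilityMeasure.tendsto_iff_forall_integral_tendsto]
    intro f
    have hR : ∫ x, f x ∂(νP : Measure (Fin n → ℝ)) = ∫ ω, f (fun j => Y k j ω) ∂P := by
      have : (νP : Measure (Fin n → ℝ)) = ν := rfl
      rw [this, hν_def]
      exact integral_map hTmeas.aemeasurable f.continuous.measurable.aestronglyMeasurable
    rw [hR]
    apply (hA2 y f).congr'
    filter_upwards [hPE] with c hc
    have : μhat c = ⟨Measure.map (fun ω (j : Fin n) => S c k ω - S c j ω)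
        (P[|{ω | c + y ≤ S c k ω}]), hμhat c hc⟩ := dif_neg hc
    rw [this]
    rfl
  have hfrB' : (νP : Measure (Fin n → ℝ)) (frontier B) = 0 := hfrB
  have key := ProbabilityMeasure.tendsto_measure_of_null_frontier_of_tendsto' hweak hfrB'
  have keyR : Tendsto (fun c => (((μhat c : Measure (Fin n → ℝ))) B).toReal) atTop
      (𝓝 ((ν B).toReal)) := by
    exact (ENNReal.tendsto_toReal (measure_ne_top ν B)).comp key
  have main := (part1 y).mul keyR
  rw [show Real.exp (-y) * (ν B).toReal = Real.exp (-y) * ((P.map (fun ω (j : Fin n) =>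
    Y k j ω)) B).toReal from rfl] at main
  apply main.congr'
  filter_upwards [hPE] with c hc
  have hbranch : μhat c = ⟨Measure.map (fun ω (j : Fin n) => S c k ω - S c j ω)
      (P[|{ω | c + y ≤ S c k ω}]), hμhat c hc⟩ := dif_neg hc
  have happly : ((μhat c : Measure (Fin n → ℝ))) B =
      (P {ω | c + y ≤ S c k ω})⁻¹ * P ({ω | c + y ≤ S c k ω} ∩
        (fun ω (j : Fin n) => S c k ω - S c j ω)⁻¹' B) := by
    rw [hbranch]
    show (Measure.map (fun ω (j : Fin n) => S c k ω - S c j ω)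
      (P[|{ω | c + y ≤ S c k ω}])) B = _
    rw [Measure.map_apply (hVmeas c) hB, cond_apply (hEmeas c y) P]
  have ha : (P {ω | c + y ≤ S c k ω}).toReal ≠ 0 :=
    ENNReal.toReal_ne_zero.mpr ⟨hc, measure_ne_top P _⟩
  rw [happly, hEset c y, ENNReal.toReal_mul, ENNReal.toReal_inv]
  rw [div_mul_eq_mul_div]
  congr 1
  rw [← mul_assoc, mul_inv_cancel₀ ha, one_mul]




lemma isClosed_Mge {n : ℕ} (k : Fin n) : IsClosed {v : Fin n → ℝ | ∀ j, j ≠ k → 0 ≤ v j} := by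
  rw [setOf_forall]
  apply isClosed_iInter
  intro j
  by_cases h : j = k
  · simp [h]
  · have : {v : Fin n → ℝ | j ≠ k → 0 ≤ v j} = {v | 0 ≤ v j} := by ext v; simp [h]
    rw [this]
    exact isClosed_le continuous_const (continuous_apply j)

lemma isOpen_Mgt {n : ℕ} (k : Fin n) : IsOpen {v : Fin n → ℝ | ∀ j, j ≠ k → 0 < v j} := by
  rw [setOf_forall]
  apply isOpen_iInter_of_finite
  intro j
  by_cases h : j = k
  · simp [h]
  · have : {v : Fin n → ℝ | j ≠ k → 0 < v j} = {v | 0 < v j} := by ext v; simp [h]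
    rw [this]
    exact isOpen_lt continuous_const (continuous_apply j)


lemma sum_measure_le {Ω : Type*} [MeasurableSpace Ω] (P : Measure Ω) [IsProbabilityMeasure P]
    {n : ℕ} (A : Set Ω) (D : Fin n → Set Ω) (hD : ∀ k, MeasurableSet (D k))
    (hsub : ∀ k, D k ⊆ A) (hdisj : ∀ k l, k ≠ l → Disjoint (D k) (D l)) :
    ∑ k, (P (D k)).toReal ≤ (P A).toReal := by
  rw [← ENNReal.toReal_sum (fun k _ => measure_ne_top P _)]
  apply ENNReal.toReal_mono (measure_ne_top P A)
  rw [← measure_biUnion_finset (fun k _ l _ hkl => hdisj k l hkl) (fun k _ => hD k)]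
  exact measure_mono (iUnion₂_subset (fun k _ => hsub k))

lemma measure_le_sum {Ω : Type*} [MeasurableSpace Ω] (P : Measure Ω) [IsProbabilityMeasure P]
    {n : ℕ} (A : Set Ω) (D : Fin n → Set Ω)
    (hcover : A ⊆ ⋃ k, D k) : (P A).toReal ≤ ∑ k, (P (D k)).toReal := by
  rw [← ENNReal.toReal_sum (fun k _ => measure_ne_top P _)]
  apply ENNReal.toReal_mono (ENNReal.sum_ne_top.mpr (fun k _ => measure_ne_top P _))
  calc P A ≤ P (⋃ k, D k) := measure_mono hcover
  _ = P (⋃ k ∈ Finset.univ, D k) := by simp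
  _ ≤ ∑ k, P (D k) := measure_biUnion_finset_le _ _

end ALRT


open ALRT

set_option maxHeartbeats 2000000 in
/-- Conclusion (A.4) of Theorem 3: under the tail condition (A.1) and the conditional
weak convergence (A.2), `P{n⁻¹ ∑_j e^{S_{jc}} ≥ e^c} ∼ K c^{-1/2} e^{-c}` as `c → ∞`. -/
theorem average_likelihood_ratio_tail
    {Ω : Type*} [MeasurableSpace Ω] (P : Measure Ω) [IsProbabilityMeasure P]
    (n : ℕ) (hn : 1 ≤ n)
    (S : ℝ → Fin n → Ω → ℝ) (hSmeas : ∀ c k, Measurable (S c k))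
    (K : ℝ) (hK : 0 < K)
    (Y : Fin n → Fin n → Ω → ℝ) (hYmeas : ∀ k j, Measurable (Y k j))
    (hYkk : ∀ k, ∀ᵐ ω ∂P, Y k k ω = 0)
    (hYne : ∀ k j, k ≠ j → P {ω | Y k j ω = 0} = 0)
    (hA1 : ∀ (k : Fin n) (y : ℝ),
      Tendsto (fun c : ℝ =>
          (P {ω | c + y ≤ S c k ω}).toReal / (K * c ^ (-(1 : ℝ) / 2) * Real.exp (-c - y)))
        atTop (𝓝 1))
    (hA2 : ∀ (k : Fin n) (y : ℝ) (f : BoundedContinuousFunction (Fin n → ℝ) ℝ),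
      Tendsto (fun c : ℝ =>
          ∫ v, f v ∂(Measure.map (fun ω => fun j => S c k ω - S c j ω)
            (ProbabilityTheory.cond P {ω | c + y ≤ S c k ω})))
        atTop (𝓝 (∫ ω, f (fun j => Y k j ω) ∂P))) :
    Tendsto (fun c : ℝ =>
        (P {ω | Real.exp c ≤ (n : ℝ)⁻¹ * ∑ j : Fin n, Real.exp (S c j ω)}).toReal
          / (K * c ^ (-(1 : ℝ) / 2) * Real.exp (-c)))
      atTop (𝓝 1) := by
  classical
  haveI hne : Nonempty (Fin n) := ⟨⟨0, hn⟩⟩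
  have hnR : (0:ℝ) < (n:ℝ) := by exact_mod_cast hn
  set pden : ℝ → ℝ := fun c => K * c ^ (-(1:ℝ)/2) * Real.exp (-c) with hpden_def
  have hpden : ∀ᶠ c : ℝ in atTop, 0 < pden c := by
    filter_upwards [eventually_gt_atTop (0:ℝ)] with c hc
    have h1 : (0:ℝ) < c ^ (-(1:ℝ)/2) := Real.rpow_pos_of_pos hc _
    positivity
  -- per-anchor data
  set ν : Fin n → Measure (Fin n → ℝ) := fun k => P.map (fun ω (j : Fin n) => Y k j ω)
    with hν_def
  have hTmeas : ∀ k : Fin n, Measurable (fun ω (j : Fin n) => Y k j ω) := fun k =>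
    measurable_pi_lambda _ (fun j => hYmeas k j)
  haveI hνprob : ∀ k, IsProbabilityMeasure (ν k) := fun k =>
    Measure.isProbabilityMeasure_map (hTmeas k).aemeasurable
  have hν0 : ∀ k : Fin n, ∀ j, j ≠ k → (ν k) {v | v j = 0} = 0 := by
    intro k j hj
    have hs : MeasurableSet {v : Fin n → ℝ | v j = 0} :=
      (measurable_pi_apply j) (measurableSet_singleton 0)
    rw [hν_def]
    rw [Measure.map_apply (hTmeas k) hs]
    exact hYne k j (Ne.symm hj)
  have hνk : ∀ k : Fin n, ∀ᵐ v ∂(ν k), v k = 0 := by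
    intro k
    have hs : MeasurableSet {v : Fin n → ℝ | v k = 0} :=
      (measurable_pi_apply k) (measurableSet_singleton 0)
    exact (ae_map_iff (hTmeas k).aemeasurable hs).mpr (hYkk k)
  have hVmeas : ∀ (k : Fin n) (c : ℝ), Measurable (fun ω (j : Fin n) => S c k ω - S c j ω) :=
    fun k c => measurable_pi_lambda _ (fun j => (hSmeas c k).sub (hSmeas c j))
  have hWmeas : ∀ (k : Fin n) (c : ℝ), Measurable (fun ω => S c k ω - c) :=
    fun k c => (hSmeas c k).sub measurable_const
  have hVk : ∀ (k : Fin n) (c : ℝ) (ω : Ω), (fun j => S c k ω - S c j ω) k = 0 :=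
    fun k c ω => sub_self _
  have hinst := fun k : Fin n =>
    instantiate P S hSmeas K hK Y hYmeas k (hA1 k) (hA2 k)
  -- the g functions
  set gA : (Fin n → ℝ) → ℝ := fun v => - Real.log ((n:ℝ)⁻¹ * ∑ j, Real.exp (-(v j)))
    with hgA_def
  have hargpos : ∀ v : Fin n → ℝ, 0 < (n:ℝ)⁻¹ * ∑ j, Real.exp (-(v j)) := by
    intro v
    have h1 : 0 < ∑ j, Real.exp (-(v j)) :=
      Finset.sum_pos (fun j _ => Real.exp_pos _) Finset.univ_nonempty
    positivity
  have hgAc : Continuous gA := by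
    apply Continuous.neg
    apply Continuous.log
    · exact continuous_const.mul (continuous_finset_sum _ fun j _ =>
        (Real.continuous_exp.comp (continuous_apply j).neg))
    · exact fun v => (hargpos v).ne'
  have hgAnn : ∀ (k : Fin n) (v : Fin n → ℝ), v k = 0 → (∀ j, j ≠ k → 0 ≤ v j) → 0 ≤ gA v := by
    intro k v hvk hvge
    have hle1 : ∀ j : Fin n, Real.exp (-(v j)) ≤ 1 := by
      intro j
      by_cases h : j = k
      · rw [h, hvk]; simp
      · exact Real.exp_le_one_iff.mpr (by linarith [hvge j h])
    have hsum : ∑ j, Real.exp (-(v j)) ≤ (n:ℝ) := by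
      calc ∑ j, Real.exp (-(v j)) ≤ ∑ _j : Fin n, (1:ℝ) := Finset.sum_le_sum (fun j _ => hle1 j)
      _ = (n:ℝ) := by simp
    have harg1 : (n:ℝ)⁻¹ * ∑ j, Real.exp (-(v j)) ≤ 1 := by
      have h' : (n:ℝ)⁻¹ * (∑ j, Real.exp (-(v j))) ≤ (n:ℝ)⁻¹ * (n:ℝ) :=
        mul_le_mul_of_nonneg_left hsum (by positivity)
      rwa [inv_mul_cancel₀ hnR.ne'] at h'
    have := Real.log_nonpos (le_of_lt (hargpos v)) harg1
    simp only [hgA_def]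
    linarith
  -- coordinate integrability and β
  have hint_coord : ∀ k j : Fin n, Integrable (fun v => Real.exp (-(v j)))
      ((ν k).restrict {v | ∀ j', j' ≠ k → 0 ≤ v j'}) := by
    intro k j
    refine (integrable_const (1:ℝ)).mono' ?_ ?_
    · exact (Real.continuous_exp.comp (continuous_apply j).neg).aestronglyMeasurable
    · have h1 : ∀ᵐ v ∂((ν k).restrict {v | ∀ j', j' ≠ k → 0 ≤ v j'}), v k = 0 :=
        ae_restrict_of_ae (hνk k)
      have h2 : ∀ᵐ v ∂((ν k).restrict {v | ∀ j', j' ≠ k → 0 ≤ v j'}),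
          v ∈ {v : Fin n → ℝ | ∀ j', j' ≠ k → 0 ≤ v j'} :=
        ae_restrict_mem (isClosed_Mge k).measurableSet
      filter_upwards [h1, h2] with v hv1 hv2
      rw [Real.norm_eq_abs, abs_of_pos (Real.exp_pos _)]
      by_cases h : j = k
      · rw [h, hv1]; simp
      · exact Real.exp_le_one_iff.mpr (by linarith [hv2 j h])
  set β : Fin n → Fin n → ℝ := fun k j =>
    ∫ v in {v : Fin n → ℝ | ∀ j', j' ≠ k → 0 ≤ v j'}, Real.exp (-(v j)) ∂(ν k) with hβ_def
  -- core applied to gA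
  have hcoreA : ∀ k : Fin n,
      Tendsto (fun c => (P ({ω | gA (fun j => S c k ω - S c j ω) ≤ S c k ω - c} ∩
          (fun ω (j : Fin n) => S c k ω - S c j ω)⁻¹' {v | ∀ j, j ≠ k → 0 ≤ v j})).toReal / pden c)
        atTop (𝓝 ((n:ℝ)⁻¹ * ∑ j, β k j)) ∧
      Tendsto (fun c => (P ({ω | gA (fun j => S c k ω - S c j ω) ≤ S c k ω - c} ∩
          (fun ω (j : Fin n) => S c k ω - S c j ω)⁻¹' {v | ∀ j, j ≠ k → 0 < v j})).toReal / pden c)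
        atTop (𝓝 ((n:ℝ)⁻¹ * ∑ j, β k j)) := by
    intro k
    haveI := hνprob k
    have hJval : (∫ v in {v : Fin n → ℝ | ∀ j, j ≠ k → 0 ≤ v j},
        Real.exp (-(gA v)) ∂(ν k)) = (n:ℝ)⁻¹ * ∑ j, β k j := by
      have hpt : ∀ v : Fin n → ℝ, Real.exp (-(gA v)) = (n:ℝ)⁻¹ * ∑ j, Real.exp (-(v j)) := by
        intro v
        simp only [hgA_def, neg_neg]
        exact Real.exp_log (hargpos v)
      calc (∫ v in {v : Fin n → ℝ | ∀ j, j ≠ k → 0 ≤ v j}, Real.exp (-(gA v)) ∂(ν k))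
          = ∫ v in {v : Fin n → ℝ | ∀ j, j ≠ k → 0 ≤ v j},
            (n:ℝ)⁻¹ * ∑ j, Real.exp (-(v j)) ∂(ν k) := by
            apply integral_congr_ae
            filter_upwards with v
            exact hpt v
      _ = (n:ℝ)⁻¹ * ∑ j, β k j := by
            rw [integral_const_mul]
            congr 1
            rw [integral_finset_sum _ (fun j _ => hint_coord k j)]
    rw [← hJval]
    exact core P k (fun c ω => S c k ω - c) (hWmeas k)
      (fun c ω (j : Fin n) => S c k ω - S c j ω) (hVmeas k) (fun c ω => sub_self _)
      (ν k) (hν0 k) (hνk k) pden hpden ((hinst k).1) ((hinst k).2) gA hgAc (hgAnn k)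
  -- core applied to gB j
  have hcoreB : ∀ k j : Fin n,
      Tendsto (fun c => (P ({ω | 1 + (S c k ω - S c j ω) ≤ S c k ω - c} ∩
          (fun ω (j' : Fin n) => S c k ω - S c j' ω)⁻¹' {v | ∀ j', j' ≠ k → 0 ≤ v j'})).toReal / pden c)
        atTop (𝓝 (Real.exp (-1) * β k j)) ∧
      Tendsto (fun c => (P ({ω | 1 + (S c k ω - S c j ω) ≤ S c k ω - c} ∩
          (fun ω (j' : Fin n) => S c k ω - S c j' ω)⁻¹' {v | ∀ j', j' ≠ k → 0 < v j'})).toReal / pden c)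
        atTop (𝓝 (Real.exp (-1) * β k j)) := by
    intro k j
    haveI := hνprob k
    have hJval : (∫ v in {v : Fin n → ℝ | ∀ j', j' ≠ k → 0 ≤ v j'},
        Real.exp (-(1 + v j)) ∂(ν k)) = Real.exp (-1) * β k j := by
      calc (∫ v in {v : Fin n → ℝ | ∀ j', j' ≠ k → 0 ≤ v j'}, Real.exp (-(1 + v j)) ∂(ν k))
          = ∫ v in {v : Fin n → ℝ | ∀ j', j' ≠ k → 0 ≤ v j'},
            Real.exp (-1) * Real.exp (-(v j)) ∂(ν k) := by
            apply integral_congr_ae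
            filter_upwards with v
            rw [← Real.exp_add]
            ring_nf
      _ = Real.exp (-1) * β k j := integral_const_mul _ _
    rw [← hJval]
    have hgBc : Continuous (fun v : Fin n → ℝ => 1 + v j) :=
      continuous_const.add (continuous_apply j)
    have hgBnn : ∀ (v : Fin n → ℝ), v k = 0 → (∀ j', j' ≠ k → 0 ≤ v j') →
        0 ≤ 1 + v j := by
      intro v hvk hvge
      by_cases h : j = k
      · rw [h, hvk]; norm_num
      · linarith [hvge j h]
    exact core P k (fun c ω => S c k ω - c) (hWmeas k)
      (fun c ω (j' : Fin n) => S c k ω - S c j' ω) (hVmeas k) (fun c ω => sub_self _)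
      (ν k) (hν0 k) (hνk k) pden hpden ((hinst k).1) ((hinst k).2)
      (fun v => 1 + v j) hgBc hgBnn
  -- the consistency identity: for each j, ∑ k β k j = 1
  have hβj : ∀ j : Fin n, ∑ k, β k j = 1 := by
    intro j
    have hEjmeas : ∀ c : ℝ, MeasurableSet {ω | (1:ℝ) ≤ S c j ω - c} := fun c =>
      measurableSet_le measurable_const ((hSmeas c j).sub measurable_const)
    have hmid : Tendsto (fun c => (P {ω | (1:ℝ) ≤ S c j ω - c}).toReal / pden c) atTop
        (𝓝 (Real.exp (-1))) := (hinst j).1 1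
    have hBseteq : ∀ (k : Fin n) (c : ℝ),
        {ω | 1 + (S c k ω - S c j ω) ≤ S c k ω - c} = {ω | (1:ℝ) ≤ S c j ω - c} := by
      intro k c
      ext ω
      simp only [mem_setOf_eq]
      constructor <;> intro h <;> linarith
    have hlowT : Tendsto (fun c => ∑ k, (P ({ω | (1:ℝ) ≤ S c j ω - c} ∩
        (fun ω (j' : Fin n) => S c k ω - S c j' ω)⁻¹' {v | ∀ j', j' ≠ k → 0 < v j'})).toReal
          / pden c) atTop (𝓝 (∑ k, Real.exp (-1) * β k j)) := by
      apply tendsto_finset_sum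
      intro k _
      exact ((hcoreB k j).2).congr (fun c => by rw [hBseteq k c])
    have hupT : Tendsto (fun c => ∑ k, (P ({ω | (1:ℝ) ≤ S c j ω - c} ∩
        (fun ω (j' : Fin n) => S c k ω - S c j' ω)⁻¹' {v | ∀ j', j' ≠ k → 0 ≤ v j'})).toReal
          / pden c) atTop (𝓝 (∑ k, Real.exp (-1) * β k j)) := by
      apply tendsto_finset_sum
      intro k _
      exact ((hcoreB k j).1).congr (fun c => by rw [hBseteq k c])
    have hlow_le : ∀ᶠ c in atTop, (∑ k, (P ({ω | (1:ℝ) ≤ S c j ω - c} ∩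
        (fun ω (j' : Fin n) => S c k ω - S c j' ω)⁻¹' {v | ∀ j', j' ≠ k → 0 < v j'})).toReal
          / pden c) ≤ (P {ω | (1:ℝ) ≤ S c j ω - c}).toReal / pden c := by
      filter_upwards [hpden] with c hpc
      rw [← Finset.sum_div]
      apply (div_le_div_iff_of_pos_right hpc).mpr
      apply sum_measure_le P _ _
      · intro k
        exact (hEjmeas c).inter ((hVmeas k c) (isOpen_Mgt k).measurableSet)
      · intro k
        exact inter_subset_left
      · intro k l hkl
        rw [Set.disjoint_left]
        rintro ω ⟨-, hk⟩ ⟨-, hl⟩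
        have h1 : 0 < S c k ω - S c l ω := hk l (Ne.symm hkl)
        have h2 : 0 < S c l ω - S c k ω := hl k hkl
        linarith
    have hup_le : ∀ᶠ c in atTop, (P {ω | (1:ℝ) ≤ S c j ω - c}).toReal / pden c ≤
        ∑ k, (P ({ω | (1:ℝ) ≤ S c j ω - c} ∩
        (fun ω (j' : Fin n) => S c k ω - S c j' ω)⁻¹' {v | ∀ j', j' ≠ k → 0 ≤ v j'})).toReal
          / pden c := by
      filter_upwards [hpden] with c hpc
      rw [← Finset.sum_div]
      apply (div_le_div_iff_of_pos_right hpc).mpr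
      apply measure_le_sum P _ _
      intro ω hω
      obtain ⟨k, -, hmax⟩ := Finset.exists_max_image Finset.univ (fun k => S c k ω)
        Finset.univ_nonempty
      refine mem_iUnion.mpr ⟨k, hω, ?_⟩
      intro j' _
      exact sub_nonneg.mpr (hmax j' (Finset.mem_univ _))
    have hle1 : ∑ k, Real.exp (-1) * β k j ≤ Real.exp (-1) :=
      le_of_tendsto_of_tendsto hlowT hmid hlow_le
    have hle2 : Real.exp (-1) ≤ ∑ k, Real.exp (-1) * β k j :=
      le_of_tendsto_of_tendsto hmid hupT hup_le
    have heq : Real.exp (-1) * ∑ k, β k j = Real.exp (-1) * 1 := by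
      rw [Finset.mul_sum, mul_one]
      exact le_antisymm hle1 hle2
    exact mul_left_cancel₀ (Real.exp_ne_zero _) heq
  -- total mass identity
  have hβtotal : ∑ k, ((n:ℝ)⁻¹ * ∑ j, β k j) = 1 := by
    rw [← Finset.mul_sum, Finset.sum_comm]
    have h' : ∑ j : Fin n, ∑ k, β k j = ∑ _j : Fin n, (1:ℝ) :=
      Finset.sum_congr rfl (fun j _ => hβj j)
    rw [h']
    simp only [Finset.sum_const, Finset.card_univ, Fintype.card_fin, nsmul_eq_mul, mul_one]
    exact inv_mul_cancel₀ hnR.ne'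
  -- event identity for the main event
  have hAseteq : ∀ (k : Fin n) (c : ℝ),
      {ω | gA (fun j => S c k ω - S c j ω) ≤ S c k ω - c} =
      {ω | Real.exp c ≤ (n:ℝ)⁻¹ * ∑ j, Real.exp (S c j ω)} := by
    intro k c
    ext ω
    simp only [mem_setOf_eq, hgA_def]
    have hX : 0 < (n:ℝ)⁻¹ * ∑ j', Real.exp (-(S c k ω - S c j' ω)) := hargpos _
    have hXmul : ((n:ℝ)⁻¹ * ∑ j', Real.exp (-(S c k ω - S c j' ω))) * Real.exp (S c k ω)
        = (n:ℝ)⁻¹ * ∑ j', Real.exp (S c j' ω) := by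
      rw [mul_assoc, Finset.sum_mul]
      congr 1
      apply Finset.sum_congr rfl
      intro j' _
      rw [← Real.exp_add]
      congr 1
      ring
    constructor
    · intro h
      have h1 : c - S c k ω ≤ Real.log ((n:ℝ)⁻¹ * ∑ j', Real.exp (-(S c k ω - S c j' ω))) := by
        linarith
      have h2 : Real.exp (c - S c k ω) ≤ (n:ℝ)⁻¹ * ∑ j', Real.exp (-(S c k ω - S c j' ω)) :=
        (Real.le_log_iff_exp_le hX).mp h1
      rw [Real.exp_sub, div_le_iff₀ (Real.exp_pos _)] at h2
      rw [← hXmul]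
      exact h2
    · intro h
      rw [← hXmul, ← div_le_iff₀ (Real.exp_pos _), ← Real.exp_sub] at h
      have h1 := (Real.le_log_iff_exp_le hX).mpr h
      linarith
  -- measurability of the main event
  have hAmeas : ∀ c : ℝ, MeasurableSet {ω | Real.exp c ≤ (n:ℝ)⁻¹ * ∑ j, Real.exp (S c j ω)} :=
    fun c => measurableSet_le measurable_const (measurable_const.mul
      (Finset.measurable_sum _ (fun j _ => Real.measurable_exp.comp (hSmeas c j))))
  -- final squeeze
  have hlowT : Tendsto (fun c => ∑ k,
      (P ({ω | Real.exp c ≤ (n:ℝ)⁻¹ * ∑ j, Real.exp (S c j ω)} ∩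
        (fun ω (j' : Fin n) => S c k ω - S c j' ω)⁻¹' {v | ∀ j', j' ≠ k → 0 < v j'})).toReal
        / pden c) atTop (𝓝 1) := by
    rw [← hβtotal]
    apply tendsto_finset_sum
    intro k _
    exact ((hcoreA k).2).congr (fun c => by rw [hAseteq k c])
  have hupT : Tendsto (fun c => ∑ k,
      (P ({ω | Real.exp c ≤ (n:ℝ)⁻¹ * ∑ j, Real.exp (S c j ω)} ∩
        (fun ω (j' : Fin n) => S c k ω - S c j' ω)⁻¹' {v | ∀ j', j' ≠ k → 0 ≤ v j'})).toReal
        / pden c) atTop (𝓝 1) := by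
    rw [← hβtotal]
    apply tendsto_finset_sum
    intro k _
    exact ((hcoreA k).1).congr (fun c => by rw [hAseteq k c])
  have hlow_le : ∀ᶠ c in atTop, (∑ k,
      (P ({ω | Real.exp c ≤ (n:ℝ)⁻¹ * ∑ j, Real.exp (S c j ω)} ∩
        (fun ω (j' : Fin n) => S c k ω - S c j' ω)⁻¹' {v | ∀ j', j' ≠ k → 0 < v j'})).toReal
        / pden c) ≤ (P {ω | Real.exp c ≤ (n:ℝ)⁻¹ * ∑ j, Real.exp (S c j ω)}).toReal / pden c := by
    filter_upwards [hpden] with c hpc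
    rw [← Finset.sum_div]
    apply (div_le_div_iff_of_pos_right hpc).mpr
    apply sum_measure_le P _ _
    · intro k
      exact (hAmeas c).inter ((hVmeas k c) (isOpen_Mgt k).measurableSet)
    · intro k
      exact inter_subset_left
    · intro k l hkl
      rw [Set.disjoint_left]
      rintro ω ⟨-, hk⟩ ⟨-, hl⟩
      have h1 : 0 < S c k ω - S c l ω := hk l (Ne.symm hkl)
      have h2 : 0 < S c l ω - S c k ω := hl k hkl
      linarith
  have hup_le : ∀ᶠ c in atTop,
      (P {ω | Real.exp c ≤ (n:ℝ)⁻¹ * ∑ j, Real.exp (S c j ω)}).toReal / pden c ≤ ∑ k,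
      (P ({ω | Real.exp c ≤ (n:ℝ)⁻¹ * ∑ j, Real.exp (S c j ω)} ∩
        (fun ω (j' : Fin n) => S c k ω - S c j' ω)⁻¹' {v | ∀ j', j' ≠ k → 0 ≤ v j'})).toReal
        / pden c := by
    filter_upwards [hpden] with c hpc
    rw [← Finset.sum_div]
    apply (div_le_div_iff_of_pos_right hpc).mpr
    apply measure_le_sum P _ _
    intro ω hω
    obtain ⟨k, -, hmax⟩ := Finset.exists_max_image Finset.univ (fun k => S c k ω)
      Finset.univ_nonempty
    refine mem_iUnion.mpr ⟨k, hω, ?_⟩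
    intro j' _
    exact sub_nonneg.mpr (hmax j' (Finset.mem_univ _))
  exact tendsto_of_tendsto_of_tendsto_of_le_of_le' hlowT hupT hlow_le hup_le
end

section
/- Fix integers 0 < n_B < J, 0 ≤ m_B ≤ n_B, 0 ≤ I − m_B ≤ J − n_B, set p̂_0 = I/J with 0 < p̂_0 < 1, and let c > 0. Suppose (p_B, p̃_B) ∈ (0,1)² with p_B > p̂_0 solves n_B p_B + (J−n_B) p̃_B = I and n_B φ(p_B) + (J−n_B) φ(p̃_B) = c/2. Then S^(1)(B) ≥ ℓ(B), where ℓ(B) = c/2 + θ(p_B)(m_B − n_B p_B) + θ(p̃_B)((I − m_B) − (J − n_B) p̃_B). -/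
open Real

/-- `φ(p) = p log(p/p̂₀) + (1−p) log((1−p)/(1−p̂₀))`. -/
noncomputable def phi (q p : ℝ) : ℝ :=
  p * Real.log (p / q) + (1 - p) * Real.log ((1 - p) / (1 - q))

/-- `θ(p) = log(p/p̂₀) − log((1−p)/(1−p̂₀))`. -/
noncomputable def theta (q p : ℝ) : ℝ :=
  Real.log (p / q) - Real.log ((1 - p) / (1 - q))

lemma kl_nonneg (p x : ℝ) (hp : p ∈ Set.Ioo (0:ℝ) 1) (hx : x ∈ Set.Icc (0:ℝ) 1) :
    0 ≤ x * Real.log (x / p) + (1 - x) * Real.log ((1 - x) / (1 - p)) := by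
  obtain ⟨hp0, hp1⟩ := hp
  obtain ⟨hx0, hx1⟩ := hx
  rcases eq_or_lt_of_le hx0 with h0 | h0
  · have : (0:ℝ) / p = 0 := by simp
    rw [← h0]
    simp only [zero_mul, sub_zero, one_mul, zero_add]
    rw [Real.log_div one_ne_zero (by linarith)]
    simp only [Real.log_one, zero_sub]
    have : Real.log (1 - p) < 0 := Real.log_neg (by linarith) (by linarith)
    linarith
  rcases eq_or_lt_of_le hx1 with h1 | h1
  · rw [h1]
    simp only [sub_self, zero_mul, add_zero, one_mul]
    rw [Real.log_div one_ne_zero (ne_of_gt hp0)]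
    simp only [Real.log_one, zero_sub]
    have : Real.log p < 0 := Real.log_neg hp0 hp1
    linarith
  -- 0 < x < 1
  have key1 : Real.log (p / x) ≤ p / x - 1 := Real.log_le_sub_one_of_pos (by positivity)
  have key2 : Real.log ((1 - p) / (1 - x)) ≤ (1 - p) / (1 - x) - 1 :=
    Real.log_le_sub_one_of_pos (by apply div_pos <;> linarith)
  have e1 : Real.log (x / p) = - Real.log (p / x) := by
    rw [← Real.log_inv]; congr 1; field_simp
  have e2 : Real.log ((1 - x) / (1 - p)) = - Real.log ((1 - p) / (1 - x)) := by
    rw [← Real.log_inv]; congr 1; field_simp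
  rw [e1, e2]
  have h1' : x * Real.log (p / x) ≤ p - x := by
    have := mul_le_mul_of_nonneg_left key1 hx0
    have hx0' : x ≠ 0 := ne_of_gt h0
    calc x * Real.log (p / x) ≤ x * (p / x - 1) := this
      _ = p - x := by field_simp
  have h2' : (1 - x) * Real.log ((1 - p) / (1 - x)) ≤ x - p := by
    have := mul_le_mul_of_nonneg_left key2 (by linarith : (0:ℝ) ≤ 1 - x)
    calc (1 - x) * Real.log ((1 - p) / (1 - x)) ≤ (1 - x) * ((1 - p) / (1 - x) - 1) := this
      _ = x - p := by
        rw [mul_sub, mul_div_cancel₀ _ (by linarith : (1:ℝ) - x ≠ 0)]; ring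
  nlinarith

lemma phi_tangent (q p x : ℝ) (hq : q ∈ Set.Ioo (0:ℝ) 1) (hp : p ∈ Set.Ioo (0:ℝ) 1)
    (hx : x ∈ Set.Icc (0:ℝ) 1) :
    phi q p + theta q p * (x - p) ≤ phi q x := by
  obtain ⟨hq0, hq1⟩ := hq
  obtain ⟨hp0, hp1⟩ := hp
  obtain ⟨hx0, hx1⟩ := hx
  have h1 : x * Real.log (x / q) = x * Real.log (x / p) + x * Real.log (p / q) := by
    rcases eq_or_lt_of_le hx0 with h0 | h0
    · rw [← h0]; simp
    · rw [← mul_add, ← Real.log_mul (by positivity) (by positivity)]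
      congr 2
      rw [div_mul_div_comm]
      rw [div_eq_div_iff (by positivity) (by positivity)]
      ring
  have h2 : (1 - x) * Real.log ((1 - x) / (1 - q))
      = (1 - x) * Real.log ((1 - x) / (1 - p)) + (1 - x) * Real.log ((1 - p) / (1 - q)) := by
    rcases eq_or_lt_of_le hx1 with h1' | h1'
    · rw [h1']; simp
    · rw [← mul_add, ← Real.log_mul (by apply ne_of_gt; apply div_pos <;> linarith)
        (by apply ne_of_gt; apply div_pos <;> linarith)]
      congr 2
      rw [div_mul_div_comm]
      rw [div_eq_div_iff (by apply ne_of_gt; linarith) (by apply ne_of_gt; apply mul_pos <;> linarith)]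
      ring
  have hkl := kl_nonneg p x ⟨hp0, hp1⟩ ⟨hx0, hx1⟩
  simp only [phi, theta]
  nlinarith [hkl, h1, h2]

/-- Lemma 1(a): with `(p_B, p̃_B)` the change-of-measure parameters of (6.3),
the one-sided GLR score satisfies `S⁽¹⁾(B) ≥ ℓ(B)`, where
`ℓ(B) = c/2 + θ(p_B)(m_B − n_B p_B) + θ(p̃_B)((I−m_B) − (J−n_B) p̃_B)`. -/
theorem glr_ge_loglikelihood_ratio
    (J nB mB I : ℕ) (hnBpos : 0 < nB) (hnBJ : nB < J)
    (hmBnB : mB ≤ nB) (hmBI : mB ≤ I) (hIJ : I ≤ J)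
    (hrest : (I : ℝ) - (mB : ℝ) ≤ (J : ℝ) - (nB : ℝ))
    (p0 : ℝ) (hp0 : p0 = (I : ℝ) / (J : ℝ)) (hp0pos : 0 < p0) (hp0lt : p0 < 1)
    (c : ℝ) (hc : 0 < c)
    (pB ptB : ℝ) (hpB : pB ∈ Set.Ioo (0 : ℝ) 1) (hptB : ptB ∈ Set.Ioo (0 : ℝ) 1)
    (hpBgt : p0 < pB)
    (heq1 : (nB : ℝ) * pB + ((J : ℝ) - (nB : ℝ)) * ptB = (I : ℝ))
    (heq2 : (nB : ℝ) * phi p0 pB + ((J : ℝ) - (nB : ℝ)) * phi p0 ptB = c / 2) :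
    (if p0 < (mB : ℝ) / (nB : ℝ) then
        (nB : ℝ) * phi p0 ((mB : ℝ) / (nB : ℝ))
          + ((J : ℝ) - (nB : ℝ)) * phi p0 (((I : ℝ) - (mB : ℝ)) / ((J : ℝ) - (nB : ℝ)))
      else 0)
      ≥ c / 2 + theta p0 pB * ((mB : ℝ) - (nB : ℝ) * pB)
          + theta p0 ptB * (((I : ℝ) - (mB : ℝ)) - ((J : ℝ) - (nB : ℝ)) * ptB) := by
  set A : ℝ := (nB : ℝ) with hAdef
  set B : ℝ := (J : ℝ) - (nB : ℝ) with hBdef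
  have hA : 0 < A := by simp only [hAdef]; exact_mod_cast hnBpos
  have hB : 0 < B := by
    have : (nB:ℝ) < (J:ℝ) := by exact_mod_cast hnBJ
    simp only [hBdef]; linarith
  have hJpos : (0:ℝ) < (J:ℝ) := by
    have : 0 < J := lt_of_le_of_lt (Nat.zero_le _) hnBJ
    exact_mod_cast this
  set x : ℝ := (mB : ℝ) / A with hxdef
  set y : ℝ := ((I : ℝ) - (mB : ℝ)) / B with hydef
  have hax : A * x = (mB : ℝ) := by
    rw [hxdef]; field_simp
  have hby : B * y = (I : ℝ) - (mB : ℝ) := by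
    rw [hydef]; field_simp
  have hx : x ∈ Set.Icc (0:ℝ) 1 := by
    constructor
    · apply div_nonneg (by positivity) hA.le
    · rw [div_le_one hA]; simp only [hAdef]; exact_mod_cast hmBnB
  have hy : y ∈ Set.Icc (0:ℝ) 1 := by
    constructor
    · apply div_nonneg _ hB.le
      have : (mB:ℝ) ≤ (I:ℝ) := by exact_mod_cast hmBI
      linarith
    · rw [div_le_one hB]; exact hrest
  have hp0I : A * p0 + B * p0 = (I:ℝ) := by
    rw [hp0]; simp only [hAdef, hBdef]; field_simp; ring
  clear_value A B x y
  have hq : p0 ∈ Set.Ioo (0:ℝ) 1 := ⟨hp0pos, hp0lt⟩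
  -- ptB < p0
  have hptlt : ptB < p0 := by
    nlinarith
  have hptpB : ptB ≤ pB := by linarith
  -- theta monotone
  have hth : theta p0 ptB ≤ theta p0 pB := by
    simp only [theta]
    have h1 : Real.log (ptB / p0) ≤ Real.log (pB / p0) := by
      apply Real.log_le_log (by apply div_pos hptB.1 hp0pos)
      gcongr
    have h2 : Real.log ((1 - pB) / (1 - p0)) ≤ Real.log ((1 - ptB) / (1 - p0)) := by
      apply Real.log_le_log (by apply div_pos <;> linarith [hpB.2])
      gcongr <;> linarith
    linarith
  have t1 := phi_tangent p0 pB x hq hpB hx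
  have t2 := phi_tangent p0 ptB y hq hptB hy
  split_ifs with hcmp
  · -- case p0 < x
    have ht1 := mul_le_mul_of_nonneg_left t1 hA.le
    have ht2 := mul_le_mul_of_nonneg_left t2 hB.le
    rw [ge_iff_le, ← hax]
    rw [show (I:ℝ) - A * x = B * y from by rw [hax, hby]]
    linarith [ht1, ht2]
  · -- case x ≤ p0
    push_neg at hcmp
    have hphi0 : phi p0 p0 = 0 := by
      simp [phi, div_self (ne_of_gt hp0pos), div_self (by linarith : (1:ℝ) - p0 ≠ 0)]
    have t3 := phi_tangent p0 pB p0 hq hpB ⟨hp0pos.le, hp0lt.le⟩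
    have t4 := phi_tangent p0 ptB p0 hq hptB ⟨hp0pos.le, hp0lt.le⟩
    rw [hphi0] at t3 t4
    have ht3 := mul_le_mul_of_nonneg_left t3 hA.le
    have ht4 := mul_le_mul_of_nonneg_left t4 hB.le
    have hline : B * y - B * p0 = A * p0 - A * x := by
      have h : A * x + B * y = (I:ℝ) := by rw [hax, hby]; ring
      linarith [hp0I]
    have hline2 : theta p0 ptB * (B * y - B * p0) = theta p0 ptB * (A * p0 - A * x) := by
      rw [hline]
    have hprod : 0 ≤ A * ((theta p0 pB - theta p0 ptB) * (p0 - x)) :=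
      mul_nonneg hA.le (mul_nonneg (by linarith) (by linarith))
    rw [ge_iff_le, ← hax]
    rw [show (I:ℝ) - A * x = B * y from by rw [hax, hby]]
    linarith [ht3, ht4, hline2, hprod, heq2]
end

section
/- Fix 0 < γ_0 < γ_1 < 1 and 0 < δ < 1/2. There exists ε_0 > 0 (depending only on γ_0, γ_1, δ) such that for every p̂_0 ∈ [γ_0, γ_1], every α ∈ [δ, 1−δ], and every 0 < ε ≤ ε_0, the system of equations α p + (1−α) p̃ = p̂_0 and α φ(p) + (1−α) φ(p̃) = ε has a unique solution (p, p̃) ∈ (0,1)² with p > p̂_0. -/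
open Real Set

/-- A globally continuous version of `phi`. -/
noncomputable def psi (q p : ℝ) : ℝ :=
  p * Real.log p - p * Real.log q + (1 - p) * Real.log (1 - p) - (1 - p) * Real.log (1 - q)

lemma phi_eq_psi {q : ℝ} (hq : q ≠ 0) (hq1 : q ≠ 1) (p : ℝ) : phi q p = psi q p := by
  have h1 : p * Real.log (p / q) = p * Real.log p - p * Real.log q := by
    rcases eq_or_ne p 0 with rfl | hp
    · simp
    · rw [Real.log_div hp hq]; ring
  have h2 : (1 - p) * Real.log ((1 - p) / (1 - q)) =
      (1 - p) * Real.log (1 - p) - (1 - p) * Real.log (1 - q) := by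
    rcases eq_or_ne p 1 with rfl | hp
    · simp
    · rw [Real.log_div (sub_ne_zero.mpr (Ne.symm hp)) (sub_ne_zero.mpr (Ne.symm hq1))]; ring
  unfold phi psi
  rw [h1, h2]; ring

lemma continuous_psi (q : ℝ) : Continuous (psi q) := by
  unfold psi
  have h1 : Continuous fun p : ℝ => p * Real.log p := Real.continuous_mul_log
  have h2 : Continuous fun p : ℝ => (1 - p) * Real.log (1 - p) :=
    Real.continuous_mul_log.comp (continuous_const.sub continuous_id)
  fun_prop

lemma mul_log_sub_mul_log_ge {p q : ℝ} (hp : 0 ≤ p) (hq : 0 < q) :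
    p - q ≤ p * Real.log p - p * Real.log q := by
  rcases hp.eq_or_lt with rfl | hp
  · simpa using hq.le
  · have h := Real.log_le_sub_one_of_pos (div_pos hq hp)
    rw [Real.log_div hq.ne' hp.ne'] at h
    have h2 : p * (Real.log q - Real.log p) ≤ p * (q / p - 1) :=
      mul_le_mul_of_nonneg_left h hp.le
    have h3 : p * (q / p - 1) = q - p := by field_simp
    nlinarith

lemma psi_nonneg {q p : ℝ} (hq0 : 0 < q) (hq1 : q < 1) (hp0 : 0 ≤ p) (hp1 : p ≤ 1) :
    0 ≤ psi q p := by
  have h1 := mul_log_sub_mul_log_ge hp0 hq0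
  have h2 := mul_log_sub_mul_log_ge (p := 1 - p) (q := 1 - q) (by linarith) (by linarith)
  unfold psi; linarith

lemma hasDerivAt_psi (q : ℝ) {x : ℝ} (hx0 : 0 < x) (hx1 : x < 1) :
    HasDerivAt (psi q)
      (Real.log x - Real.log (1 - x) - Real.log q + Real.log (1 - q)) x := by
  have h1 : HasDerivAt (fun p : ℝ => p * Real.log p) (Real.log x + 1) x :=
    Real.hasDerivAt_mul_log hx0.ne'
  have h2 : HasDerivAt (fun p : ℝ => (1 - p) * Real.log (1 - p))
      ((Real.log (1 - x) + 1) * (-1)) x := by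
    exact (Real.hasDerivAt_mul_log (show (1 : ℝ) - x ≠ 0 by linarith)).comp x
      (((hasDerivAt_id x).const_sub 1))
  have h3 : HasDerivAt (fun p : ℝ => p * Real.log q) (Real.log q) x :=
    hasDerivAt_mul_const _
  have h4 : HasDerivAt (fun p : ℝ => (1 - p) * Real.log (1 - q))
      ((-1) * Real.log (1 - q)) x :=
    ((hasDerivAt_id x).const_sub 1).mul_const _
  have := ((h1.sub h3).add h2).sub h4
  refine HasDerivAt.congr_deriv (f := psi q) this ?_
  ring

set_option maxHeartbeats 1000000 in
/-- Existence and uniqueness of the change-of-measure parameters of (6.3): for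
`p̂₀ ∈ [γ₀, γ₁]`, `α ∈ [δ, 1−δ]` and all small enough `ε > 0`, the system
`α p + (1−α) p̃ = p̂₀`, `α φ(p) + (1−α) φ(p̃) = ε` has a unique solution
`(p, p̃) ∈ (0,1)²` with `p > p̂₀`. -/
theorem exists_unique_change_of_measure_params
    (γ0 γ1 δ : ℝ) (hγ0 : 0 < γ0) (hγ01 : γ0 < γ1) (hγ1 : γ1 < 1)
    (hδ : 0 < δ) (hδ' : δ < 1 / 2) :
    ∃ ε0 : ℝ, 0 < ε0 ∧
      ∀ p0 ∈ Set.Icc γ0 γ1, ∀ α ∈ Set.Icc δ (1 - δ), ∀ ε : ℝ, 0 < ε → ε ≤ ε0 →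
        ∃! pq : ℝ × ℝ,
          pq.1 ∈ Set.Ioo (0 : ℝ) 1 ∧ pq.2 ∈ Set.Ioo (0 : ℝ) 1 ∧ p0 < pq.1 ∧
          α * pq.1 + (1 - α) * pq.2 = p0 ∧
          α * phi p0 pq.1 + (1 - α) * phi p0 pq.2 = ε := by
  have hlog1 : 0 < -Real.log γ1 := by
    have := Real.log_neg (lt_trans hγ0 hγ01) hγ1; linarith
  have hlog0 : 0 < -Real.log (1 - γ0) := by
    have := Real.log_neg (x := 1 - γ0) (by linarith) (by linarith); linarith
  set m := min (-Real.log γ1) (-Real.log (1 - γ0)) with hm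
  have hmpos : 0 < m := lt_min hlog1 hlog0
  refine ⟨δ * m / 2, by positivity, ?_⟩
  rintro p0 ⟨hp0l, hp0r⟩ α ⟨hαl, hαr⟩ ε hε hεle
  have hp00 : 0 < p0 := lt_of_lt_of_le hγ0 hp0l
  have hp01 : p0 < 1 := lt_of_le_of_lt hp0r hγ1
  have hα0 : 0 < α := lt_of_lt_of_le hδ hαl
  have hα1 : α < 1 := by linarith
  have h1α : 0 < 1 - α := by linarith
  set pmax := min 1 (p0 / α) with hpmax
  set L : ℝ → ℝ := fun p => (p0 - α * p) / (1 - α) with hL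
  set F : ℝ → ℝ := fun p => α * psi p0 p + (1 - α) * psi p0 (L p) with hF
  have hLp0 : L p0 = p0 := by
    simp only [hL]; field_simp
  have hp0pmax : p0 < pmax := by
    apply lt_min hp01
    rw [lt_div_iff₀ hα0]; nlinarith
  have hpmax1 : pmax ≤ 1 := min_le_left _ _
  have hpmaxα : pmax ≤ p0 / α := min_le_right _ _
  -- L is antitone
  have hLanti : ∀ a b : ℝ, a ≤ b → L b ≤ L a := by
    intro a b hab
    simp only [hL]
    have hnum : p0 - α * b ≤ p0 - α * a := by nlinarith
    exact (div_le_div_iff_of_pos_right h1α).mpr hnum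
  have hLanti' : ∀ a b : ℝ, a < b → L b < L a := by
    intro a b hab
    simp only [hL]
    have hnum : p0 - α * b < p0 - α * a := by nlinarith
    exact (div_lt_div_iff_of_pos_right h1α).mpr hnum
  -- range facts
  have hLnonneg : ∀ p : ℝ, p ≤ p0 / α → 0 ≤ L p := by
    intro p hp
    apply div_nonneg ?_ h1α.le
    rw [le_div_iff₀ hα0] at hp; nlinarith
  have hLpos : ∀ p : ℝ, p < p0 / α → 0 < L p := by
    intro p hp
    apply div_pos ?_ h1α
    rw [lt_div_iff₀ hα0] at hp; nlinarith
  -- continuity of F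
  have hFcont : Continuous F := by
    apply Continuous.add
    · exact continuous_const.mul (continuous_psi p0)
    · exact continuous_const.mul ((continuous_psi p0).comp (by fun_prop))
  -- derivative of F is positive on the interior
  have hFderiv : ∀ x ∈ Set.Ioo p0 pmax, 0 < deriv F x := by
    intro x hx
    obtain ⟨hxl, hxr⟩ := hx
    have hx : x ∈ Set.Ioo p0 pmax := ⟨hxl, hxr⟩
    have hx0 : 0 < x := lt_trans hp00 hxl
    have hx1 : x < 1 := lt_of_lt_of_le hx.2 hpmax1
    have hLx0 : 0 < L x := hLpos x (lt_of_lt_of_le hx.2 hpmaxα)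
    have hLxp0 : L x < p0 := by
      have := hLanti' p0 x hx.1; rwa [hLp0] at this
    have hLx1 : L x < 1 := lt_trans hLxp0 hp01
    have hdL : HasDerivAt L (-α / (1 - α)) x := by
      have h1 : HasDerivAt (fun p : ℝ => p0 - α * p) (-α) x := by
        simpa using (((hasDerivAt_id x).const_mul α).const_sub p0)
      simpa using h1.div_const (1 - α)
    have hd1 : HasDerivAt (psi p0)
        (Real.log x - Real.log (1 - x) - Real.log p0 + Real.log (1 - p0)) x :=
      hasDerivAt_psi p0 hx0 hx1
    have hd2 : HasDerivAt (fun p => psi p0 (L p))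
        ((Real.log (L x) - Real.log (1 - L x) - Real.log p0 + Real.log (1 - p0)) *
          (-α / (1 - α))) x :=
      (hasDerivAt_psi p0 hLx0 hLx1).comp x hdL
    have hdF : HasDerivAt F
        (α * (Real.log x - Real.log (1 - x) - Real.log p0 + Real.log (1 - p0)) +
          (1 - α) * ((Real.log (L x) - Real.log (1 - L x) - Real.log p0 +
            Real.log (1 - p0)) * (-α / (1 - α)))) x :=
      (hd1.const_mul α).add (hd2.const_mul (1 - α))
    rw [hdF.deriv]
    have key : (1 - α) * ((Real.log (L x) - Real.log (1 - L x) - Real.log p0 +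
        Real.log (1 - p0)) * (-α / (1 - α))) =
        -α * (Real.log (L x) - Real.log (1 - L x) - Real.log p0 + Real.log (1 - p0)) := by
      field_simp
    rw [key]
    have hlogx : Real.log (L x) < Real.log x := Real.log_lt_log hLx0 (lt_trans hLxp0 hx.1)
    have hlog1x : Real.log (1 - x) < Real.log (1 - L x) :=
      Real.log_lt_log (by linarith) (by linarith)
    nlinarith
  -- F strictly monotone on Icc p0 pmax
  have hFmono : StrictMonoOn F (Set.Icc p0 pmax) := by
    apply strictMonoOn_of_deriv_pos (convex_Icc _ _) hFcont.continuousOn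
    intro x hx
    rw [interior_Icc] at hx
    exact hFderiv x hx
  -- F p0 = 0
  have hFp0 : F p0 = 0 := by
    simp only [hF, hLp0, psi]; ring
  -- F pmax ≥ δ * m
  have hFpmax : δ * m ≤ F pmax := by
    rcases le_total (p0 / α) 1 with h | h
    · -- pmax = p0 / α, L pmax = 0
      have hpe : pmax = p0 / α := min_eq_right h
      have hL0 : L pmax = 0 := by
        rw [hpe, hL]; field_simp; ring
      have hpsi0 : psi p0 0 = -Real.log (1 - p0) := by simp [psi]
      have hpsi1 : 0 ≤ psi p0 pmax :=
        psi_nonneg hp00 hp01 (le_trans hp00.le hp0pmax.le) hpmax1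
      have hlog : -Real.log (1 - γ0) ≤ -Real.log (1 - p0) := by
        have := Real.log_le_log (by linarith : (0:ℝ) < 1 - p0) (by linarith : 1 - p0 ≤ 1 - γ0)
        linarith
      have hm' : m ≤ -Real.log (1 - p0) := le_trans (min_le_right _ _) hlog
      have : δ * m ≤ (1 - α) * psi p0 (L pmax) := by
        rw [hL0, hpsi0]
        have : δ ≤ 1 - α := by linarith
        nlinarith
      simp only [hF]
      nlinarith
    · -- pmax = 1
      have hpe : pmax = 1 := min_eq_left h
      have hpsi1 : psi p0 1 = -Real.log p0 := by simp [psi]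
      have hL1a : 0 ≤ L pmax := hLnonneg pmax hpmaxα
      have hL1b : L pmax ≤ p0 := by
        have := hLanti p0 pmax hp0pmax.le; rwa [hLp0] at this
      have hpsiL : 0 ≤ psi p0 (L pmax) :=
        psi_nonneg hp00 hp01 hL1a (by linarith)
      have hlog : -Real.log γ1 ≤ -Real.log p0 := by
        have := Real.log_le_log hp00 hp0r
        linarith
      have hm' : m ≤ -Real.log p0 := le_trans (min_le_left _ _) hlog
      have : δ * m ≤ α * psi p0 pmax := by
        rw [hpe, hpsi1]
        nlinarith
      simp only [hF] at this ⊢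
      nlinarith
  -- existence via IVT
  have hεlt : ε < F pmax := by
    have : δ * m / 2 < δ * m := by nlinarith
    linarith
  have hiv : ε ∈ Set.Ioo (F p0) (F pmax) := ⟨by rw [hFp0]; exact hε, hεlt⟩
  obtain ⟨p, hpmem, hFp⟩ := intermediate_value_Ioo hp0pmax.le hFcont.continuousOn hiv
  have hppos : 0 < p := lt_trans hp00 hpmem.1
  have hp1 : p < 1 := lt_of_lt_of_le hpmem.2 hpmax1
  have hLppos : 0 < L p := hLpos p (lt_of_lt_of_le hpmem.2 hpmaxα)
  have hLpp0 : L p < p0 := by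
    have := hLanti' p0 p hpmem.1; rwa [hLp0] at this
  have hphi : ∀ x : ℝ, phi p0 x = psi p0 x := phi_eq_psi hp00.ne' hp01.ne
  refine ⟨(p, L p), ⟨⟨hppos, hp1⟩, ⟨hLppos, lt_trans hLpp0 hp01⟩, hpmem.1, ?_, ?_⟩, ?_⟩
  · simp only [hL]; field_simp; ring
  · simp only [hphi]; exact hFp
  · rintro ⟨p', q'⟩ ⟨⟨hp'0, hp'1⟩, ⟨hq'0, hq'1⟩, hp'gt, heq1, heq2⟩
    dsimp only at hp'0 hp'1 hq'0 hq'1 hp'gt heq1 heq2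
    have hq'eq : q' = L p' := by
      simp only [hL]; field_simp; linarith
    have hp'le : p' ≤ pmax := by
      apply le_min hp'1.le
      rw [hq'eq, hL] at hq'0
      have : 0 < p0 - α * p' := by
        by_contra hcon
        push_neg at hcon
        have : (p0 - α * p') / (1 - α) ≤ 0 := div_nonpos_of_nonpos_of_nonneg hcon h1α.le
        linarith
      rw [le_div_iff₀ hα0]; nlinarith
    have hFp' : F p' = ε := by
      have heq2' : α * psi p0 p' + (1 - α) * psi p0 q' = ε := by
        simpa only [hphi] using heq2
      rw [hq'eq] at heq2'
      simpa only [hF] using heq2'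
    have hpeq : p' = p := by
      apply hFmono.injOn ⟨hp'gt.le, hp'le⟩ ⟨hpmem.1.le, hpmem.2.le⟩
      rw [hFp', hFp]
    rw [Prod.mk.injEq]
    exact ⟨hpeq, by rw [hq'eq, hpeq]⟩
end

section
/- Let J subjects have locations x_1,…,x_J ∈ D and responses X_1,…,X_J ∈ {0,1}, and let B ⊂ D with 0 < n_B < J. Then e^{S^(2)(B)} = e^{S^(1)(B)} + e^{S^(1)(D∖B)} − 1, where S^(1)(D∖B) is computed with n_{D∖B} = J − n_B and m_{D∖B} = I − m_B. -/
open Real Finset Classical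

/-- The one-sided log GLR score
`S⁽¹⁾(B) = [n_B φ(m_B/n_B) + (J−n_B) φ((I−m_B)/(J−n_B))]·1{m_B/n_B > p̂₀}`. -/
noncomputable def S1 {α : Type*} (J : ℕ) (x : Fin J → α) (X : Fin J → Bool) (B : Set α) : ℝ :=
  let nB : ℝ := (Finset.univ.filter fun i => x i ∈ B).card
  let mB : ℝ := (Finset.univ.filter fun i => x i ∈ B ∧ X i = true).card
  let I : ℝ := (Finset.univ.filter fun i => X i = true).card
  let p0 : ℝ := I / (J : ℝ)
  if p0 < mB / nB then
    nB * phi p0 (mB / nB) + ((J : ℝ) - nB) * phi p0 ((I - mB) / ((J : ℝ) - nB))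
  else 0

/-- The two-sided log GLR score
`S⁽²⁾(B) = n_B φ(m_B/n_B) + (J−n_B) φ((I−m_B)/(J−n_B))`. -/
noncomputable def S2 {α : Type*} (J : ℕ) (x : Fin J → α) (X : Fin J → Bool) (B : Set α) : ℝ :=
  let nB : ℝ := (Finset.univ.filter fun i => x i ∈ B).card
  let mB : ℝ := (Finset.univ.filter fun i => x i ∈ B ∧ X i = true).card
  let I : ℝ := (Finset.univ.filter fun i => X i = true).card
  let p0 : ℝ := I / (J : ℝ)
  nB * phi p0 (mB / nB) + ((J : ℝ) - nB) * phi p0 ((I - mB) / ((J : ℝ) - nB))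

lemma phi_self (q : ℝ) : phi q q = 0 := by
  unfold phi
  rcases eq_or_ne q 0 with h | h
  · simp [h]
  rcases eq_or_ne q 1 with h1 | h1
  · simp [h1]
  rw [div_self h, div_self (by intro hc; apply h1; linarith : (1:ℝ) - q ≠ 0), Real.log_one]
  ring

lemma key (n m I Jr : ℝ) (hn : 0 < n) (hnJ : n < Jr) :
    Real.exp (n * phi (I/Jr) (m/n) + (Jr-n) * phi (I/Jr) ((I-m)/(Jr-n)))
    = Real.exp (if I/Jr < m/n then
        n * phi (I/Jr) (m/n) + (Jr-n) * phi (I/Jr) ((I-m)/(Jr-n)) else 0)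
    + Real.exp (if I/Jr < (I-m)/(Jr-n) then
        (Jr-n) * phi (I/Jr) ((I-m)/(Jr-n)) + n * phi (I/Jr) (m/n) else 0) - 1 := by
  have hJ : 0 < Jr := hn.trans hnJ
  have hJn : 0 < Jr - n := by linarith
  rcases lt_trichotomy (m * Jr) (I * n) with h | h | h
  · have h1 : ¬ (I/Jr < m/n) := by
      rw [not_lt, div_le_div_iff₀ hn hJ]; nlinarith
    have h2 : I/Jr < (I-m)/(Jr-n) := by
      rw [div_lt_div_iff₀ hJ hJn]; nlinarith
    rw [if_neg h1, if_pos h2, Real.exp_zero]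
    ring_nf
  · have h1 : m/n = I/Jr := by rw [div_eq_div_iff hn.ne' hJ.ne']; nlinarith
    have h2 : (I-m)/(Jr-n) = I/Jr := by rw [div_eq_div_iff hJn.ne' hJ.ne']; nlinarith
    rw [h1, h2, if_neg (lt_irrefl _), if_neg (lt_irrefl _), phi_self]
    simp
  · have h1 : I/Jr < m/n := by rw [div_lt_div_iff₀ hJ hn]; nlinarith
    have h2 : ¬ (I/Jr < (I-m)/(Jr-n)) := by
      rw [not_lt, div_le_div_iff₀ hJn hJ]; nlinarith
    rw [if_pos h1, if_neg h2, Real.exp_zero]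
    ring

/-- Identity (6.7): `e^{S⁽²⁾(B)} = e^{S⁽¹⁾(B)} + e^{S⁽¹⁾(D∖B)} − 1`. -/
theorem exp_two_sided_glr_identity {α : Type*}
    (J : ℕ) (D B : Set α) (hBD : B ⊆ D)
    (x : Fin J → α) (hxD : ∀ i, x i ∈ D) (X : Fin J → Bool)
    (hnBpos : 0 < (Finset.univ.filter fun i => x i ∈ B).card)
    (hnBJ : (Finset.univ.filter fun i => x i ∈ B).card < J) :
    Real.exp (S2 J x X B) = Real.exp (S1 J x X B) + Real.exp (S1 J x X (D \ B)) - 1 := by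
  classical
  set nN := (Finset.univ.filter fun i => x i ∈ B).card with hnN
  set mN := (Finset.univ.filter fun i => x i ∈ B ∧ X i = true).card with hmN
  set IN := (Finset.univ.filter fun i => X i = true).card with hIN
  have hJcard : (Finset.univ : Finset (Fin J)).card = J := by simp
  -- complement cardinality
  have hsplit1 := Finset.card_filter_add_card_filter_not
      (s := (Finset.univ : Finset (Fin J))) (p := fun i => x i ∈ B)
  have hc1 : (Finset.univ.filter fun i => x i ∈ D \ B).card = J - nN := by
    have he : (Finset.univ.filter fun i => x i ∈ D \ B)
        = Finset.univ.filter (fun i => ¬ (x i ∈ B)) := by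
      apply Finset.filter_congr
      intro i _
      simp [hxD i]
    rw [he]
    omega
  have hsplit2 := Finset.card_filter_add_card_filter_not
      (s := Finset.univ.filter fun i => X i = true) (p := fun i => x i ∈ B)
  rw [Finset.filter_filter, Finset.filter_filter] at hsplit2
  have hmI : mN ≤ IN := by
    have he : (Finset.univ.filter fun i => X i = true ∧ x i ∈ B)
        = Finset.univ.filter (fun i => x i ∈ B ∧ X i = true) := by
      apply Finset.filter_congr; intro i _; simp [and_comm]
    rw [he] at hsplit2
    omega
  have hc2 : (Finset.univ.filter fun i => x i ∈ D \ B ∧ X i = true).card = IN - mN := by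
    have he : (Finset.univ.filter fun i => x i ∈ D \ B ∧ X i = true)
        = Finset.univ.filter (fun i => ¬ (x i ∈ B) ∧ X i = true) := by
      apply Finset.filter_congr; intro i _; simp [hxD i]
    have he2 : (Finset.univ.filter fun i => X i = true ∧ x i ∈ B)
        = Finset.univ.filter (fun i => x i ∈ B ∧ X i = true) := by
      apply Finset.filter_congr; intro i _; simp [and_comm]
    have he3 : (Finset.univ.filter fun i => X i = true ∧ ¬ (x i ∈ B))
        = Finset.univ.filter (fun i => ¬ (x i ∈ B) ∧ X i = true) := by
      apply Finset.filter_congr; intro i _; simp [and_comm]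
    rw [he2, he3] at hsplit2
    rw [he]
    omega
  have hnJ : nN ≤ J := hnBJ.le
  -- real versions
  have hfe : ∀ (p : Fin J → Prop) (i1 i2 : DecidablePred p),
      @Finset.filter _ p i1 Finset.univ = @Finset.filter _ p i2 Finset.univ := by
    intro p i1 i2; congr
  have hcr1 : ∀ (inst : DecidablePred fun i : Fin J => x i ∈ D \ B),
      (((@Finset.filter _ _ inst Finset.univ).card : ℕ) : ℝ) = (J : ℝ) - (nN : ℝ) := by
    intro inst
    rw [hfe _ inst, hc1]; push_cast [hnJ]; ring
  have hcr2 : ∀ (inst : DecidablePred fun i : Fin J => x i ∈ D \ B ∧ X i = true),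
      (((@Finset.filter _ _ inst Finset.univ).card : ℕ) : ℝ) = (IN : ℝ) - (mN : ℝ) := by
    intro inst
    rw [hfe _ inst, hc2]; push_cast [hmI]; ring
  have hn0 : (0:ℝ) < (nN : ℝ) := by exact_mod_cast hnBpos
  have hnJ' : (nN : ℝ) < (J : ℝ) := by exact_mod_cast hnBJ
  simp only [S1, S2, ← hnN, ← hmN, ← hIN]
  rw [hcr1 _, hcr2 _]
  have e1 : (J : ℝ) - ((J : ℝ) - (nN : ℝ)) = (nN : ℝ) := by ring
  have e2 : (IN : ℝ) - ((IN : ℝ) - (mN : ℝ)) = (mN : ℝ) := by ring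
  rw [e1, e2]
  exact key (nN : ℝ) (mN : ℝ) (IN : ℝ) (J : ℝ) hn0 hnJ'
end

section
/- Let 𝓑 be a finite class of subsets B ⊂ D with 0 < n_B < J for every B ∈ 𝓑, let 𝓑̃ = {D∖B : B ∈ 𝓑}, and assume B ↦ D∖B is injective on 𝓑 and 𝓑 ∩ 𝓑̃ = ∅ (so #(𝓑 ∪ 𝓑̃) = 2·#𝓑). Define U_{𝓑∪𝓑̃}^(1) = 2 log([2(#𝓑)]^{-1} Σ_{B∈𝓑∪𝓑̃} e^{S^(1)(B)}) and U_𝓑^(2) = 2 log((#𝓑)^{-1} Σ_{B∈𝓑} e^{S^(2)(B)}). Then exp(U_𝓑^(2)/2) = 2·exp(U_{𝓑∪𝓑̃}^(1)/2) − 1. -/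
open Real Finset Classical

lemma key_real (Jr n m I : ℝ) (hn0 : 0 < n) (hnJ : n < Jr) :
    Real.exp (n * phi (I/Jr) (m/n) + (Jr - n) * phi (I/Jr) ((I-m)/(Jr-n)))
      = Real.exp (if I/Jr < m/n then
            n * phi (I/Jr) (m/n) + (Jr - n) * phi (I/Jr) ((I-m)/(Jr-n)) else 0)
        + Real.exp (if I/Jr < (I-m)/(Jr-n) then
            (Jr-n) * phi (I/Jr) ((I-m)/(Jr-n)) + n * phi (I/Jr) (m/n) else 0)
        - 1 := by
  have hJ : (0:ℝ) < Jr := lt_trans hn0 hnJ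
  have hJn : (0:ℝ) < Jr - n := by linarith
  rcases lt_trichotomy (I/Jr) (m/n) with h | h | h
  · have h2 : ¬ I/Jr < (I-m)/(Jr-n) := by
      rw [not_lt, div_le_div_iff₀ hJn hJ]
      rw [div_lt_div_iff₀ hJ hn0] at h
      nlinarith
    rw [if_pos h, if_neg h2, Real.exp_zero]
    ring
  · have hm' : m * Jr = I * n := (div_eq_div_iff hn0.ne' hJ.ne').mp h.symm
    have hmn2 : (I - m) / (Jr - n) = I / Jr := by
      rw [div_eq_div_iff hJn.ne' hJ.ne']
      nlinarith
    rw [if_neg (by rw [← h]; exact lt_irrefl _),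
        if_neg (by rw [hmn2]; exact lt_irrefl _), ← h, hmn2, phi_self,
        mul_zero, mul_zero, add_zero, Real.exp_zero]
    ring
  · have h2 : I/Jr < (I-m)/(Jr-n) := by
      rw [div_lt_div_iff₀ hJ hJn]
      rw [div_lt_div_iff₀ hn0 hJ] at h
      nlinarith
    rw [if_neg (not_lt.mpr h.le), if_pos h2, Real.exp_zero]
    ring

lemma card_n_compl {α : Type*} (J : ℕ) (D : Set α) (x : Fin J → α) (hxD : ∀ i, x i ∈ D)
    (B : Set α) :
    (Finset.univ.filter fun i => x i ∈ D \ B).card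
      = J - (Finset.univ.filter fun i => x i ∈ B).card := by
  have h1 : (Finset.univ.filter fun i => x i ∈ D \ B)
      = (Finset.univ.filter fun i => ¬ (x i ∈ B)) := by
    apply Finset.filter_congr
    intro i _
    simp [Set.mem_diff, hxD i]
  rw [h1, Finset.filter_not, Finset.card_sdiff_of_subset (Finset.filter_subset _ _)]
  simp

lemma card_m_compl {α : Type*} (J : ℕ) (D : Set α) (x : Fin J → α) (hxD : ∀ i, x i ∈ D)
    (X : Fin J → Bool) (B : Set α) :
    (Finset.univ.filter fun i => x i ∈ D \ B ∧ X i = true).card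
      = (Finset.univ.filter fun i => X i = true).card
        - (Finset.univ.filter fun i => x i ∈ B ∧ X i = true).card := by
  have h1 : (Finset.univ.filter fun i => x i ∈ D \ B ∧ X i = true)
      = ((Finset.univ.filter fun i => X i = true).filter fun i => ¬ (x i ∈ B)) := by
    rw [Finset.filter_filter]
    apply Finset.filter_congr
    intro i _
    simp [Set.mem_diff, hxD i, and_comm]
  have h2 : (Finset.univ.filter fun i => x i ∈ B ∧ X i = true)
      = ((Finset.univ.filter fun i => X i = true).filter fun i => x i ∈ B) := by
    rw [Finset.filter_filter]
    apply Finset.filter_congr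
    intro i _
    simp [and_comm]
  rw [h1, h2, Finset.filter_not, Finset.card_sdiff_of_subset (Finset.filter_subset _ _)]

lemma key_s12 {α : Type*} (J : ℕ) (D : Set α) (x : Fin J → α) (hxD : ∀ i, x i ∈ D)
    (X : Fin J → Bool) (B : Set α)
    (hn0 : 0 < (Finset.univ.filter fun i => x i ∈ B).card)
    (hnJ : (Finset.univ.filter fun i => x i ∈ B).card < J) :
    Real.exp (S2 J x X B) = Real.exp (S1 J x X B) + Real.exp (S1 J x X (D \ B)) - 1 := by
  have hmI : (Finset.univ.filter fun i => x i ∈ B ∧ X i = true).card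
      ≤ (Finset.univ.filter fun i => X i = true).card := by
    apply Finset.card_le_card
    intro i hi
    simp only [Finset.mem_filter] at hi ⊢
    exact ⟨hi.1, hi.2.2⟩
  have hcn : ((Finset.univ.filter fun i => x i ∈ D \ B).card : ℝ)
      = (J : ℝ) - ((Finset.univ.filter fun i => x i ∈ B).card : ℝ) := by
    rw [card_n_compl J D x hxD B, Nat.cast_sub hnJ.le]
  have hcm : ((Finset.univ.filter fun i => x i ∈ D \ B ∧ X i = true).card : ℝ)
      = ((Finset.univ.filter fun i => X i = true).card : ℝ)
        - ((Finset.univ.filter fun i => x i ∈ B ∧ X i = true).card : ℝ) := by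
    rw [card_m_compl J D x hxD X B, Nat.cast_sub hmI]
  simp only [S1, S2]
  rw [Finset.filter_congr_decidable Finset.univ (fun i => x i ∈ D \ B) _,
      Finset.filter_congr_decidable Finset.univ (fun i => x i ∈ D \ B ∧ X i = true) _,
      hcn, hcm]
  have e1 : (J : ℝ) - ((J : ℝ) - ((Finset.univ.filter fun i => x i ∈ B).card : ℝ))
      = ((Finset.univ.filter fun i => x i ∈ B).card : ℝ) := by ring
  have e2 : ((Finset.univ.filter fun i => X i = true).card : ℝ)
      - (((Finset.univ.filter fun i => X i = true).card : ℝ)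
        - ((Finset.univ.filter fun i => x i ∈ B ∧ X i = true).card : ℝ))
      = ((Finset.univ.filter fun i => x i ∈ B ∧ X i = true).card : ℝ) := by ring
  rw [e1, e2]
  exact key_real (J : ℝ) _ _ _ (by exact_mod_cast hn0) (by exact_mod_cast hnJ)

/-- The identity relating the two-sided ALR statistic to the one-sided ALR statistic over
the enlarged class `𝓑 ∪ 𝓑̃`, `𝓑̃ = {D∖B : B ∈ 𝓑}`:
`exp(U_𝓑⁽²⁾/2) = 2·exp(U_{𝓑∪𝓑̃}⁽¹⁾/2) − 1`. -/
theorem exp_two_sided_alr_identity {α : Type*}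
    (J : ℕ) (D : Set α) (x : Fin J → α) (hxD : ∀ i, x i ∈ D) (X : Fin J → Bool)
    (𝓑 : Finset (Set α)) (hBD : ∀ B ∈ 𝓑, B ⊆ D)
    (hn : ∀ B ∈ 𝓑, 0 < (Finset.univ.filter fun i => x i ∈ B).card ∧
      (Finset.univ.filter fun i => x i ∈ B).card < J)
    (hinj : Set.InjOn (fun B => D \ B) ↑𝓑)
    (hdisj : 𝓑 ∩ 𝓑.image (fun B => D \ B) = ∅)
    (hcard : (𝓑 ∪ 𝓑.image (fun B => D \ B)).card = 2 * 𝓑.card) :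
    Real.exp ((2 * Real.log ((𝓑.card : ℝ)⁻¹ * ∑ B ∈ 𝓑, Real.exp (S2 J x X B))) / 2)
      = 2 * Real.exp ((2 * Real.log ((2 * (𝓑.card : ℝ))⁻¹ *
          ∑ B ∈ 𝓑 ∪ 𝓑.image (fun B => D \ B), Real.exp (S1 J x X B))) / 2) - 1 := by
  rcases Finset.eq_empty_or_nonempty 𝓑 with rfl | hne
  · norm_num
  have hc : (0:ℝ) < (𝓑.card : ℝ) := by exact_mod_cast Finset.card_pos.mpr hne
  -- sum over the union
  have hdisj' : Disjoint 𝓑 (𝓑.image (fun B => D \ B)) :=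
    Finset.disjoint_iff_inter_eq_empty.mpr hdisj
  have hsum : ∑ B ∈ 𝓑 ∪ 𝓑.image (fun B => D \ B), Real.exp (S1 J x X B)
      = (∑ B ∈ 𝓑, Real.exp (S2 J x X B)) + 𝓑.card := by
    rw [Finset.sum_union hdisj', Finset.sum_image (fun B hB C hC h => hinj hB hC h),
      ← Finset.sum_add_distrib]
    have : ∀ B ∈ 𝓑, Real.exp (S1 J x X B) + Real.exp (S1 J x X (D \ B))
        = Real.exp (S2 J x X B) + 1 := by
      intro B hB
      have := key_s12 J D x hxD X B (hn B hB).1 (hn B hB).2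
      linarith
    rw [Finset.sum_congr rfl this, Finset.sum_add_distrib]
    simp
  have hS2pos : (0:ℝ) < ∑ B ∈ 𝓑, Real.exp (S2 J x X B) :=
    Finset.sum_pos (fun B _ => Real.exp_pos _) hne
  have hL : (0:ℝ) < (𝓑.card : ℝ)⁻¹ * ∑ B ∈ 𝓑, Real.exp (S2 J x X B) :=
    mul_pos (inv_pos.mpr hc) hS2pos
  have hR : (0:ℝ) < (2 * (𝓑.card : ℝ))⁻¹ *
      ∑ B ∈ 𝓑 ∪ 𝓑.image (fun B => D \ B), Real.exp (S1 J x X B) := by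
    rw [hsum]
    positivity
  have hlog : ∀ y : ℝ, 2 * Real.log y / 2 = Real.log y := fun y => by ring
  rw [hlog, hlog, Real.exp_log hL, Real.exp_log hR, hsum]
  field_simp
  ring
end

section
/- There exist constants c_0 > 0 and K > 0 such that the following holds. Let c ≥ c_0, let 𝓑 be a finite nonempty index set with log(#𝓑) ≤ c^{1/3}/2, let (z_B)_{B∈𝓑} be real numbers, and define ℓ(B) = c^{1/2} z_B − c/2 and U = 2 log((#𝓑)^{-1} Σ_{B∈𝓑} e^{max(z_B,0)²/2}). If c ≤ U ≤ c + c^{1/3}, then U/2 − K c^{-1/3} ≤ log((#𝓑)^{-1} Σ_{B∈𝓑} e^{ℓ(B)}) ≤ U/2. -/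
open Filter Real

lemma sandwich_aux_point (s w : ℝ) (hs : 0 ≤ s) :
    s * w - s ^ 2 / 2 ≤ max w 0 ^ 2 / 2 := by
  rcases le_or_gt w 0 with h | h
  · rw [max_eq_right h]
    have : s * w ≤ 0 := mul_nonpos_of_nonneg_of_nonpos hs h
    nlinarith [sq_nonneg s]
  · rw [max_eq_left h.le]
    nlinarith [sq_nonneg (w - s)]

lemma sandwich_aux_cube (t : ℝ) (h : 2 ≤ t) : 2 * t < t ^ 3 := by
  have h4 : 4 ≤ t ^ 2 := by nlinarith
  nlinarith [mul_le_mul_of_nonneg_left h4 (show (0:ℝ) ≤ t by linarith)]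

lemma sandwich_aux_key (t m s : ℝ) (ht2 : 2 ≤ t) (hm0 : 0 ≤ m) (hs0 : 0 ≤ s)
    (hss : s ^ 2 = t ^ 3) (hlb : t ^ 3 - 2 * t ≤ m ^ 2) (hub : m ^ 2 ≤ t ^ 3 + 2 * t) :
    m ^ 2 / 2 - 2 / t ≤ s * m - s ^ 2 / 2 := by
  have ht0 : (0 : ℝ) < t := by linarith
  have hkey : (m - s) ^ 2 ≤ 4 / t := by
    have h2 : (m ^ 2 - s ^ 2) ^ 2 ≤ 4 * t ^ 2 := by nlinarith
    have h3 : t ^ 3 ≤ (m + s) ^ 2 := by nlinarith [mul_nonneg hm0 hs0, sq_nonneg m]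
    have h4 : (m - s) ^ 2 * t ^ 3 ≤ 4 * t ^ 2 := by
      calc (m - s) ^ 2 * t ^ 3 ≤ (m - s) ^ 2 * (m + s) ^ 2 :=
            mul_le_mul_of_nonneg_left h3 (sq_nonneg _)
        _ = (m ^ 2 - s ^ 2) ^ 2 := by ring
        _ ≤ 4 * t ^ 2 := h2
    have ht2pos : (0 : ℝ) < t ^ 2 := by positivity
    rw [show (m - s) ^ 2 * t ^ 3 = ((m - s) ^ 2 * t) * t ^ 2 by ring,
      show (4 : ℝ) * t ^ 2 = 4 * t ^ 2 by ring] at h4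
    have h5 : (m - s) ^ 2 * t ≤ 4 := le_of_mul_le_mul_right h4 ht2pos
    rw [le_div_iff₀ ht0]
    exact h5
  have hx : (m - s) ^ 2 = m ^ 2 - 2 * (s * m) + s ^ 2 := by ring
  have h2t : 4 / t = 2 * (2 / t) := by ring
  linarith

lemma sandwich_aux_one_sub (t : ℝ) (ht0 : 0 < t) :
    Real.exp (-(2 / t)) ≤ 1 - Real.exp (-t) := by
  have e1 : Real.exp (-t) ≤ 1 / (1 + t) := by
    rw [Real.exp_neg, ← one_div]
    apply one_div_le_one_div_of_le (by linarith)
    linarith [Real.add_one_le_exp t]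
  have e2 : Real.exp (-(2 / t)) ≤ 1 / (1 + 2 / t) := by
    rw [Real.exp_neg, ← one_div]
    apply one_div_le_one_div_of_le (by positivity)
    linarith [Real.add_one_le_exp (2 / t)]
  have h1 : (1 : ℝ) + 2 / t = (t + 2) / t := by field_simp
  have h2 : (1 : ℝ) / ((t + 2) / t) = t / (t + 2) := one_div_div _ _
  have h3 : t / (t + 2) ≤ t / (t + 1) := by
    rw [div_le_div_iff₀ (by linarith) (by linarith)]
    nlinarith
  have h4 : t / (t + 1) = 1 - 1 / (1 + t) := by
    rw [eq_sub_iff_add_eq, show (1:ℝ) + t = t + 1 by ring, ← add_div,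
      div_self (by linarith : t + 1 ≠ 0)]
  rw [h1, h2] at e2
  linarith [e2, e1, h3, h4.le, h4.ge]

set_option maxHeartbeats 1000000 in
/-- The deterministic sandwich (6.11) used in the proof of Theorem 2: there are
constants `c₀, K > 0` such that for `c ≥ c₀`, any finite nonempty index set `𝓑` with
`log(#𝓑) ≤ c^{1/3}/2` and any reals `(z_B)`, setting `ℓ(B) = √c z_B − c/2` and
`U = 2 log((#𝓑)⁻¹ ∑ e^{max(z_B,0)²/2})`, if `c ≤ U ≤ c + c^{1/3}` then
`U/2 − K c^{−1/3} ≤ log((#𝓑)⁻¹ ∑ e^{ℓ(B)}) ≤ U/2`. -/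
theorem average_likelihood_sandwich :
    ∃ c₀ K : ℝ, 0 < c₀ ∧ 0 < K ∧
      ∀ c : ℝ, c₀ ≤ c →
        ∀ (ι : Type) (𝓑 : Finset ι), 𝓑.Nonempty →
          Real.log (𝓑.card : ℝ) ≤ c ^ ((1 : ℝ) / 3) / 2 →
          ∀ z : ι → ℝ,
            c ≤ 2 * Real.log ((𝓑.card : ℝ)⁻¹ * ∑ B ∈ 𝓑, Real.exp (max (z B) 0 ^ 2 / 2)) →
            2 * Real.log ((𝓑.card : ℝ)⁻¹ * ∑ B ∈ 𝓑, Real.exp (max (z B) 0 ^ 2 / 2))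
              ≤ c + c ^ ((1 : ℝ) / 3) →
            (2 * Real.log ((𝓑.card : ℝ)⁻¹ * ∑ B ∈ 𝓑, Real.exp (max (z B) 0 ^ 2 / 2))) / 2
                - K * c ^ (-(1 : ℝ) / 3)
              ≤ Real.log ((𝓑.card : ℝ)⁻¹ * ∑ B ∈ 𝓑, Real.exp (Real.sqrt c * z B - c / 2)) ∧
            Real.log ((𝓑.card : ℝ)⁻¹ * ∑ B ∈ 𝓑, Real.exp (Real.sqrt c * z B - c / 2))
              ≤ (2 * Real.log ((𝓑.card : ℝ)⁻¹ * ∑ B ∈ 𝓑, Real.exp (max (z B) 0 ^ 2 / 2))) / 2 := by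
  refine ⟨8, 4, by norm_num, by norm_num, ?_⟩
  intro c hc ι 𝓑 hne hlogcard z hU1 hU2
  have hc0 : (0:ℝ) < c := by linarith
  set t : ℝ := c ^ ((1:ℝ)/3) with htdef
  have ht0 : 0 < t := Real.rpow_pos_of_pos hc0 _
  have ht3 : t ^ 3 = c := by
    rw [htdef, ← Real.rpow_natCast (c ^ ((1:ℝ)/3)) 3, ← Real.rpow_mul hc0.le]
    norm_num
  have ht2 : 2 ≤ t := by
    have h8 : (8:ℝ) ^ ((1:ℝ)/3) = 2 := by
      rw [show (8:ℝ) = 2 ^ (3:ℕ) by norm_num, ← Real.rpow_natCast 2 3,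
        ← Real.rpow_mul (by norm_num)]
      norm_num
    calc (2:ℝ) = (8:ℝ) ^ ((1:ℝ)/3) := h8.symm
      _ ≤ t := Real.rpow_le_rpow (by norm_num) hc (by norm_num)
  have hcinv : c ^ (-(1:ℝ)/3) = t⁻¹ := by
    rw [neg_div, Real.rpow_neg hc0.le, htdef]
  set N : ℝ := (𝓑.card : ℝ) with hNdef
  have hN0 : 0 < N := by
    rw [hNdef]
    exact_mod_cast Finset.card_pos.mpr hne
  set A : ℝ := N⁻¹ * ∑ B ∈ 𝓑, Real.exp (max (z B) 0 ^ 2 / 2) with hAdef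
  have hsumpos : 0 < ∑ B ∈ 𝓑, Real.exp (max (z B) 0 ^ 2 / 2) :=
    Finset.sum_pos (fun B _ => Real.exp_pos _) hne
  have hApos : 0 < A := mul_pos (inv_pos.mpr hN0) hsumpos
  have hsumA : ∑ B ∈ 𝓑, Real.exp (max (z B) 0 ^ 2 / 2) = N * A := by
    rw [hAdef]; field_simp
  have hlogA1 : c / 2 ≤ Real.log A := by linarith
  have hlogA2 : Real.log A ≤ (c + t) / 2 := by linarith
  have hA_lb : Real.exp (c / 2) ≤ A := by
    rw [← Real.exp_log hApos]; exact Real.exp_le_exp.mpr hlogA1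
  have hA_ub : A ≤ Real.exp ((c + t) / 2) := by
    rw [← Real.exp_log hApos]; exact Real.exp_le_exp.mpr hlogA2
  have hs0 : 0 ≤ Real.sqrt c := Real.sqrt_nonneg c
  have hs2 : Real.sqrt c ^ 2 = c := Real.sq_sqrt hc0.le
  clear_value t N A
  -- Upper bound: pointwise exp inequality
  have hpoint : ∀ B ∈ 𝓑, Real.exp (Real.sqrt c * z B - c / 2)
      ≤ Real.exp (max (z B) 0 ^ 2 / 2) := by
    intro B _
    apply Real.exp_le_exp.mpr
    have := sandwich_aux_point (Real.sqrt c) (z B) hs0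
    rw [hs2] at this
    linarith
  have hℓsumpos : 0 < ∑ B ∈ 𝓑, Real.exp (Real.sqrt c * z B - c / 2) :=
    Finset.sum_pos (fun B _ => Real.exp_pos _) hne
  have hupper : Real.log (N⁻¹ * ∑ B ∈ 𝓑, Real.exp (Real.sqrt c * z B - c / 2))
      ≤ Real.log A := by
    apply Real.log_le_log (mul_pos (inv_pos.mpr hN0) hℓsumpos)
    rw [hAdef]
    exact mul_le_mul_of_nonneg_left (Finset.sum_le_sum hpoint) (by positivity)
  -- Lower bound
  have hN_ub : N ≤ Real.exp (t / 2) := by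
    rw [← Real.exp_log hN0]; exact Real.exp_le_exp.mpr hlogcard
  have hm_ub : ∀ B ∈ 𝓑, max (z B) 0 ^ 2 ≤ c + 2 * t := by
    intro B hB
    have h1 : Real.exp (max (z B) 0 ^ 2 / 2) ≤ N * A := by
      rw [← hsumA]
      exact Finset.single_le_sum (f := fun B => Real.exp (max (z B) 0 ^ 2 / 2))
        (fun B _ => (Real.exp_pos _).le) hB
    have h2 : N * A ≤ Real.exp (t / 2) * Real.exp ((c + t) / 2) :=
      mul_le_mul hN_ub hA_ub hApos.le (Real.exp_pos _).le
    rw [← Real.exp_add] at h2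
    have := Real.exp_le_exp.mp (h1.trans h2)
    linarith
  set S : Finset ι := 𝓑.filter (fun B => c - 2 * t ≤ max (z B) 0 ^ 2) with hSdef
  -- complement sum small
  have hcompl : ∑ B ∈ 𝓑.filter (fun B => ¬ (c - 2 * t ≤ max (z B) 0 ^ 2)),
      Real.exp (max (z B) 0 ^ 2 / 2) ≤ N * A * Real.exp (-t) := by
    have hb : ∀ B ∈ 𝓑.filter (fun B => ¬ (c - 2 * t ≤ max (z B) 0 ^ 2)),
        Real.exp (max (z B) 0 ^ 2 / 2) ≤ Real.exp ((c - 2 * t) / 2) := by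
      intro B hB
      rw [Finset.mem_filter] at hB
      exact Real.exp_le_exp.mpr (by push_neg at hB; linarith [hB.2])
    calc ∑ B ∈ 𝓑.filter (fun B => ¬ (c - 2 * t ≤ max (z B) 0 ^ 2)),
        Real.exp (max (z B) 0 ^ 2 / 2)
        ≤ ∑ _B ∈ 𝓑.filter (fun B => ¬ (c - 2 * t ≤ max (z B) 0 ^ 2)),
            Real.exp ((c - 2 * t) / 2) := Finset.sum_le_sum hb
      _ = (𝓑.filter (fun B => ¬ (c - 2 * t ≤ max (z B) 0 ^ 2))).card
            * Real.exp ((c - 2 * t) / 2) := by rw [Finset.sum_const, nsmul_eq_mul]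
      _ ≤ N * Real.exp ((c - 2 * t) / 2) := by
          apply mul_le_mul_of_nonneg_right _ (Real.exp_pos _).le
          rw [hNdef]
          exact_mod_cast Nat.cast_le.mpr (Finset.card_filter_le _ _)
      _ = N * Real.exp (c / 2) * Real.exp (-t) := by
          rw [mul_assoc, ← Real.exp_add]; ring_nf
      _ ≤ N * A * Real.exp (-t) := by
          exact mul_le_mul_of_nonneg_right
            (mul_le_mul_of_nonneg_left hA_lb hN0.le) (Real.exp_pos _).le
  have hSsum : N * A * (1 - Real.exp (-t)) ≤ ∑ B ∈ S, Real.exp (max (z B) 0 ^ 2 / 2) := by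
    have hsplit := Finset.sum_filter_add_sum_filter_not 𝓑
      (fun B => c - 2 * t ≤ max (z B) 0 ^ 2) (fun B => Real.exp (max (z B) 0 ^ 2 / 2))
    rw [hsumA] at hsplit
    rw [hSdef]
    have hexpand : N * A * (1 - Real.exp (-t)) = N * A - N * A * Real.exp (-t) := by ring
    linarith [hcompl, hsplit, hexpand.le, hexpand.ge]
  -- Taylor bound on S
  have htaylor : ∀ B ∈ S, Real.exp (max (z B) 0 ^ 2 / 2) * Real.exp (-(2 / t))
      ≤ Real.exp (Real.sqrt c * z B - c / 2) := by
    intro B hB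
    rw [hSdef, Finset.mem_filter] at hB
    obtain ⟨hB1, hB2⟩ := hB
    set m : ℝ := max (z B) 0 with hmdef
    have hm0 : 0 ≤ m := le_max_right _ _
    have hmsq_lb : c - 2 * t ≤ m ^ 2 := hB2
    have hmsq_ub : m ^ 2 ≤ c + 2 * t := hm_ub B hB1
    have hmpos : 0 < m := by
      rcases hm0.lt_or_eq with h | h
      · exact h
      · exfalso
        rw [← h] at hmsq_lb
        have := sandwich_aux_cube t ht2
        rw [ht3] at this
        nlinarith [hmsq_lb]
    have hz0 : 0 ≤ z B := by
      by_contra h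
      push_neg at h
      rw [hmdef, max_eq_right h.le] at hmpos
      exact lt_irrefl 0 hmpos
    have hzm : z B = m := by rw [hmdef, max_eq_left hz0]
    have hss2 : Real.sqrt c ^ 2 = t ^ 3 := by rw [hs2, ht3]
    have hkey := sandwich_aux_key t m (Real.sqrt c) ht2 hm0 hs0 hss2
      (by rw [ht3]; exact hmsq_lb) (by rw [ht3]; exact hmsq_ub)
    rw [← Real.exp_add]
    apply Real.exp_le_exp.mpr
    rw [hzm]
    rw [hs2] at hkey
    linarith
  -- combine
  have hℓ_lb : N * A * (1 - Real.exp (-t)) * Real.exp (-(2 / t))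
      ≤ ∑ B ∈ 𝓑, Real.exp (Real.sqrt c * z B - c / 2) := by
    calc N * A * (1 - Real.exp (-t)) * Real.exp (-(2 / t))
        ≤ (∑ B ∈ S, Real.exp (max (z B) 0 ^ 2 / 2)) * Real.exp (-(2 / t)) :=
          mul_le_mul_of_nonneg_right hSsum (Real.exp_pos _).le
      _ = ∑ B ∈ S, Real.exp (max (z B) 0 ^ 2 / 2) * Real.exp (-(2 / t)) := by
          rw [Finset.sum_mul]
      _ ≤ ∑ B ∈ S, Real.exp (Real.sqrt c * z B - c / 2) := Finset.sum_le_sum htaylor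
      _ ≤ ∑ B ∈ 𝓑, Real.exp (Real.sqrt c * z B - c / 2) := by
          rw [hSdef]
          exact Finset.sum_le_sum_of_subset_of_nonneg (Finset.filter_subset _ _)
            (fun B _ _ => (Real.exp_pos _).le)
  have hone_sub := sandwich_aux_one_sub t ht0
  have hlower_raw : A * Real.exp (-(2 / t)) * Real.exp (-(2 / t))
      ≤ N⁻¹ * ∑ B ∈ 𝓑, Real.exp (Real.sqrt c * z B - c / 2) := by
    have h1 : A * Real.exp (-(2 / t)) * Real.exp (-(2 / t))
        ≤ A * (1 - Real.exp (-t)) * Real.exp (-(2 / t)) := by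
      apply mul_le_mul_of_nonneg_right _ (Real.exp_pos _).le
      exact mul_le_mul_of_nonneg_left hone_sub hApos.le
    have h2 : A * (1 - Real.exp (-t)) * Real.exp (-(2 / t))
        ≤ N⁻¹ * ∑ B ∈ 𝓑, Real.exp (Real.sqrt c * z B - c / 2) := by
      rw [← mul_le_mul_iff_right₀ hN0]
      calc N * (A * (1 - Real.exp (-t)) * Real.exp (-(2 / t)))
          = N * A * (1 - Real.exp (-t)) * Real.exp (-(2 / t)) := by ring
        _ ≤ ∑ B ∈ 𝓑, Real.exp (Real.sqrt c * z B - c / 2) := hℓ_lb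
        _ = N * (N⁻¹ * ∑ B ∈ 𝓑, Real.exp (Real.sqrt c * z B - c / 2)) := by
            rw [← mul_assoc, mul_inv_cancel₀ hN0.ne', one_mul]
    linarith
  have hlower : Real.log A - 4 / t
      ≤ Real.log (N⁻¹ * ∑ B ∈ 𝓑, Real.exp (Real.sqrt c * z B - c / 2)) := by
    have hLpos : 0 < A * Real.exp (-(2 / t)) := by positivity
    have hstep := Real.log_le_log (by positivity) hlower_raw
    rw [Real.log_mul (by positivity) (Real.exp_pos _).ne',
      Real.log_mul hApos.ne' (Real.exp_pos _).ne', Real.log_exp] at hstep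
    have : -(2 / t) + -(2 / t) = -(4 / t) := by ring
    linarith
  constructor
  · rw [hcinv]
    have e1 : (2 * Real.log A) / 2 = Real.log A := by ring
    have e2 : (4:ℝ) * t⁻¹ = 4 / t := by ring
    rw [e1, e2]
    exact hlower
  · have e1 : (2 * Real.log A) / 2 = Real.log A := by ring
    rw [e1]
    exact hupper
end
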